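/- arXiv:1207.5748 — 3 statements merged into one kernel-verified Lean document; each statement's English description precedes it below -/
import Mathlib

section
/- Let p, q be positive integers and λ = (λ_1 ≥ λ_2 ≥ … ≥ λ_p ≥ 0) a partition of 2pq all of whose parts are even. Let N be at least the number of nonzero parts of λ and let H ⊂ ℂ[x_1,…,x_N] be the space of homogeneous polynomials of degree 2q. Then there exists a nonzero vector v in the p-fold tensor power H^{⊗p} such that: (i) v is invariant under the action of the symmetric group S_p permuting the tensor factors; (ii) v is fixed by the map of H^{⊗p} induced on each factor by every algebra substitution of the form x_j ↦ x_j + c·x_i with i < j and c ∈ ℂ (and more generally by substitution along any upper triangular matrix with unit diagonal); (iii) for every tuple t = (t_1,…,t_N) of nonzero complex numbers, the map induced on each factor by the substitution x_i ↦ t_i·x_i sends v to (∏_{i=1}^N t_i^{λ_i})·v. (Equivalently, the Schur module S_λ W occurs with positive multiplicity in the plethysm S^p(S^{2q}W) — Weintraub's conjecture.) -/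
open scoped TensorProduct

set_option synthInstance.maxHeartbeats 1000000
set_option maxHeartbeats 1000000

noncomputable section

namespace WtrAux

open MvPolynomial PiTensorProduct Matrix


variable {p N : ℕ}

/-- slice of an exponent vector at slot `j` -/
def slice (m : Fin p × Fin N →₀ ℕ) (j : Fin p) : Fin N →₀ ℕ :=
  Finsupp.equivFunOnFinite.symm fun i => m (j, i)

@[simp] lemma slice_apply (m : Fin p × Fin N →₀ ℕ) (j : Fin p) (i : Fin N) :
    slice m j i = m (j, i) := rfl

/-- the algebra map `ℂ[x_{ji}] → (ℂ[x_i])^{⊗ p}` -/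
def Psi (p N : ℕ) : MvPolynomial (Fin p × Fin N) ℂ →ₐ[ℂ] ⨂[ℂ]^p (MvPolynomial (Fin N) ℂ) :=
  aeval fun ji =>
    PiTensorProduct.singleAlgHom (R := ℂ) (A := fun _ : Fin p => MvPolynomial (Fin N) ℂ)
      ji.1 (X ji.2)

lemma prod_singleAlgHom (g : Fin p → MvPolynomial (Fin N) ℂ) :
    (∏ j : Fin p, PiTensorProduct.singleAlgHom (R := ℂ)
        (A := fun _ : Fin p => MvPolynomial (Fin N) ℂ) j (g j)) = tprod ℂ g := by
  simp only [PiTensorProduct.singleAlgHom_apply]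
  rw [← PiTensorProduct.tprod_prod]
  congr 1
  exact Finset.univ_prod_mulSingle g

lemma monomial_one_eq_prod (s : Fin N →₀ ℕ) :
    (monomial s (1 : ℂ)) = ∏ i : Fin N, (X i : MvPolynomial (Fin N) ℂ) ^ s i := by
  rw [monomial_eq, C_1, one_mul]
  rw [Finsupp.prod_fintype]
  intro i; rw [pow_zero]

/-- `Psi` on monomials, twisted by an algebra endomorphism `f` applied in each slot. -/
lemma psiF_monomial (f : MvPolynomial (Fin N) ℂ →ₐ[ℂ] MvPolynomial (Fin N) ℂ)
    (m : Fin p × Fin N →₀ ℕ) (c : ℂ) :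
    (aeval fun ji : Fin p × Fin N =>
        PiTensorProduct.singleAlgHom (R := ℂ) (A := fun _ : Fin p => MvPolynomial (Fin N) ℂ)
          ji.1 (f (X ji.2)))
      (monomial m c)
    = c • tprod ℂ (fun j => f (monomial (slice m j) 1)) := by
  rw [aeval_monomial]
  rw [Finsupp.prod_fintype _ _ (fun ji => pow_zero _)]
  have h1 : ∀ ji : Fin p × Fin N,
      (PiTensorProduct.singleAlgHom (R := ℂ)
        (A := fun _ : Fin p => MvPolynomial (Fin N) ℂ) ji.1 (f (X ji.2))) ^ m ji
      = PiTensorProduct.singleAlgHom (R := ℂ)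
          (A := fun _ : Fin p => MvPolynomial (Fin N) ℂ) ji.1 (f ((X ji.2) ^ m ji)) := by
    intro ji; rw [map_pow, map_pow]
  simp only [h1]
  rw [Fintype.prod_prod_type]
  have h2 : ∀ j : Fin p, (∏ i : Fin N,
      PiTensorProduct.singleAlgHom (R := ℂ)
        (A := fun _ : Fin p => MvPolynomial (Fin N) ℂ) j (f ((X i) ^ m (j, i))))
      = PiTensorProduct.singleAlgHom (R := ℂ)
          (A := fun _ : Fin p => MvPolynomial (Fin N) ℂ) j (f (monomial (slice m j) 1)) := by
    intro j
    rw [← map_prod, ← map_prod]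
    congr 1
    rw [monomial_one_eq_prod]
    simp only [slice_apply]
  simp only [h2]
  rw [prod_singleAlgHom]
  exact (Algebra.smul_def c _).symm

lemma psi_monomial (m : Fin p × Fin N →₀ ℕ) (c : ℂ) :
    Psi p N (monomial m c) = c • tprod ℂ (fun j => monomial (slice m j) (1 : ℂ)) := by
  simpa [Psi] using psiF_monomial (AlgHom.id ℂ _) m c

def PhiMl (p N : ℕ) : MultilinearMap ℂ (fun _ : Fin p => MvPolynomial (Fin N) ℂ)
    (MvPolynomial (Fin p × Fin N) ℂ) :=
  (MultilinearMap.mkPiAlgebra ℂ (Fin p) (MvPolynomial (Fin p × Fin N) ℂ)).compLinearMap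
    (fun j => (rename (Prod.mk j) : MvPolynomial (Fin N) ℂ →ₐ[ℂ]
      MvPolynomial (Fin p × Fin N) ℂ).toLinearMap)

def Phi (p N : ℕ) : (⨂[ℂ]^p (MvPolynomial (Fin N) ℂ)) →ₐ[ℂ] MvPolynomial (Fin p × Fin N) ℂ :=
  PiTensorProduct.liftAlgHom (PhiMl p N)
    (by simp [PhiMl])
    (by intro x y; simp [PhiMl, Finset.prod_mul_distrib])

lemma Phi_tprod (g : Fin p → MvPolynomial (Fin N) ℂ) :
    Phi p N (tprod ℂ g) = ∏ j : Fin p, rename (Prod.mk j) (g j) := by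
  simp [Phi, PhiMl]

lemma Phi_comp_Psi : (Phi p N).comp (Psi p N) = AlgHom.id ℂ _ := by
  apply MvPolynomial.algHom_ext
  intro ji
  simp only [AlgHom.comp_apply, AlgHom.id_apply, Psi, aeval_X]
  rw [PiTensorProduct.singleAlgHom_apply, Phi_tprod]
  rw [Fintype.prod_eq_single ji.1 (fun j hj => by
    rw [MonoidHom.mulSingle_apply, Pi.mulSingle_eq_of_ne hj]; simp)]
  rw [MonoidHom.mulSingle_apply, Pi.mulSingle_eq_same, rename_X]

lemma psi_rename (j : Fin p) :
    (Psi p N).comp (rename (Prod.mk j)) =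
      PiTensorProduct.singleAlgHom (R := ℂ) (A := fun _ : Fin p => MvPolynomial (Fin N) ℂ) j := by
  apply MvPolynomial.algHom_ext
  intro i
  simp [Psi]

lemma map_psi (f : MvPolynomial (Fin N) ℂ →ₐ[ℂ] MvPolynomial (Fin N) ℂ)
    (P : MvPolynomial (Fin p × Fin N) ℂ) :
    PiTensorProduct.map (fun _ : Fin p => f.toLinearMap) (Psi p N P)
      = Psi p N ((aeval fun ji : Fin p × Fin N => rename (Prod.mk ji.1) (f (X ji.2))) P) := by
  have hcomp : (Psi p N).comp (aeval fun ji : Fin p × Fin N => rename (Prod.mk ji.1) (f (X ji.2)))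
      = aeval fun ji : Fin p × Fin N =>
          PiTensorProduct.singleAlgHom (R := ℂ) (A := fun _ : Fin p => MvPolynomial (Fin N) ℂ)
            ji.1 (f (X ji.2)) := by
    rw [comp_aeval]
    congr 1
    funext ji
    exact DFunLike.congr_fun (psi_rename ji.1) (f (X ji.2))
  induction P using MvPolynomial.induction_on' with
  | monomial m c =>
    rw [psi_monomial, _root_.map_smul, PiTensorProduct.map_tprod]
    rw [← AlgHom.comp_apply, hcomp, psiF_monomial]
    rfl
  | add P Q hP hQ => simp only [map_add, hP, hQ]

lemma reindex_psi (τ : Equiv.Perm (Fin p)) (P : MvPolynomial (Fin p × Fin N) ℂ) :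
    PiTensorProduct.reindex ℂ (fun _ : Fin p => MvPolynomial (Fin N) ℂ) τ (Psi p N P)
      = Psi p N (rename (Equiv.prodCongr τ (Equiv.refl (Fin N))) P) := by
  induction P using MvPolynomial.induction_on' with
  | monomial m c =>
    rw [psi_monomial, _root_.map_smul, PiTensorProduct.reindex_tprod, rename_monomial, psi_monomial]
    congr 1
    apply congrArg
    funext j
    have h2 : slice (Finsupp.mapDomain (⇑(Equiv.prodCongr τ (Equiv.refl (Fin N)))) m) j
        = slice m (τ.symm j) := by
      ext i
      rw [slice_apply, slice_apply, Finsupp.mapDomain_equiv_apply]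
      rfl
    rw [h2]
  | add P Q hP hQ => simp only [map_add, hP, hQ]

/-! ### the matrices of variables -/

def mat (p N : ℕ) (hp : 0 < p) (h o : ℕ) (hh : h ≤ N) (σ : Equiv.Perm (Fin p)) :
    Matrix (Fin h) (Fin h) (MvPolynomial (Fin p × Fin N) ℂ) :=
  Matrix.of fun k k' =>
    X (σ ⟨(o + (k' : ℕ)) % p, Nat.mod_lt _ hp⟩, Fin.castLE hh k)

section MatLemmas
variable (hp : 0 < p) (h o : ℕ) (hh : h ≤ N) (σ τ : Equiv.Perm (Fin p))

lemma mat_det_rename :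
    rename (Equiv.prodCongr τ (Equiv.refl (Fin N))) (mat p N hp h o hh σ).det
      = (mat p N hp h o hh (σ.trans τ)).det := by
  rw [AlgHom.map_det]
  congr 1
  funext k k'
  simp [mat]

lemma mat_det_unipotent (g : Matrix (Fin N) (Fin N) ℂ)
    (hg0 : ∀ i j : Fin N, j < i → g i j = 0) (hg1 : ∀ i, g i i = 1) :
    (aeval fun ji : Fin p × Fin N =>
      ∑ i : Fin N, g i ji.2 • X (ji.1, i) : MvPolynomial (Fin p × Fin N) ℂ →ₐ[ℂ]
        MvPolynomial (Fin p × Fin N) ℂ) (mat p N hp h o hh σ).det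
      = (mat p N hp h o hh σ).det := by
  rw [AlgHom.map_det]
  have hmap : (mat p N hp h o hh σ).map
      (aeval fun ji : Fin p × Fin N => ∑ i : Fin N, g i ji.2 • X (ji.1, i))
      = (Matrix.of fun k l : Fin h =>
          algebraMap ℂ _ (g (Fin.castLE hh l) (Fin.castLE hh k))) * mat p N hp h o hh σ := by
    funext k k'
    simp only [Matrix.map_apply, Matrix.mul_apply, mat, Matrix.of_apply, aeval_X]
    have hz : ∀ i ∈ (Finset.univ : Finset (Fin N)),
        i ∉ Finset.univ.map (Fin.castLEEmb hh) →
        g i (Fin.castLE hh k) • X (σ ⟨(o + (k' : ℕ)) % p, Nat.mod_lt _ hp⟩, i)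
          = (0 : MvPolynomial (Fin p × Fin N) ℂ) := by
      intro i _ hi
      have hlt : (Fin.castLE hh k : ℕ) < (i : ℕ) := by
        have hnot : ¬ (i : ℕ) < h := by
          intro hih
          exact hi (Finset.mem_map.2 ⟨⟨(i : ℕ), hih⟩, Finset.mem_univ _, by
            simp [Fin.castLEEmb, Fin.castLE, Fin.ext_iff]⟩)
        have hk : (k : ℕ) < h := k.isLt
        simpa using lt_of_lt_of_le hk (le_of_not_gt hnot)
      rw [hg0 _ _ hlt, zero_smul]
    rw [← Finset.sum_subset (Finset.subset_univ _) hz, Finset.sum_map]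
    apply Finset.sum_congr rfl
    intro i _
    rw [Algebra.smul_def]
    rfl
  rw [AlgHom.mapMatrix_apply] at *
  rw [hmap, det_mul]
  have hdet1 : (Matrix.of fun k l : Fin h =>
      algebraMap ℂ (MvPolynomial (Fin p × Fin N) ℂ) (g (Fin.castLE hh l) (Fin.castLE hh k))).det
      = 1 := by
    rw [Matrix.det_of_lowerTriangular]
    · rw [Finset.prod_eq_one]
      intro k _
      simp [hg1]
    · intro k l hkl
      simp only [Matrix.of_apply]
      rw [hg0, map_zero]
      exact hkl
  rw [hdet1, one_mul]

lemma mat_det_torus (t : Fin N → ℂ) :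
    (aeval fun ji : Fin p × Fin N => t ji.2 • X ji :
        MvPolynomial (Fin p × Fin N) ℂ →ₐ[ℂ] MvPolynomial (Fin p × Fin N) ℂ)
      (mat p N hp h o hh σ).det
    = algebraMap ℂ _ (∏ k : Fin h, t (Fin.castLE hh k)) * (mat p N hp h o hh σ).det := by
  rw [AlgHom.map_det, AlgHom.mapMatrix_apply]
  have hmap : (mat p N hp h o hh σ).map
      (aeval fun ji : Fin p × Fin N => t ji.2 • X ji)
      = Matrix.diagonal (fun k : Fin h => algebraMap ℂ (MvPolynomial (Fin p × Fin N) ℂ)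
          (t (Fin.castLE hh k))) * mat p N hp h o hh σ := by
    funext k k'
    simp only [Matrix.map_apply, mat, Matrix.of_apply, aeval_X, Matrix.diagonal_mul]
    rw [Algebra.smul_def]
  rw [hmap, det_mul, det_diagonal, ← map_prod]

lemma mat_det_weight :
    (mat p N hp h o hh σ).det ∈ weightedHomogeneousSubmodule ℂ
      (fun ji : Fin p × Fin N => Finsupp.single ji.1 1)
      (∑ k : Fin h, Finsupp.single (σ ⟨(o + (k : ℕ)) % p, Nat.mod_lt _ hp⟩) (1 : ℕ)) := by
  rw [det_apply]
  apply Submodule.sum_mem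
  intro π _
  rw [Units.smul_def, ← Int.cast_smul_eq_zsmul ℂ]
  apply Submodule.smul_mem
  rw [mem_weightedHomogeneousSubmodule]
  apply IsWeightedHomogeneous.prod
  intro k _
  simpa [mat] using isWeightedHomogeneous_X ℂ
    (fun ji : Fin p × Fin N => Finsupp.single ji.1 1)
    (σ ⟨(o + (k : ℕ)) % p, Nat.mod_lt _ hp⟩, Fin.castLE hh (π k))

lemma mat_det_eval (hhp : h ≤ p) :
    ∃ z : ℤ, z ≠ 0 ∧
      eval (fun ji : Fin p × Fin N => ((ji.1 : ℕ) + 1 : ℂ) ^ (ji.2 : ℕ))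
        (mat p N hp h o hh σ).det = (z : ℂ) := by
  classical
  set u : Fin h → ℕ := fun k' => (σ ⟨(o + (k' : ℕ)) % p, Nat.mod_lt _ hp⟩ : Fin p) + 1 with hu
  have hinj : Function.Injective u := by
    intro a b hab
    have hv : ((σ ⟨(o + (a : ℕ)) % p, Nat.mod_lt _ hp⟩ : Fin p) : ℕ)
        = ((σ ⟨(o + (b : ℕ)) % p, Nat.mod_lt _ hp⟩ : Fin p) : ℕ) := by
      simp only [hu] at hab
      omega
    have h2 : (⟨(o + (a : ℕ)) % p, Nat.mod_lt _ hp⟩ : Fin p)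
        = ⟨(o + (b : ℕ)) % p, Nat.mod_lt _ hp⟩ := σ.injective (Fin.ext hv)
    have h3 : (o + (a : ℕ)) % p = (o + (b : ℕ)) % p := by
      simpa [Fin.ext_iff] using h2
    have h4 : (a : ℕ) % p = (b : ℕ) % p := Nat.ModEq.add_left_cancel' o h3
    have ha : (a : ℕ) < p := lt_of_lt_of_le a.isLt hhp
    have hb : (b : ℕ) < p := lt_of_lt_of_le b.isLt hhp
    rw [Nat.mod_eq_of_lt ha, Nat.mod_eq_of_lt hb] at h4
    exact Fin.ext h4
  refine ⟨∏ i : Fin h, ∏ j ∈ Finset.Ioi i, ((u j : ℤ) - (u i : ℤ)), ?_, ?_⟩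
  · apply Finset.prod_ne_zero_iff.2
    intro i _
    apply Finset.prod_ne_zero_iff.2
    intro j hj
    have hlt := Finset.mem_Ioi.1 hj
    intro hzero
    have huji : u j = u i := by omega
    exact hlt.ne (hinj huji).symm
  · have heval : (mat p N hp h o hh σ).map
        (eval (fun ji : Fin p × Fin N => ((ji.1 : ℕ) + 1 : ℂ) ^ (ji.2 : ℕ)))
        = (Matrix.vandermonde (fun k' : Fin h => ((u k' : ℕ) : ℂ)))ᵀ := by
      funext k k'
      simp only [Matrix.map_apply, mat, Matrix.of_apply, eval_X, Matrix.transpose_apply,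
        Matrix.vandermonde, Matrix.of_apply, hu]
      push_cast
      rfl
    rw [RingHom.map_det, RingHom.mapMatrix_apply, heval, Matrix.det_transpose,
      Matrix.det_vandermonde]
    push_cast
    rfl

end MatLemmas

/-! ### combinatorics -/

def hgt (p : ℕ) (lam : ℕ → ℕ) (r : ℕ) : ℕ :=
  ((Finset.range p).filter (fun i => r < lam i / 2)).card

def off (p : ℕ) (lam : ℕ → ℕ) (r : ℕ) : ℕ :=
  ∑ r' ∈ Finset.range r, hgt p lam r'

lemma hgt_le_p (p : ℕ) (lam : ℕ → ℕ) (r : ℕ) : hgt p lam r ≤ p := by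
  have := Finset.card_filter_le (Finset.range p) (fun i => r < lam i / 2)
  simpa [hgt] using this

lemma hgt_le_N (p N : ℕ) (lam : ℕ → ℕ) (hN : ∀ i, N ≤ i → lam i = 0) (r : ℕ) :
    hgt p lam r ≤ N := by
  have hsub : (Finset.range p).filter (fun i => r < lam i / 2) ⊆ Finset.range N := by
    intro i hi
    simp only [Finset.mem_filter, Finset.mem_range] at hi ⊢
    by_contra hiN
    have : lam i = 0 := hN i (le_of_not_gt hiN)
    omega
  simpa [hgt] using Finset.card_le_card hsub

lemma lt_hgt_iff (p : ℕ) (lam : ℕ → ℕ) (hanti : Antitone lam)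
    (hparts : ∀ i, p ≤ i → lam i = 0) (k r : ℕ) :
    k < hgt p lam r ↔ r < lam k / 2 := by
  constructor
  · intro hk
    by_contra hr
    push_neg at hr
    have hsub : (Finset.range p).filter (fun i => r < lam i / 2) ⊆ Finset.range k := by
      intro i hi
      simp only [Finset.mem_filter, Finset.mem_range] at hi ⊢
      by_contra hik
      push_neg at hik
      have h1 : lam i ≤ lam k := hanti hik
      have h2 : lam i / 2 ≤ lam k / 2 := Nat.div_le_div_right h1
      omega
    have := Finset.card_le_card hsub
    simp only [Finset.card_range] at this
    unfold hgt at hk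
    omega
  · intro hr
    have hkp : k < p := by
      by_contra hkp
      push_neg at hkp
      have : lam k = 0 := hparts k hkp
      omega
    have hsub : Finset.range (k + 1) ⊆ (Finset.range p).filter (fun i => r < lam i / 2) := by
      intro i hi
      simp only [Finset.mem_range] at hi
      simp only [Finset.mem_filter, Finset.mem_range]
      have h1 : lam k ≤ lam i := hanti (by omega)
      have h2 : lam k / 2 ≤ lam i / 2 := Nat.div_le_div_right h1
      exact ⟨by omega, by omega⟩
    have := Finset.card_le_card hsub
    simp only [Finset.card_range] at this
    unfold hgt
    omega

lemma count_hgt (p : ℕ) (lam : ℕ → ℕ) (hanti : Antitone lam)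
    (hparts : ∀ i, p ≤ i → lam i = 0) (k : ℕ) :
    ((Finset.range (lam 0 / 2)).filter (fun r => k < hgt p lam r)).card = lam k / 2 := by
  have h1 : (Finset.range (lam 0 / 2)).filter (fun r => k < hgt p lam r)
      = Finset.range (lam k / 2) := by
    ext r
    simp only [Finset.mem_filter, Finset.mem_range,
      lt_hgt_iff p lam hanti hparts k r]
    have h2 : lam k ≤ lam 0 := hanti (Nat.zero_le k)
    have h3 : lam k / 2 ≤ lam 0 / 2 := Nat.div_le_div_right h2
    omega
  rw [h1, Finset.card_range]

lemma off_top (p q : ℕ) (lam : ℕ → ℕ) (hanti : Antitone lam)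
    (heven : ∀ i, Even (lam i))
    (hsum : ∑ i ∈ Finset.range p, lam i = 2 * p * q) :
    off p lam (lam 0 / 2) = p * q := by
  unfold off hgt
  have h1 : ∀ r, ((Finset.range p).filter (fun i => r < lam i / 2)).card
      = ∑ i ∈ Finset.range p, (if r < lam i / 2 then 1 else 0) := by
    intro r
    rw [Finset.card_filter]
  simp only [h1]
  rw [Finset.sum_comm]
  have h2 : ∀ i ∈ Finset.range p,
      (∑ r ∈ Finset.range (lam 0 / 2), if r < lam i / 2 then 1 else 0) = lam i / 2 := by
    intro i _
    rw [← Finset.card_filter]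
    have hle : lam i / 2 ≤ lam 0 / 2 := Nat.div_le_div_right (hanti (Nat.zero_le i))
    have h3 : (Finset.range (lam 0 / 2)).filter (fun r => r < lam i / 2)
        = Finset.range (lam i / 2) := by
      ext r
      simp only [Finset.mem_filter, Finset.mem_range]
      omega
    rw [h3, Finset.card_range]
  rw [Finset.sum_congr rfl h2]
  have h3 : ∀ i ∈ Finset.range p, lam i = 2 * (lam i / 2) := by
    intro i _
    have := (heven i).two_dvd
    omega
  have h4 : 2 * ∑ i ∈ Finset.range p, (lam i / 2) = 2 * (p * q) := by
    rw [Finset.mul_sum]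
    rw [← Finset.sum_congr rfl h3]
    rw [hsum]; ring
  omega

lemma sum_blocks {M : Type*} [AddCommMonoid M] (h : ℕ → ℕ) (f : ℕ → M) (K : ℕ) :
    ∑ r ∈ Finset.range K, ∑ k ∈ Finset.range (h r),
        f ((∑ r' ∈ Finset.range r, h r') + k)
      = ∑ m ∈ Finset.range (∑ r' ∈ Finset.range K, h r'), f m := by
  induction K with
  | zero => simp
  | succ K ih =>
    rw [Finset.sum_range_succ, ih, Finset.sum_range_succ (fun r' => h r'), Finset.sum_range_add]

lemma sum_mod {M : Type*} [AddCommMonoid M] (p q : ℕ) (f : ℕ → M) :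
    ∑ m ∈ Finset.range (p * q), f (m % p) = q • ∑ a ∈ Finset.range p, f a := by
  induction q with
  | zero => simp
  | succ q ih =>
    have h1 : p * (q + 1) = p * q + p := by ring
    rw [h1, Finset.sum_range_add, ih]
    have h2 : ∀ a ∈ Finset.range p, f ((p * q + a) % p) = f a := by
      intro a ha
      simp only [Finset.mem_range] at ha
      congr 1
      rw [Nat.mul_add_mod, Nat.mod_eq_of_lt ha]
    rw [Finset.sum_congr rfl h2, succ_nsmul]

lemma prod_swap_count {M : Type*} [CommMonoid M] (K Nn : ℕ) (h : ℕ → ℕ)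
    (hhN : ∀ r, h r ≤ Nn) (g : ℕ → M) :
    ∏ r ∈ Finset.range K, ∏ k ∈ Finset.range (h r), g k
      = ∏ k ∈ Finset.range Nn, g k ^ ((Finset.range K).filter (fun r => k < h r)).card := by
  have h1 : ∀ r ∈ Finset.range K, ∏ k ∈ Finset.range (h r), g k
      = ∏ k ∈ (Finset.range Nn).filter (fun k => k < h r), g k := by
    intro r _
    congr 1
    ext k
    simp only [Finset.mem_filter, Finset.mem_range]
    have := hhN r
    omega
  rw [Finset.prod_congr rfl h1]
  rw [Finset.prod_comm' (t' := Finset.range Nn)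
    (s' := fun k => (Finset.range K).filter (fun r => k < h r))
    (fun r k => by
      simp only [Finset.mem_filter, Finset.mem_range]
      tauto)]
  apply Finset.prod_congr rfl
  intro k _
  rw [Finset.prod_const]


/-! ### the big polynomial -/

def bigD (p N : ℕ) (hp : 0 < p) (lam : ℕ → ℕ) (hhN : ∀ r, hgt p lam r ≤ N)
    (σ : Equiv.Perm (Fin p)) : MvPolynomial (Fin p × Fin N) ℂ :=
  ∏ r ∈ Finset.range (lam 0 / 2),
    (mat p N hp (hgt p lam r) (off p lam r) (hhN r) σ).det ^ 2

def bigP (p N : ℕ) (hp : 0 < p) (lam : ℕ → ℕ) (hhN : ∀ r, hgt p lam r ≤ N) :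
    MvPolynomial (Fin p × Fin N) ℂ :=
  ∑ σ : Equiv.Perm (Fin p), bigD p N hp lam hhN σ

section BigLemmas
variable {p N : ℕ} (hp : 0 < p) (lam : ℕ → ℕ) (hhN : ∀ r, hgt p lam r ≤ N)

lemma bigP_rename (τ : Equiv.Perm (Fin p)) :
    rename (Equiv.prodCongr τ (Equiv.refl (Fin N))) (bigP p N hp lam hhN)
      = bigP p N hp lam hhN := by
  unfold bigP
  rw [map_sum]
  have h1 : ∀ σ : Equiv.Perm (Fin p),
      rename (Equiv.prodCongr τ (Equiv.refl (Fin N))) (bigD p N hp lam hhN σ)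
        = bigD p N hp lam hhN (τ * σ) := by
    intro σ
    unfold bigD
    rw [map_prod]
    apply Finset.prod_congr rfl
    intro r _
    rw [map_pow, mat_det_rename hp _ _ (hhN r) σ τ]
    rfl
  simp only [h1]
  exact Equiv.sum_comp (Equiv.mulLeft τ) (bigD p N hp lam hhN)

lemma bigP_unipotent (g : Matrix (Fin N) (Fin N) ℂ)
    (hg0 : ∀ i j : Fin N, j < i → g i j = 0) (hg1 : ∀ i, g i i = 1) :
    (aeval fun ji : Fin p × Fin N =>
      ∑ i : Fin N, g i ji.2 • X (ji.1, i) : MvPolynomial (Fin p × Fin N) ℂ →ₐ[ℂ]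
        MvPolynomial (Fin p × Fin N) ℂ) (bigP p N hp lam hhN) = bigP p N hp lam hhN := by
  unfold bigP bigD
  rw [map_sum]
  apply Finset.sum_congr rfl
  intro σ _
  rw [map_prod]
  apply Finset.prod_congr rfl
  intro r _
  rw [map_pow, mat_det_unipotent hp _ _ (hhN r) σ g hg0 hg1]

lemma bigP_torus (t : Fin N → ℂ) (hanti : Antitone lam)
    (hparts : ∀ i, p ≤ i → lam i = 0) (heven : ∀ i, Even (lam i)) :
    (aeval fun ji : Fin p × Fin N => t ji.2 • X ji :
        MvPolynomial (Fin p × Fin N) ℂ →ₐ[ℂ] MvPolynomial (Fin p × Fin N) ℂ)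
      (bigP p N hp lam hhN)
    = algebraMap ℂ _ (∏ i : Fin N, t i ^ lam (i : ℕ)) * bigP p N hp lam hhN := by
  classical
  -- the scalar
  set tt : ℕ → ℂ := fun k => if hk : k < N then t ⟨k, hk⟩ else 1 with htt
  have hscal : ∀ r, (∏ k : Fin (hgt p lam r), t (Fin.castLE (hhN r) k))
      = ∏ k ∈ Finset.range (hgt p lam r), tt k := by
    intro r
    rw [← Fin.prod_univ_eq_prod_range]
    apply Finset.prod_congr rfl
    intro k _
    have hk : (k : ℕ) < N := lt_of_lt_of_le k.isLt (hhN r)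
    simp only [htt]
    rw [dif_pos hk]
    rfl
  have hmain : (∏ r ∈ Finset.range (lam 0 / 2),
        (∏ k ∈ Finset.range (hgt p lam r), tt k) ^ 2)
      = ∏ i : Fin N, t i ^ lam (i : ℕ) := by
    have h1 : ∀ r ∈ Finset.range (lam 0 / 2),
        (∏ k ∈ Finset.range (hgt p lam r), tt k) ^ 2
          = ∏ k ∈ Finset.range (hgt p lam r), (tt k) ^ 2 := by
      intro r _
      rw [← Finset.prod_pow]
    rw [Finset.prod_congr rfl h1]
    rw [prod_swap_count (lam 0 / 2) N (hgt p lam) hhN (fun k => (tt k) ^ 2)]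
    have h2 : ∀ k ∈ Finset.range N,
        ((tt k) ^ 2) ^ ((Finset.range (lam 0 / 2)).filter (fun r => k < hgt p lam r)).card
          = tt k ^ lam k := by
      intro k _
      rw [count_hgt p lam hanti hparts k, ← pow_mul]
      congr 1
      have := (heven k).two_dvd
      omega
    rw [Finset.prod_congr rfl h2]
    rw [← Fin.prod_univ_eq_prod_range (fun k => tt k ^ lam k) N]
    apply Finset.prod_congr rfl
    intro i _
    simp only [htt]
    rw [dif_pos i.isLt]
  unfold bigP bigD
  rw [map_sum, Finset.mul_sum]
  apply Finset.sum_congr rfl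
  intro σ _
  rw [map_prod]
  have h3 : ∀ r ∈ Finset.range (lam 0 / 2),
      (aeval fun ji : Fin p × Fin N => t ji.2 • X ji :
        MvPolynomial (Fin p × Fin N) ℂ →ₐ[ℂ] MvPolynomial (Fin p × Fin N) ℂ)
          ((mat p N hp (hgt p lam r) (off p lam r) (hhN r) σ).det ^ 2)
        = (algebraMap ℂ (MvPolynomial (Fin p × Fin N) ℂ)
            ((∏ k ∈ Finset.range (hgt p lam r), tt k) ^ 2)) *
          (mat p N hp (hgt p lam r) (off p lam r) (hhN r) σ).det ^ 2 := by
    intro r _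
    rw [map_pow, mat_det_torus hp _ _ (hhN r) σ t, mul_pow, ← map_pow, hscal r]
  rw [Finset.prod_congr rfl h3, Finset.prod_mul_distrib, ← map_prod, hmain]

lemma bigP_weight (q : ℕ) (hanti : Antitone lam)
    (hparts : ∀ i, p ≤ i → lam i = 0) (heven : ∀ i, Even (lam i))
    (hsum : ∑ i ∈ Finset.range p, lam i = 2 * p * q) :
    ∀ m ∈ (bigP p N hp lam hhN).support, ∀ j : Fin p,
      (∑ i : Fin N, m (j, i)) = 2 * q := by
  classical
  set w : Fin p × Fin N → (Fin p →₀ ℕ) := fun ji => Finsupp.single ji.1 1 with hw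
  set S : Fin p →₀ ℕ := ∑ j : Fin p, Finsupp.single j (1 : ℕ) with hS
  -- each bigD σ is weighted homogeneous of degree (2*q) • S
  have hD : ∀ σ : Equiv.Perm (Fin p),
      bigD p N hp lam hhN σ ∈ weightedHomogeneousSubmodule ℂ w ((2 * q) • S) := by
    intro σ
    have hsum2 : ((2 * q) • S : Fin p →₀ ℕ)
        = ∑ r ∈ Finset.range (lam 0 / 2),
            ((∑ k : Fin (hgt p lam r), Finsupp.single
                (σ ⟨(off p lam r + (k : ℕ)) % p, Nat.mod_lt _ hp⟩) (1 : ℕ))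
             + (∑ k : Fin (hgt p lam r), Finsupp.single
                (σ ⟨(off p lam r + (k : ℕ)) % p, Nat.mod_lt _ hp⟩) (1 : ℕ))) := by
      set f : ℕ → (Fin p →₀ ℕ) :=
        fun m => Finsupp.single (σ ⟨m % p, Nat.mod_lt _ hp⟩) (1 : ℕ) with hf
      have h1 : ∀ r, (∑ k : Fin (hgt p lam r), Finsupp.single
            (σ ⟨(off p lam r + (k : ℕ)) % p, Nat.mod_lt _ hp⟩) (1 : ℕ))
          = ∑ k ∈ Finset.range (hgt p lam r), f (off p lam r + k) := by
        intro r
        rw [← Fin.sum_univ_eq_sum_range (fun k => f (off p lam r + k))]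
      have h2 : (∑ r ∈ Finset.range (lam 0 / 2), ∑ k ∈ Finset.range (hgt p lam r),
            f (off p lam r + k)) = ∑ m ∈ Finset.range (p * q), f m := by
        have h2' := sum_blocks (hgt p lam) f (lam 0 / 2)
        have hoff : (∑ r' ∈ Finset.range (lam 0 / 2), hgt p lam r') = p * q :=
          off_top p q lam hanti heven hsum
        rw [hoff] at h2'
        simpa [off] using h2'
      have h3 : (∑ m ∈ Finset.range (p * q), f m)
          = q • ∑ a ∈ Finset.range p, f a := by
        have h4 : ∀ m ∈ Finset.range (p * q), f m = f (m % p) := by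
          intro m _
          simp only [hf]
          congr 1
          apply congrArg
          apply Fin.ext
          simp only []
          exact (Nat.mod_mod_of_dvd m dvd_rfl).symm
        rw [Finset.sum_congr rfl h4, sum_mod p q f]
      have h5 : (∑ a ∈ Finset.range p, f a) = S := by
        rw [hS, ← Fin.sum_univ_eq_sum_range (fun a => f a) p]
        rw [← Equiv.sum_comp σ (fun j => Finsupp.single j (1 : ℕ))]
        apply Finset.sum_congr rfl
        intro j _
        simp only [hf]
        congr 2
        apply Fin.ext
        simp only []
        exact Nat.mod_eq_of_lt j.isLt
      calc ((2 * q) • S : Fin p →₀ ℕ) = 2 • (q • S) := mul_smul 2 q S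
        _ = 2 • (q • ∑ a ∈ Finset.range p, f a) := by rw [h5]
        _ = 2 • ∑ m ∈ Finset.range (p * q), f m := by rw [h3]
        _ = 2 • ∑ r ∈ Finset.range (lam 0 / 2), ∑ k ∈ Finset.range (hgt p lam r),
              f (off p lam r + k) := by rw [h2]
        _ = _ := by
            rw [Finset.smul_sum]
            apply Finset.sum_congr rfl
            intro r _
            rw [← h1, two_smul]
    rw [mem_weightedHomogeneousSubmodule, hsum2]
    apply IsWeightedHomogeneous.prod
    intro r _
    rw [pow_two]
    exact ((mem_weightedHomogeneousSubmodule _ _ _ _).1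
        (mat_det_weight hp _ _ (hhN r) σ)).mul
      ((mem_weightedHomogeneousSubmodule _ _ _ _).1 (mat_det_weight hp _ _ (hhN r) σ))
  have hPmem : bigP p N hp lam hhN ∈ weightedHomogeneousSubmodule ℂ w ((2 * q) • S) :=
    Submodule.sum_mem _ (fun σ _ => hD σ)
  intro m hm j
  have hwt : (Finsupp.weight w) m = (2 * q) • S :=
    hPmem (MvPolynomial.mem_support_iff.1 hm)
  have hSj : S j = 1 := by
    rw [hS, Finset.sum_apply']
    rw [Finset.sum_eq_single j]
    · rw [Finsupp.single_eq_same]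
    · intro b _ hb
      rw [Finsupp.single_eq_of_ne' hb]
    · intro hj
      exact absurd (Finset.mem_univ j) hj
  have hrhs : ((2 * q) • S) j = 2 * q := by
    rw [Finsupp.smul_apply, hSj, smul_eq_mul, mul_one]
  have hlhs : (Finsupp.weight w) m j = ∑ i : Fin N, m (j, i) := by
    rw [Finsupp.weight_apply]
    rw [Finsupp.sum]
    rw [Finset.sum_apply']
    have h6 : ∀ ji ∈ m.support, (m ji • w ji) j = if ji.1 = j then m ji else 0 := by
      intro ji _
      rw [Finsupp.smul_apply, hw]
      simp only []
      rw [Finsupp.single_apply]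
      by_cases hji : ji.1 = j
      · rw [if_pos hji, if_pos hji, smul_eq_mul, mul_one]
      · rw [if_neg hji, if_neg hji, smul_eq_mul, mul_zero]
    rw [Finset.sum_congr rfl h6]
    rw [Finset.sum_subset (Finset.subset_univ m.support)]
    · rw [Fintype.sum_prod_type]
      rw [Finset.sum_eq_single j]
      · apply Finset.sum_congr rfl
        intro i _
        rw [if_pos rfl]
      · intro b _ hb
        apply Finset.sum_eq_zero
        intro i _
        rw [if_neg hb]
      · intro hj
        exact absurd (Finset.mem_univ j) hj
    · intro ji _ hji
      rw [Finsupp.notMem_support_iff.1 hji]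
      rw [ite_self]
  rw [← hlhs, hwt, hrhs]

lemma bigP_ne : bigP p N hp lam hhN ≠ 0 := by
  classical
  have hz : ∀ (σ : Equiv.Perm (Fin p)) (r : ℕ), ∃ z : ℤ, z ≠ 0 ∧
      eval (fun ji : Fin p × Fin N => ((ji.1 : ℕ) + 1 : ℂ) ^ (ji.2 : ℕ))
        (mat p N hp (hgt p lam r) (off p lam r) (hhN r) σ).det = (z : ℂ) :=
    fun σ r => mat_det_eval hp _ _ (hhN r) σ (hgt_le_p p lam r)
  choose Z hZne hZeq using hz
  have heval : eval (fun ji : Fin p × Fin N => ((ji.1 : ℕ) + 1 : ℂ) ^ (ji.2 : ℕ))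
        (bigP p N hp lam hhN)
      = ((∑ σ : Equiv.Perm (Fin p), ∏ r ∈ Finset.range (lam 0 / 2), (Z σ r) ^ 2 : ℤ) : ℂ) := by
    unfold bigP bigD
    rw [map_sum]
    push_cast
    apply Finset.sum_congr rfl
    intro σ _
    rw [map_prod]
    apply Finset.prod_congr rfl
    intro r _
    rw [map_pow, hZeq σ r]
  intro h0
  rw [h0, map_zero] at heval
  have hpos : 0 < ∑ σ : Equiv.Perm (Fin p), ∏ r ∈ Finset.range (lam 0 / 2), (Z σ r) ^ 2 :=
    Finset.sum_pos
      (fun σ _ => Finset.prod_pos (fun r _ => pow_two_pos_of_ne_zero (hZne σ r)))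
      Finset.univ_nonempty
  have : (0 : ℤ) = ∑ σ : Equiv.Perm (Fin p), ∏ r ∈ Finset.range (lam 0 / 2), (Z σ r) ^ 2 := by
    exact_mod_cast heval
  omega


end BigLemmas

end WtrAux

/-- **Weintraub's conjecture** (symmetric-power form).
Let `p, q > 0` and let `λ` (given by the antitone function `lam`, with `lam i = 0` for
`i ≥ p`) be a partition of `2pq` all of whose parts are even, with at most `p` parts, and let
`N` be at least the number of nonzero parts of `λ`.  Realizing the symmetric power
`S^{2q}(ℂ^N)` as the space `H` of homogeneous polynomials of degree `2q` in `ℂ[x_1,…,x_N]`,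
there is a nonzero vector `v` in the `p`-fold tensor power `H^{⊗p}` (realized inside
`ℂ[x]^{⊗p}` as the range of the `p`-th tensor power of the inclusion `H ↪ ℂ[x]`) which is
invariant under permutations of the tensor factors, fixed by the maps induced by all
substitutions along upper triangular unipotent matrices `x_j ↦ x_j + ∑_{i<j} g_{ij} x_i`,
and rescaled by `∏ t_i^{λ_i}` under the substitutions `x_i ↦ t_i x_i`; i.e. an `S_p`-invariant
highest weight vector of weight `λ`.  (Equivalently `S_λ W` occurs in `S^p(S^{2q} W)`.) -/
theorem stmt_1 (p q N : ℕ) (hp : 0 < p) (hq : 0 < q)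
    (lam : ℕ → ℕ) (hanti : Antitone lam)
    (hparts : ∀ i, p ≤ i → lam i = 0)
    (heven : ∀ i, Even (lam i))
    (hsum : ∑ i ∈ Finset.range p, lam i = 2 * p * q)
    (hN : ∀ i, N ≤ i → lam i = 0) :
    ∃ v : ⨂[ℂ]^p (MvPolynomial (Fin N) ℂ), v ≠ 0 ∧
      v ∈ LinearMap.range (PiTensorProduct.map fun _ : Fin p =>
        (MvPolynomial.homogeneousSubmodule (Fin N) ℂ (2 * q)).subtype) ∧
      (∀ σ : Equiv.Perm (Fin p),
        PiTensorProduct.reindex ℂ (fun _ : Fin p => MvPolynomial (Fin N) ℂ) σ v = v) ∧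
      (∀ g : Matrix (Fin N) (Fin N) ℂ, (∀ i j : Fin N, j < i → g i j = 0) →
        (∀ i, g i i = 1) →
        PiTensorProduct.map (fun _ : Fin p =>
          (MvPolynomial.aeval fun j : Fin N =>
            ∑ i : Fin N, g i j • MvPolynomial.X i :
              MvPolynomial (Fin N) ℂ →ₐ[ℂ] MvPolynomial (Fin N) ℂ).toLinearMap) v = v) ∧
      (∀ t : Fin N → ℂ, (∀ i, t i ≠ 0) →
        PiTensorProduct.map (fun _ : Fin p =>
          (MvPolynomial.aeval fun j : Fin N => t j • MvPolynomial.X j :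
              MvPolynomial (Fin N) ℂ →ₐ[ℂ] MvPolynomial (Fin N) ℂ).toLinearMap) v =
          (∏ i : Fin N, t i ^ lam (i : ℕ)) • v) := by
  classical
  have hhN2 : ∀ r, WtrAux.hgt p lam r ≤ N := WtrAux.hgt_le_N p N lam hN
  refine ⟨WtrAux.Psi p N (WtrAux.bigP p N hp lam hhN2), ?_, ?_, ?_, ?_, ?_⟩
  · intro h0
    apply WtrAux.bigP_ne hp lam hhN2
    have h1 := congrArg (WtrAux.Phi p N) h0
    rw [map_zero, ← AlgHom.comp_apply, WtrAux.Phi_comp_Psi, AlgHom.id_apply] at h1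
    exact h1
  · have hdeg := WtrAux.bigP_weight hp lam hhN2 q hanti hparts heven hsum
    have hrepr : WtrAux.Psi p N (WtrAux.bigP p N hp lam hhN2)
        = ∑ m ∈ (WtrAux.bigP p N hp lam hhN2).support,
        (MvPolynomial.coeff m (WtrAux.bigP p N hp lam hhN2)) • PiTensorProduct.tprod ℂ
          (fun j => MvPolynomial.monomial (WtrAux.slice m j) (1 : ℂ)) := by
      conv_lhs => rw [(WtrAux.bigP p N hp lam hhN2).as_sum]
      rw [map_sum]
      exact Finset.sum_congr rfl (fun m _ => WtrAux.psi_monomial m _)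
    rw [hrepr]
    apply Submodule.sum_mem
    intro m hm
    apply Submodule.smul_mem
    have hmem : ∀ j : Fin p, (MvPolynomial.monomial (WtrAux.slice m j) (1 : ℂ))
        ∈ MvPolynomial.homogeneousSubmodule (Fin N) ℂ (2 * q) := by
      intro j
      rw [MvPolynomial.mem_homogeneousSubmodule]
      apply MvPolynomial.isHomogeneous_monomial
      have h2 : (WtrAux.slice m j).degree = ∑ i : Fin N, m (j, i) := by
        rw [Finsupp.degree_apply]
        rw [Finset.sum_subset (Finset.subset_univ _)]
        · exact Finset.sum_congr rfl (fun i _ => WtrAux.slice_apply m j i)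
        · intro i _ hi
          exact Finsupp.notMem_support_iff.1 hi
      rw [h2]
      exact hdeg m hm j
    exact ⟨PiTensorProduct.tprod ℂ (fun j => ⟨_, hmem j⟩), by
      rw [PiTensorProduct.map_tprod]; rfl⟩
  · intro σ
    rw [WtrAux.reindex_psi, WtrAux.bigP_rename hp lam hhN2 σ]
  · intro g hg0 hg1
    rw [WtrAux.map_psi]
    have hfun : (MvPolynomial.aeval fun ji : Fin p × Fin N =>
          MvPolynomial.rename (Prod.mk ji.1)
            ((MvPolynomial.aeval fun j : Fin N => ∑ i : Fin N, g i j • MvPolynomial.X i :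
              MvPolynomial (Fin N) ℂ →ₐ[ℂ] MvPolynomial (Fin N) ℂ) (MvPolynomial.X ji.2)))
        = (MvPolynomial.aeval fun ji : Fin p × Fin N =>
            ∑ i : Fin N, g i ji.2 • MvPolynomial.X (ji.1, i) :
              MvPolynomial (Fin p × Fin N) ℂ →ₐ[ℂ] MvPolynomial (Fin p × Fin N) ℂ) := by
      congr 1
      funext ji
      rw [MvPolynomial.aeval_X, map_sum]
      apply Finset.sum_congr rfl
      intro i _
      rw [_root_.map_smul, MvPolynomial.rename_X]
    rw [hfun, WtrAux.bigP_unipotent hp lam hhN2 g hg0 hg1]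
  · intro t ht
    rw [WtrAux.map_psi]
    have hfun : (MvPolynomial.aeval fun ji : Fin p × Fin N =>
          MvPolynomial.rename (Prod.mk ji.1)
            ((MvPolynomial.aeval fun j : Fin N => t j • MvPolynomial.X j :
              MvPolynomial (Fin N) ℂ →ₐ[ℂ] MvPolynomial (Fin N) ℂ) (MvPolynomial.X ji.2)))
        = (MvPolynomial.aeval fun ji : Fin p × Fin N => t ji.2 • MvPolynomial.X ji :
              MvPolynomial (Fin p × Fin N) ℂ →ₐ[ℂ] MvPolynomial (Fin p × Fin N) ℂ) := by
      congr 1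
      funext ji
      rw [MvPolynomial.aeval_X, _root_.map_smul, MvPolynomial.rename_X]
    rw [hfun, WtrAux.bigP_torus hp lam hhN2 t hanti hparts heven]
    rw [_root_.map_mul, AlgHom.commutes, ← Algebra.smul_def]

end
end

section
/- Let k, d be positive integers, λ a partition of dk with conjugate λ*, and N ≥ λ_1, W = ℂ^N. For every T ∈ 𝒯, the vector w_T ∈ (⋀^k W)^{⊗d} is a highest weight vector of weight λ*: for every N×N upper triangular matrix g with all diagonal entries equal to 1, (⋀^k g)^{⊗d} w_T = w_T, and for every tuple t = (t_1,…,t_N) of nonzero complex numbers, (⋀^k diag(t_1,…,t_N))^{⊗d} w_T = (∏_i t_i^{λ*_i})·w_T. -/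
open scoped TensorProduct

set_option synthInstance.maxHeartbeats 1000000
set_option maxHeartbeats 1000000

noncomputable section

/-- The endomorphism of the `k`-th exterior power `⋀[ℂ]^k W` (a submodule of the exterior
algebra) induced by a linear endomorphism `f` of `W`. -/
def exteriorPowerMap {W : Type*} [AddCommGroup W] [Module ℂ W] (k : ℕ)
    (f : W →ₗ[ℂ] W) : ⋀[ℂ]^k W →ₗ[ℂ] ⋀[ℂ]^k W :=
  LinearMap.restrict (ExteriorAlgebra.map f).toLinearMap
    (fun x hx => by
      have h : Submodule.map (ExteriorAlgebra.map f).toLinearMap (⋀[ℂ]^k W) ≤ ⋀[ℂ]^k W := by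
        rw [ExteriorAlgebra.exteriorPower, Submodule.map_pow, ExteriorAlgebra.ι_range_map_map]
        exact pow_le_pow_left' LinearMap.map_le_range k
      exact h ⟨x, hx, rfl⟩)

/-- `h_s^b`: the number of entries equal to `b` in column `s` of the filling `T` of the
diagram of `λ*` (whose column `s` has `lam s` boxes, rows being 0-indexed by
`0,…,lam s - 1`; columns `s` are 0-indexed as well, while the values of `T` lie in
`{1,…,d}`). -/
def hcount (lam : ℕ → ℕ) (T : ℕ → ℕ → ℕ) (s b : ℕ) : ℕ :=
  ((Finset.range (lam s)).filter fun i => T s i = b).card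

/-- The set `𝒯`: fillings `T` of the diagram of `λ*` (column `s` having `lam s` boxes) with
entries in `{1,…,d}`, vanishing outside the diagram (a normalization), weakly increasing down
each column, strictly increasing along each row, and in which every value `b ∈ {1,…,d}`
occurs exactly `k` times. -/
def IsTab (k d l : ℕ) (lam : ℕ → ℕ) (T : ℕ → ℕ → ℕ) : Prop :=
  (∀ s i, i < lam s → 1 ≤ T s i ∧ T s i ≤ d) ∧
  (∀ s i, lam s ≤ i → T s i = 0) ∧
  (∀ s i i', i ≤ i' → i' < lam s → T s i ≤ T s i') ∧
  (∀ s s' i, s < s' → i < lam s' → T s i < T s' i) ∧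
  (∀ b, 1 ≤ b → b ≤ d → ∑ s ∈ Finset.range l, hcount lam T s b = k)

/-- The (0-indexed) standard basis vector `e_{m+1}` of `ℂ^N`; junk value `0` if `m ≥ N`. -/
def E (N m : ℕ) : Fin N → ℂ := fun i => if (i : ℕ) = m then 1 else 0

/-- `f_s^b = h_s^1 + ⋯ + h_s^b` (so `f_s^0 = 0`). -/
def fcount (lam : ℕ → ℕ) (T : ℕ → ℕ → ℕ) (s b : ℕ) : ℕ :=
  ∑ b' ∈ Finset.Icc 1 b, hcount lam T s b'

/-- `γ_s(j)`, 0-indexed: the collection `γ` of permutations `γ_s ∈ S_{λ_s}` applied at column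
`s` and position `j`; junk value `0` when `s ≥ l` or `j ≥ λ_s`. -/
def gIdx (l : ℕ) (lam : ℕ → ℕ) (γ : ∀ s : Fin l, Equiv.Perm (Fin (lam s)))
    (s j : ℕ) : ℕ :=
  if hs : s < l then
    (if hj : j < lam s then ((γ ⟨s, hs⟩) ⟨j, hj⟩ : ℕ) else 0)
  else 0

/-- The list of the `k` vectors appearing in the `b`-th wedge factor (`b ∈ {1,…,d}`) of the
simple tensor `t_{γ_1,…,γ_l}`: for `s = 0,…,l-1` (in this order) the vectors
`e_{γ_s(f_s^{b-1}+1)},…,e_{γ_s(f_s^b)}` (everything written 0-indexed). -/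
def factorList (N l : ℕ) (lam : ℕ → ℕ) (T : ℕ → ℕ → ℕ)
    (γ : ∀ s : Fin l, Equiv.Perm (Fin (lam s))) (b : ℕ) : List (Fin N → ℂ) :=
  (List.range l).flatMap fun s =>
    (List.range' (fcount lam T s (b - 1)) (hcount lam T s b)).map fun j =>
      E N (gIdx l lam γ s j)

/-- The `b`-th wedge factor of the simple tensor `t_{γ_1,…,γ_l}`, as an element of
`⋀^k(ℂ^N)`. -/
def tFactor (k N l : ℕ) (lam : ℕ → ℕ) (T : ℕ → ℕ → ℕ)
    (γ : ∀ s : Fin l, Equiv.Perm (Fin (lam s))) (b : ℕ) : ⋀[ℂ]^k (Fin N → ℂ) :=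
  ⟨ExteriorAlgebra.ιMulti ℂ k fun i : Fin k => (factorList N l lam T γ b).getD i 0,
   ExteriorAlgebra.ιMulti_range ℂ k (Set.mem_range_self _)⟩

/-- The simple tensor `t_{γ_1,…,γ_l} ∈ (⋀^k ℂ^N)^{⊗d}` associated to the filling `T` and the
permutations `γ_s ∈ S_{λ_s}`. -/
def tTensor (k d N l : ℕ) (lam : ℕ → ℕ) (T : ℕ → ℕ → ℕ)
    (γ : ∀ s : Fin l, Equiv.Perm (Fin (lam s))) :
    ⨂[ℂ]^d (⋀[ℂ]^k (Fin N → ℂ)) :=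
  PiTensorProduct.tprod ℂ fun g : Fin d => tFactor k N l lam T γ ((g : ℕ) + 1)

/-- The vector `w_T = (1/∏_{s,b} h_s^b!) ∑_γ (∏_s sgn γ_s) · t_{γ_1,…,γ_l}`. -/
def wT (k d N l : ℕ) (lam : ℕ → ℕ) (T : ℕ → ℕ → ℕ) :
    ⨂[ℂ]^d (⋀[ℂ]^k (Fin N → ℂ)) :=
  (((∏ s ∈ Finset.range l, ∏ b ∈ Finset.Icc 1 d,
      Nat.factorial (hcount lam T s b) : ℕ) : ℂ))⁻¹ •
    ∑ γ : ∀ s : Fin l, Equiv.Perm (Fin (lam s)),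
      ((∏ s : Fin l, (Equiv.Perm.sign (γ s) : ℤ) : ℤ) : ℂ) • tTensor k d N l lam T γ


-- ===================== auxiliary development =====================
namespace HWAux

/-- The list of boxes `(s, j)` feeding the `b`-th wedge factor. -/
def pairsL (l : ℕ) (lam : ℕ → ℕ) (T : ℕ → ℕ → ℕ) (b : ℕ) : List (ℕ × ℕ) :=
  (List.range l).flatMap fun s =>
    (List.range' (fcount lam T s (b - 1)) (hcount lam T s b)).map fun j => (s, j)

/-- `ιMulti` with values in the exterior power submodule. -/
def wedgeA (k N : ℕ) : (Fin N → ℂ) [⋀^Fin k]→ₗ[ℂ] ⋀[ℂ]^k (Fin N → ℂ) :=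
  (ExteriorAlgebra.ιMulti ℂ k).codRestrict _ fun v =>
    ExteriorAlgebra.ιMulti_range ℂ k (Set.mem_range_self v)

def famV (k N l : ℕ) (lam : ℕ → ℕ) (T : ℕ → ℕ → ℕ) (u : ℕ → ℕ → Fin N → ℂ)
    (b : ℕ) : Fin k → Fin N → ℂ :=
  fun i => ((pairsL l lam T b).map fun p => u p.1 p.2).getD i 0

def Fterm (k d N l : ℕ) (lam : ℕ → ℕ) (T : ℕ → ℕ → ℕ) (u : ℕ → ℕ → Fin N → ℂ) :
    ⨂[ℂ]^d (⋀[ℂ]^k (Fin N → ℂ)) :=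
  PiTensorProduct.tprod ℂ fun g : Fin d =>
    wedgeA k N (famV k N l lam T u ((g : ℕ) + 1))

def FF (k d N l : ℕ) (lam : ℕ → ℕ) (T : ℕ → ℕ → ℕ) (u : ℕ → ℕ → Fin N → ℂ) :
    ⨂[ℂ]^d (⋀[ℂ]^k (Fin N → ℂ)) :=
  ∑ γ : ∀ s : Fin l, Equiv.Perm (Fin (lam s)),
    ((∏ s : Fin l, (Equiv.Perm.sign (γ s) : ℤ) : ℤ) : ℂ) •
      Fterm k d N l lam T (fun s j => u s (gIdx l lam γ s j))

lemma factorList_eq (N l : ℕ) (lam : ℕ → ℕ) (T : ℕ → ℕ → ℕ)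
    (γ : ∀ s : Fin l, Equiv.Perm (Fin (lam s))) (b : ℕ) :
    factorList N l lam T γ b =
      (pairsL l lam T b).map fun p => E N (gIdx l lam γ p.1 p.2) := by
  unfold factorList pairsL
  rw [List.map_flatMap]
  simp [List.map_map, Function.comp_def]

lemma tTensor_eq (k d N l : ℕ) (lam : ℕ → ℕ) (T : ℕ → ℕ → ℕ)
    (γ : ∀ s : Fin l, Equiv.Perm (Fin (lam s))) :
    tTensor k d N l lam T γ =
      Fterm k d N l lam T (fun s j => E N (gIdx l lam γ s j)) := by
  unfold tTensor Fterm
  congr 1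
  funext g
  apply Subtype.ext
  show (ExteriorAlgebra.ιMulti ℂ k fun i : Fin k =>
      (factorList N l lam T γ ((g : ℕ) + 1)).getD i 0) = _
  rw [factorList_eq]
  rfl

lemma wT_eq (k d N l : ℕ) (lam : ℕ → ℕ) (T : ℕ → ℕ → ℕ) :
    wT k d N l lam T =
      (((∏ s ∈ Finset.range l, ∏ b ∈ Finset.Icc 1 d,
        Nat.factorial (hcount lam T s b) : ℕ) : ℂ))⁻¹ •
        FF k d N l lam T (fun _ j => E N j) := by
  unfold wT FF
  congr 1
  refine Finset.sum_congr rfl fun γ _ => ?_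
  rw [tTensor_eq]

lemma exteriorPowerMap_wedgeA (k N : ℕ) (f : (Fin N → ℂ) →ₗ[ℂ] (Fin N → ℂ))
    (v : Fin k → Fin N → ℂ) :
    exteriorPowerMap k f (wedgeA k N v) = wedgeA k N (fun i => f (v i)) := by
  apply Subtype.ext
  show (ExteriorAlgebra.map f).toLinearMap (ExteriorAlgebra.ιMulti ℂ k v) = _
  rw [AlgHom.toLinearMap_apply, ExteriorAlgebra.map_apply_ιMulti]
  rfl

lemma famV_map (k N l : ℕ) (lam : ℕ → ℕ) (T : ℕ → ℕ → ℕ)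
    (f : (Fin N → ℂ) →ₗ[ℂ] (Fin N → ℂ)) (u : ℕ → ℕ → Fin N → ℂ) (b : ℕ) (i : Fin k) :
    f (famV k N l lam T u b i) = famV k N l lam T (fun s j => f (u s j)) b i := by
  unfold famV
  by_cases h : (i : ℕ) < (pairsL l lam T b).length
  · rw [List.getD_eq_getElem _ _ (by simpa using h), List.getD_eq_getElem _ _ (by simpa using h)]
    simp
  · rw [List.getD_eq_default _ _ (by simpa using h), List.getD_eq_default _ _ (by simpa using h)]
    exact map_zero f

lemma map_Fterm (k d N l : ℕ) (lam : ℕ → ℕ) (T : ℕ → ℕ → ℕ)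
    (f : (Fin N → ℂ) →ₗ[ℂ] (Fin N → ℂ)) (u : ℕ → ℕ → Fin N → ℂ) :
    PiTensorProduct.map (fun _ : Fin d => exteriorPowerMap k f)
        (Fterm k d N l lam T u) =
      Fterm k d N l lam T (fun s j => f (u s j)) := by
  unfold Fterm
  rw [PiTensorProduct.map_tprod]
  congr 1
  funext g
  rw [exteriorPowerMap_wedgeA]
  congr 1
  funext i
  exact famV_map k N l lam T f u _ i

lemma map_FF (k d N l : ℕ) (lam : ℕ → ℕ) (T : ℕ → ℕ → ℕ)
    (f : (Fin N → ℂ) →ₗ[ℂ] (Fin N → ℂ)) (u : ℕ → ℕ → Fin N → ℂ) :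
    PiTensorProduct.map (fun _ : Fin d => exteriorPowerMap k f)
        (FF k d N l lam T u) =
      FF k d N l lam T (fun s j => f (u s j)) := by
  unfold FF
  rw [map_sum]
  refine Finset.sum_congr rfl fun γ _ => ?_
  rw [LinearMap.map_smul, map_Fterm]

-- combinatorial lemmas


lemma fcount_zero (lam : ℕ → ℕ) (T : ℕ → ℕ → ℕ) (s : ℕ) : fcount lam T s 0 = 0 := by
  simp [fcount]

lemma fcount_pred (lam : ℕ → ℕ) (T : ℕ → ℕ → ℕ) (s b : ℕ) (hb : 1 ≤ b) :
    fcount lam T s b = fcount lam T s (b - 1) + hcount lam T s b := by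
  obtain ⟨b', rfl⟩ : ∃ b', b = b' + 1 := ⟨b - 1, by omega⟩
  unfold fcount
  rw [show b' + 1 - 1 = b' from rfl, ← Finset.sum_Icc_succ_top (by omega : 1 ≤ b' + 1)]

lemma fcount_mono (lam : ℕ → ℕ) (T : ℕ → ℕ → ℕ) (s : ℕ) {b b' : ℕ} (h : b ≤ b') :
    fcount lam T s b ≤ fcount lam T s b' :=
  Finset.sum_le_sum_of_subset (Finset.Icc_subset_Icc_right h)

lemma fcount_top (d : ℕ) (lam : ℕ → ℕ) (T : ℕ → ℕ → ℕ)
    (hTd : ∀ s i, i < lam s → 1 ≤ T s i ∧ T s i ≤ d) (s : ℕ) :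
    fcount lam T s d = lam s := by
  unfold fcount hcount
  rw [← Finset.card_eq_sum_card_fiberwise (fun i hi => ?_), Finset.card_range]
  exact Finset.mem_Icc.2 (hTd s i (Finset.mem_range.1 hi))

lemma mem_pairsL {l : ℕ} {lam : ℕ → ℕ} {T : ℕ → ℕ → ℕ} {b : ℕ} {p : ℕ × ℕ} :
    p ∈ pairsL l lam T b ↔
      p.1 < l ∧ fcount lam T p.1 (b - 1) ≤ p.2 ∧
        p.2 < fcount lam T p.1 (b - 1) + hcount lam T p.1 b := by
  obtain ⟨s, j⟩ := p
  simp only [pairsL, List.mem_flatMap, List.mem_range, List.mem_map, List.mem_range']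
  constructor
  · rintro ⟨s', hs', j', ⟨i, hi, rfl⟩, h⟩
    rw [Prod.mk.injEq] at h
    obtain ⟨rfl, rfl⟩ := h
    exact ⟨hs', by omega, by omega⟩
  · rintro ⟨hs, h1, h2⟩
    exact ⟨s, hs, j, ⟨j - fcount lam T s (b-1), by omega, by omega⟩, rfl⟩

lemma list_sum_range (f : ℕ → ℕ) (n : ℕ) :
    ((List.range n).map f).sum = ∑ s ∈ Finset.range n, f s := by
  induction n with
  | zero => simp
  | succ n ih => rw [List.range_succ, List.map_append, List.sum_append,
      Finset.sum_range_succ, ih]; simp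

lemma pairsL_length (k d l : ℕ) (lam : ℕ → ℕ) (T : ℕ → ℕ → ℕ)
    (hT5 : ∀ b, 1 ≤ b → b ≤ d → ∑ s ∈ Finset.range l, hcount lam T s b = k)
    {b : ℕ} (hb1 : 1 ≤ b) (hbd : b ≤ d) :
    (pairsL l lam T b).length = k := by
  unfold pairsL
  rw [List.length_flatMap]
  rw [show (List.map (fun s =>
      ((List.range' (fcount lam T s (b - 1)) (hcount lam T s b)).map fun j => (s, j)).length)
      (List.range l)) = (List.range l).map fun s => hcount lam T s b from by
    simp [Function.comp_def]]
  rw [list_sum_range]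
  exact hT5 b hb1 hbd

lemma nodup_pairsL (l : ℕ) (lam : ℕ → ℕ) (T : ℕ → ℕ → ℕ) (b : ℕ) :
    (pairsL l lam T b).Nodup := by
  unfold pairsL
  rw [List.nodup_flatMap]
  constructor
  · intro s _
    exact (List.nodup_range').map (fun a b h => by
      simpa using (Prod.ext_iff.1 h).2)
  · refine List.Pairwise.imp ?_ (List.pairwise_lt_range (n := l))
    intro s s' hss
    intro p hp hp'
    simp only [List.mem_map] at hp hp'
    obtain ⟨j, _, rfl⟩ := hp
    obtain ⟨j', _, h⟩ := hp'
    exact absurd (Prod.ext_iff.1 h).1 (by omega)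

lemma pairsL_disjoint {l : ℕ} {lam : ℕ → ℕ} {T : ℕ → ℕ → ℕ} {b b' : ℕ}
    (hb : 1 ≤ b) (hb' : 1 ≤ b') (hne : b ≠ b') {p : ℕ × ℕ}
    (h : p ∈ pairsL l lam T b) (h' : p ∈ pairsL l lam T b') : False := by
  rw [mem_pairsL] at h h'
  rw [← fcount_pred lam T p.1 b hb] at h
  rw [← fcount_pred lam T p.1 b' hb'] at h'
  rcases Nat.lt_or_ge b b' with hlt | hge
  · have := fcount_mono lam T p.1 (show b ≤ b' - 1 by omega)
    omega
  · have hlt : b' < b := by omega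
    have := fcount_mono lam T p.1 (show b' ≤ b - 1 by omega)
    omega

lemma exists_block (d : ℕ) (lam : ℕ → ℕ) (T : ℕ → ℕ → ℕ)
    (hTd : ∀ s i, i < lam s → 1 ≤ T s i ∧ T s i ≤ d) (s : ℕ) {j : ℕ}
    (hj : j < lam s) :
    ∃ b, 1 ≤ b ∧ b ≤ d ∧ fcount lam T s (b - 1) ≤ j ∧ j < fcount lam T s b := by
  have hd : j < fcount lam T s d := by rw [fcount_top d lam T hTd s]; exact hj
  have hex : ∃ b, j < fcount lam T s b := ⟨d, hd⟩
  classical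
  let b := Nat.find hex
  have hb : j < fcount lam T s b := Nat.find_spec hex
  have hb1 : 1 ≤ b := by
    rcases Nat.eq_zero_or_pos b with h0 | h1
    · exfalso; have := hb; rw [h0, fcount_zero] at this; omega
    · exact h1
  have hbd : b ≤ d := Nat.find_le hd
  have hprev : ¬ j < fcount lam T s (b - 1) := Nat.find_min hex (by omega)
  exact ⟨b, hb1, hbd, by omega, hb⟩


-- ===== core machinery =====

def ext (N : ℕ) (lam : ℕ → ℕ) (u : ℕ → ℕ → Fin N → ℂ) (s₀ : ℕ)
    (w : Fin (lam s₀) → Fin N → ℂ) : ℕ → ℕ → Fin N → ℂ :=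
  fun s j => if h : s = s₀ ∧ j < lam s₀ then w ⟨j, h.2⟩ else u s j

lemma famV_congr' (k N l : ℕ) (lam : ℕ → ℕ) (T : ℕ → ℕ → ℕ) {u u' : ℕ → ℕ → Fin N → ℂ}
    (b : ℕ) (h : ∀ p ∈ pairsL l lam T b, u p.1 p.2 = u' p.1 p.2) :
    famV k N l lam T u b = famV k N l lam T u' b := by
  funext i
  unfold famV
  by_cases hi : (i : ℕ) < (pairsL l lam T b).length
  · rw [List.getD_eq_getElem _ _ (by simpa using hi), List.getD_eq_getElem _ _ (by simpa using hi)]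
    rw [List.getElem_map, List.getElem_map]
    exact h _ (List.getElem_mem _)
  · rw [List.getD_eq_default _ _ (by simpa using hi), List.getD_eq_default _ _ (by simpa using hi)]

lemma famV_update (k N l : ℕ) (lam : ℕ → ℕ) (T : ℕ → ℕ → ℕ)
    {u u' : ℕ → ℕ → Fin N → ℂ} {b : ℕ} (hlen : (pairsL l lam T b).length = k)
    (i₀ : Fin k) {p₀ : ℕ × ℕ}
    (hidx : (pairsL l lam T b)[(i₀ : ℕ)]'(by rw [hlen]; exact i₀.isLt) = p₀)
    (x : Fin N → ℂ) (hx : u' p₀.1 p₀.2 = x)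
    (hother : ∀ p ∈ pairsL l lam T b, p ≠ p₀ → u' p.1 p.2 = u p.1 p.2) :
    famV k N l lam T u' b = Function.update (famV k N l lam T u b) i₀ x := by
  funext i
  have hilen : (i : ℕ) < (pairsL l lam T b).length := by rw [hlen]; exact i.isLt
  by_cases hii : i = i₀
  · subst hii
    rw [Function.update_self]
    unfold famV
    rw [List.getD_eq_getElem _ _ (by simpa using hilen), List.getElem_map]
    rw [show (pairsL l lam T b)[(i : ℕ)]'hilen = p₀ from hidx]
    exact hx
  · rw [Function.update_of_ne hii]
    unfold famV
    rw [List.getD_eq_getElem _ _ (by simpa using hilen),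
      List.getD_eq_getElem _ _ (by simpa using hilen), List.getElem_map, List.getElem_map]
    have hne : (pairsL l lam T b)[(i : ℕ)]'hilen ≠ p₀ := by
      rw [← hidx]
      intro hcontra
      exact hii (Fin.ext (((nodup_pairsL l lam T b).getElem_inj_iff).1 hcontra))
    exact hother _ (List.getElem_mem _) hne

lemma gIdx_eq (l : ℕ) (lam : ℕ → ℕ) (γ : ∀ s : Fin l, Equiv.Perm (Fin (lam s)))
    {s j : ℕ} (hs : s < l) (hj : j < lam s) :
    gIdx l lam γ s j = ((γ ⟨s, hs⟩) ⟨j, hj⟩ : ℕ) := by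
  unfold gIdx; rw [dif_pos hs, dif_pos hj]

lemma pairs_snd_lt (d l : ℕ) (lam : ℕ → ℕ) (T : ℕ → ℕ → ℕ)
    (hTd : ∀ s i, i < lam s → 1 ≤ T s i ∧ T s i ≤ d) {b : ℕ} {p : ℕ × ℕ}
    (hb1 : 1 ≤ b) (hbd : b ≤ d) (hp : p ∈ pairsL l lam T b) : p.2 < lam p.1 := by
  obtain ⟨h1, h2, h3⟩ := mem_pairsL.1 hp
  have e1 := fcount_pred lam T p.1 b hb1
  have e2 := fcount_mono lam T p.1 hbd
  have e3 := fcount_top d lam T hTd p.1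
  omega

lemma ext_update_val (N l : ℕ) (lam : ℕ → ℕ) (u : ℕ → ℕ → Fin N → ℂ)
    {s₀ : ℕ} (hs₀ : s₀ < l) (γ : ∀ s : Fin l, Equiv.Perm (Fin (lam s)))
    (j₀ : Fin (lam s₀)) (w : Fin (lam s₀) → Fin N → ℂ) (x : Fin N → ℂ)
    {s j : ℕ} (hs : s < l) (hj : j < lam s)
    (hne : (s, j) ≠ (s₀, (((γ ⟨s₀, hs₀⟩)⁻¹ j₀ : Fin (lam s₀)) : ℕ))) :
    ext N lam u s₀ (Function.update w j₀ x) s (gIdx l lam γ s j) =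
    ext N lam u s₀ w s (gIdx l lam γ s j) := by
  rw [gIdx_eq l lam γ hs hj]
  by_cases hss : s = s₀
  · subst hss
    have hr : ((γ ⟨s, hs⟩) ⟨j, hj⟩ : Fin (lam s)) ≠ j₀ := by
      intro hcontra
      apply hne
      have : (⟨j, hj⟩ : Fin (lam s)) = (γ ⟨s, hs₀⟩)⁻¹ j₀ := by
        rw [← hcontra]
        exact (Equiv.symm_apply_apply _ _).symm
      rw [Prod.mk.injEq]
      exact ⟨rfl, congrArg Fin.val this⟩
    unfold ext
    rw [dif_pos ⟨rfl, ((γ ⟨s, hs⟩) ⟨j, hj⟩).isLt⟩, dif_pos ⟨rfl, ((γ ⟨s, hs⟩) ⟨j, hj⟩).isLt⟩]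
    rw [Fin.eta]
    rw [Function.update_of_ne hr]
  · unfold ext
    rw [dif_neg (by tauto), dif_neg (by tauto)]

lemma key_update (k d N l : ℕ) (lam : ℕ → ℕ) (T : ℕ → ℕ → ℕ)
    (hTd : ∀ s i, i < lam s → 1 ≤ T s i ∧ T s i ≤ d)
    (hT5 : ∀ b, 1 ≤ b → b ≤ d → ∑ s ∈ Finset.range l, hcount lam T s b = k)
    (u : ℕ → ℕ → Fin N → ℂ) {s₀ : ℕ} (hs₀ : s₀ < l)
    (γ : ∀ s : Fin l, Equiv.Perm (Fin (lam s))) (j₀ : Fin (lam s₀)) :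
    ∃ (g₀ : Fin d) (i₀ : Fin k), ∀ (w : Fin (lam s₀) → Fin N → ℂ) (x : Fin N → ℂ),
      (fun g : Fin d => wedgeA k N (famV k N l lam T
          (fun s j => ext N lam u s₀ (Function.update w j₀ x) s (gIdx l lam γ s j)) ((g : ℕ) + 1)))
        = Function.update
            (fun g : Fin d => wedgeA k N (famV k N l lam T
              (fun s j => ext N lam u s₀ w s (gIdx l lam γ s j)) ((g : ℕ) + 1)))
            g₀
            (wedgeA k N (Function.update
              (famV k N l lam T (fun s j => ext N lam u s₀ w s (gIdx l lam γ s j))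
                ((g₀ : ℕ) + 1)) i₀ x)) := by
  classical
  set jn : Fin (lam s₀) := (γ ⟨s₀, hs₀⟩)⁻¹ j₀ with hjn
  obtain ⟨b₀, hb1, hbd, hf1, hf2⟩ := exists_block d lam T hTd s₀ jn.isLt
  have hmem : ((s₀, (jn : ℕ)) : ℕ × ℕ) ∈ pairsL l lam T b₀ := by
    rw [mem_pairsL]
    refine ⟨hs₀, hf1, ?_⟩
    rw [← fcount_pred lam T s₀ b₀ hb1]; exact hf2
  have hlen : (pairsL l lam T b₀).length = k := pairsL_length k d l lam T hT5 hb1 hbd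
  obtain ⟨i, hi, hgi⟩ := List.getElem_of_mem hmem
  have hg₀lt : b₀ - 1 < d := by omega
  have hi₀lt : i < k := by omega
  refine ⟨⟨b₀ - 1, hg₀lt⟩, ⟨i, hi₀lt⟩, fun w x => ?_⟩
  have hb₀eq : ((⟨b₀ - 1, hg₀lt⟩ : Fin d) : ℕ) + 1 = b₀ := by
    show b₀ - 1 + 1 = b₀; omega
  funext g
  by_cases hg : g = ⟨b₀ - 1, hg₀lt⟩
  · subst hg
    rw [Function.update_self]
    congr 1
    rw [hb₀eq]
    refine famV_update k N l lam T hlen ⟨i, hi₀lt⟩ (p₀ := (s₀, (jn : ℕ))) hgi x ?_ ?_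
    · show ext N lam u s₀ (Function.update w j₀ x) s₀ (gIdx l lam γ s₀ (jn : ℕ)) = x
      rw [gIdx_eq l lam γ hs₀ jn.isLt]
      have h1 : (γ ⟨s₀, hs₀⟩) ⟨(jn : ℕ), jn.isLt⟩ = j₀ := by
        rw [Fin.eta]
        exact Equiv.apply_symm_apply _ _
      rw [h1]
      unfold ext
      rw [dif_pos ⟨rfl, j₀.isLt⟩, Fin.eta, Function.update_self]
    · intro p hp hne
      obtain ⟨s, j⟩ := p
      have h2 := pairs_snd_lt d l lam T hTd hb1 hbd hp
      have h1 := (mem_pairsL.1 hp).1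
      exact ext_update_val N l lam u hs₀ γ j₀ w x h1 h2 hne
  · rw [Function.update_of_ne hg]
    congr 1
    apply famV_congr'
    intro p hp
    obtain ⟨s, j⟩ := p
    have hbg1 : 1 ≤ (g : ℕ) + 1 := by omega
    have hbgd : (g : ℕ) + 1 ≤ d := by omega
    have h1 := (mem_pairsL.1 hp).1
    have h2 := pairs_snd_lt d l lam T hTd hbg1 hbgd hp
    refine ext_update_val N l lam u hs₀ γ j₀ w x h1 h2 ?_
    intro hcontra
    rw [hcontra] at hp
    refine pairsL_disjoint hbg1 hb1 ?_ hp hmem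
    intro hbb
    apply hg
    apply Fin.ext
    show (g : ℕ) = b₀ - 1
    omega

-- ===== the column alternating map =====

lemma ext_apply_lt (N : ℕ) (lam : ℕ → ℕ) (u : ℕ → ℕ → Fin N → ℂ) {s₀ : ℕ}
    (w : Fin (lam s₀) → Fin N → ℂ) {j : ℕ} (hj : j < lam s₀) :
    ext N lam u s₀ w s₀ j = w ⟨j, hj⟩ := by
  unfold ext
  rw [dif_pos ⟨rfl, hj⟩]

lemma FF_ext_update_add (k d N l : ℕ) (lam : ℕ → ℕ) (T : ℕ → ℕ → ℕ)
    (hTd : ∀ s i, i < lam s → 1 ≤ T s i ∧ T s i ≤ d)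
    (hT5 : ∀ b, 1 ≤ b → b ≤ d → ∑ s ∈ Finset.range l, hcount lam T s b = k)
    (u : ℕ → ℕ → Fin N → ℂ) {s₀ : ℕ} (hs₀ : s₀ < l)
    (w : Fin (lam s₀) → Fin N → ℂ) (j₀ : Fin (lam s₀)) (x y : Fin N → ℂ) :
    FF k d N l lam T (ext N lam u s₀ (Function.update w j₀ (x + y))) =
      FF k d N l lam T (ext N lam u s₀ (Function.update w j₀ x)) +
      FF k d N l lam T (ext N lam u s₀ (Function.update w j₀ y)) := by
  unfold FF
  rw [← Finset.sum_add_distrib]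
  refine Finset.sum_congr rfl fun γ _ => ?_
  obtain ⟨g₀, i₀, hkey⟩ := key_update k d N l lam T hTd hT5 u hs₀ γ j₀
  unfold Fterm
  rw [hkey w (x + y), hkey w x, hkey w y]
  rw [AlternatingMap.map_update_add, MultilinearMap.map_update_add, smul_add]

lemma FF_ext_update_smul (k d N l : ℕ) (lam : ℕ → ℕ) (T : ℕ → ℕ → ℕ)
    (hTd : ∀ s i, i < lam s → 1 ≤ T s i ∧ T s i ≤ d)
    (hT5 : ∀ b, 1 ≤ b → b ≤ d → ∑ s ∈ Finset.range l, hcount lam T s b = k)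
    (u : ℕ → ℕ → Fin N → ℂ) {s₀ : ℕ} (hs₀ : s₀ < l)
    (w : Fin (lam s₀) → Fin N → ℂ) (j₀ : Fin (lam s₀)) (c : ℂ) (x : Fin N → ℂ) :
    FF k d N l lam T (ext N lam u s₀ (Function.update w j₀ (c • x))) =
      c • FF k d N l lam T (ext N lam u s₀ (Function.update w j₀ x)) := by
  unfold FF
  rw [Finset.smul_sum]
  refine Finset.sum_congr rfl fun γ _ => ?_
  obtain ⟨g₀, i₀, hkey⟩ := key_update k d N l lam T hTd hT5 u hs₀ γ j₀
  unfold Fterm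
  rw [hkey w (c • x), hkey w x]
  rw [AlternatingMap.map_update_smul, MultilinearMap.map_update_smul]
  rw [smul_comm]

lemma FF_ext_eq_zero (k d N l : ℕ) (lam : ℕ → ℕ) (T : ℕ → ℕ → ℕ)
    (u : ℕ → ℕ → Fin N → ℂ) {s₀ : ℕ} (hs₀ : s₀ < l)
    (w : Fin (lam s₀) → Fin N → ℂ) (i j : Fin (lam s₀)) (hw : w i = w j) (hij : i ≠ j) :
    FF k d N l lam T (ext N lam u s₀ w) = 0 := by
  classical
  set s₀' : Fin l := ⟨s₀, hs₀⟩ with hs₀'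
  set τ : Equiv.Perm (Fin (lam s₀)) := Equiv.swap i j with hτ
  set e : (∀ s : Fin l, Equiv.Perm (Fin (lam s))) → (∀ s : Fin l, Equiv.Perm (Fin (lam s))) :=
    fun γ => Function.update γ s₀' (τ * γ s₀') with he
  have hswap : ∀ z, w (τ z) = w z := by
    intro z
    rcases eq_or_ne z i with rfl | h1
    · rw [hτ, Equiv.swap_apply_left]; exact hw.symm
    · rcases eq_or_ne z j with rfl | h2
      · rw [hτ, Equiv.swap_apply_right]; exact hw
      · rw [hτ, Equiv.swap_apply_of_ne_of_ne h1 h2]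
  have hinv : Function.Involutive e := by
    intro γ
    funext s
    by_cases hs : s = s₀'
    · subst hs
      simp only [he, Function.update_self, ← mul_assoc]
      rw [hτ, Equiv.swap_mul_self, one_mul]
    · simp only [he, Function.update_of_ne hs]
  have hterm : ∀ γ,
      (fun s j' => ext N lam u s₀ w s (gIdx l lam (e γ) s j')) =
      (fun s j' => ext N lam u s₀ w s (gIdx l lam γ s j')) := by
    intro γ
    funext s j'
    unfold gIdx
    by_cases hsl : s < l
    · rw [dif_pos hsl, dif_pos hsl]
      by_cases hj' : j' < lam s
      · rw [dif_pos hj', dif_pos hj']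
        by_cases hss : s = s₀
        · subst hss
          have hval : (e γ) ⟨s, hsl⟩ = τ * γ s₀' := Function.update_self s₀' (τ * γ s₀') γ
          rw [hval]
          have hmul : (τ * γ s₀') ⟨j', hj'⟩ = τ (γ s₀' ⟨j', hj'⟩) := rfl
          rw [hmul]
          rw [ext_apply_lt N lam u w (τ (γ s₀' ⟨j', hj'⟩)).isLt,
            ext_apply_lt N lam u w (γ (⟨s, hsl⟩ : Fin l) ⟨j', hj'⟩).isLt]
          rw [Fin.eta, Fin.eta]
          exact hswap _
        · have hne : (⟨s, hsl⟩ : Fin l) ≠ s₀' := by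
            intro hc; exact hss (congrArg Fin.val hc)
          simp only [he, Function.update_of_ne hne]
      · rw [dif_neg hj', dif_neg hj']
    · rw [dif_neg hsl, dif_neg hsl]
  have hsign : ∀ γ, (∏ s : Fin l, (Equiv.Perm.sign ((e γ) s) : ℤ)) =
      -(∏ s : Fin l, (Equiv.Perm.sign (γ s) : ℤ)) := by
    intro γ
    have h1 : (fun s : Fin l => ((Equiv.Perm.sign ((e γ) s) : ℤ))) =
        Function.update (fun s : Fin l => ((Equiv.Perm.sign (γ s) : ℤ))) s₀'
          ((Equiv.Perm.sign (τ * γ s₀') : ℤ)) := by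
      funext s
      by_cases hs : s = s₀'
      · subst hs
        simp only [he, Function.update_self]
      · simp only [he, Function.update_of_ne hs]
    rw [h1, Finset.prod_update_of_mem (Finset.mem_univ s₀')]
    rw [← Finset.mul_prod_erase Finset.univ _ (Finset.mem_univ s₀')]
    have h2 : ((Equiv.Perm.sign (τ * γ s₀') : ℤ)) = -((Equiv.Perm.sign (γ s₀') : ℤ)) := by
      rw [map_mul]
      rw [hτ, Equiv.Perm.sign_swap hij]
      simp
    rw [h2, neg_mul, Finset.sdiff_singleton_eq_erase]
  have hFF : FF k d N l lam T (ext N lam u s₀ w) =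
      -FF k d N l lam T (ext N lam u s₀ w) := by
    conv_lhs => rw [FF]
    rw [← Equiv.sum_comp (Function.Involutive.toPerm e hinv)
      (fun γ => ((∏ s : Fin l, (Equiv.Perm.sign (γ s) : ℤ) : ℤ) : ℂ) •
        Fterm k d N l lam T (fun s j => ext N lam u s₀ w s (gIdx l lam γ s j)))]
    have : ∀ γ, ((∏ s : Fin l, (Equiv.Perm.sign ((Function.Involutive.toPerm e hinv) γ s) : ℤ) : ℤ) : ℂ) •
        Fterm k d N l lam T (fun s j => ext N lam u s₀ w s
          (gIdx l lam ((Function.Involutive.toPerm e hinv) γ) s j)) =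
        -(((∏ s : Fin l, (Equiv.Perm.sign (γ s) : ℤ) : ℤ) : ℂ) •
        Fterm k d N l lam T (fun s j => ext N lam u s₀ w s (gIdx l lam γ s j))) := by
      intro γ
      have hcoe : (Function.Involutive.toPerm e hinv) γ = e γ := rfl
      rw [hcoe, hterm γ, hsign γ, Int.cast_neg]
      exact neg_smul (((∏ s : Fin l, (Equiv.Perm.sign (γ s) : ℤ)) : ℤ) : ℂ)
        (Fterm k d N l lam T fun s j => ext N lam u s₀ w s (gIdx l lam γ s j))
    rw [Finset.sum_congr rfl fun γ _ => this γ]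
    rw [Finset.sum_neg_distrib]
    conv_rhs => rw [FF]
  have h2 : (2 : ℂ) • FF k d N l lam T (ext N lam u s₀ w) = 0 := by
    rw [two_smul]
    nth_rewrite 1 [hFF]
    exact neg_add_cancel _
  have := smul_eq_zero.mp h2
  rcases this with h | h
  · exact absurd h (by norm_num)
  · exact h

def colA (k d N l : ℕ) (lam : ℕ → ℕ) (T : ℕ → ℕ → ℕ)
    (hTd : ∀ s i, i < lam s → 1 ≤ T s i ∧ T s i ≤ d)
    (hT5 : ∀ b, 1 ≤ b → b ≤ d → ∑ s ∈ Finset.range l, hcount lam T s b = k)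
    (u : ℕ → ℕ → Fin N → ℂ) {s₀ : ℕ} (hs₀ : s₀ < l) :
    AlternatingMap ℂ (Fin N → ℂ) (⨂[ℂ]^d (⋀[ℂ]^k (Fin N → ℂ))) (Fin (lam s₀)) where
  toFun w := FF k d N l lam T (ext N lam u s₀ w)
  map_update_add' := by
    intro dec w j₀ x y
    have hdec : dec = instDecidableEqFin _ := Subsingleton.elim _ _
    subst hdec
    exact FF_ext_update_add k d N l lam T hTd hT5 u hs₀ w j₀ x y
  map_update_smul' := by
    intro dec w j₀ c x
    have hdec : dec = instDecidableEqFin _ := Subsingleton.elim _ _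
    subst hdec
    exact FF_ext_update_smul k d N l lam T hTd hT5 u hs₀ w j₀ c x
  map_eq_zero_of_eq' := fun w i j hw hij =>
    FF_ext_eq_zero k d N l lam T u hs₀ w i j hw hij

lemma alt_det {V M₂ : Type*} [AddCommGroup V] [Module ℂ V] [AddCommGroup M₂] [Module ℂ M₂]
    {m : ℕ} (A : AlternatingMap ℂ V M₂ (Fin m)) (Mat : Matrix (Fin m) (Fin m) ℂ)
    (v : Fin m → V) :
    A (fun j => ∑ i, Mat i j • v i) = Mat.det • A v := by
  classical
  have h1 : A (fun j => ∑ i ∈ Finset.univ, Mat i j • v i) =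
      ∑ r ∈ Fintype.piFinset (fun _ : Fin m => (Finset.univ : Finset (Fin m))),
        A (fun j => Mat (r j) j • v (r j)) :=
    A.toMultilinearMap.map_sum_finset (fun j i => Mat i j • v i) (fun _ => Finset.univ)
  rw [show (fun j => ∑ i, Mat i j • v i) = (fun j => ∑ i ∈ Finset.univ, Mat i j • v i) from rfl]
  rw [h1, Fintype.piFinset_univ]
  have h2 : ∀ r : Fin m → Fin m, A (fun j => Mat (r j) j • v (r j)) =
      (∏ j, Mat (r j) j) • A (v ∘ r) :=
    fun r => A.toMultilinearMap.map_smul_univ (fun j => Mat (r j) j) (fun j => v (r j))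
  rw [Finset.sum_congr rfl fun r _ => h2 r]
  have hvanish : ∀ r : Fin m → Fin m, ¬ Function.Bijective r →
      (∏ j, Mat (r j) j) • A (v ∘ r) = 0 := by
    intro r hr
    have hninj : ¬ Function.Injective r := fun hinj => hr (Finite.injective_iff_bijective.1 hinj)
    obtain ⟨a, b, hab, hne⟩ := Function.not_injective_iff.1 hninj
    rw [A.map_eq_zero_of_eq (v ∘ r) (congrArg v hab) hne, smul_zero]
  have hsplit : ∑ r : Fin m → Fin m, (∏ j, Mat (r j) j) • A (v ∘ r) =
      ∑ r ∈ Finset.univ.filter (fun r : Fin m → Fin m => Function.Bijective r),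
        (∏ j, Mat (r j) j) • A (v ∘ r) := by
    refine (Finset.sum_subset (Finset.filter_subset _ _) fun r _ hr => ?_).symm
    exact hvanish r (by simpa using hr)
  rw [hsplit]
  have hperm : ∑ r ∈ Finset.univ.filter (fun r : Fin m → Fin m => Function.Bijective r),
      (∏ j, Mat (r j) j) • A (v ∘ r) =
      ∑ σ : Equiv.Perm (Fin m), (∏ j, Mat (σ j) j) • A (v ∘ σ) := by
    refine Finset.sum_bij (fun p h => Equiv.ofBijective p (Finset.mem_filter.1 h).2)
      (fun _ _ => Finset.mem_univ _) (fun _ _ _ _ h => by injection h)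
      (fun σ _ => ⟨σ, Finset.mem_filter.2 ⟨Finset.mem_univ _, σ.bijective⟩,
        Equiv.coe_fn_injective rfl⟩) (fun _ _ => rfl)
  rw [hperm]
  have hP : ∀ σ : Equiv.Perm (Fin m), (∏ j, Mat (σ j) j) • A (v ∘ σ) =
      (Equiv.Perm.sign σ • ∏ j, Mat (σ j) j) • A v := by
    intro σ
    rw [AlternatingMap.map_perm]
    rcases Int.units_eq_one_or (Equiv.Perm.sign σ) with h | h <;>
      simp [h, Units.smul_def, neg_smul, smul_neg]
  rw [Finset.sum_congr rfl fun σ _ => hP σ, Matrix.det_apply, Finset.sum_smul]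

-- ===== column operations on FF =====

lemma FF_congr (k d N l : ℕ) (lam : ℕ → ℕ) (T : ℕ → ℕ → ℕ)
    (hTd : ∀ s i, i < lam s → 1 ≤ T s i ∧ T s i ≤ d)
    {u u' : ℕ → ℕ → Fin N → ℂ}
    (h : ∀ s j, s < l → j < lam s → u s j = u' s j) :
    FF k d N l lam T u = FF k d N l lam T u' := by
  unfold FF
  refine Finset.sum_congr rfl fun γ _ => ?_
  congr 1
  unfold Fterm
  congr 1
  funext g
  congr 1
  apply famV_congr'
  intro p hp
  obtain ⟨s, j⟩ := p
  have hb1 : 1 ≤ (g : ℕ) + 1 := by omega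
  have hbd : (g : ℕ) + 1 ≤ d := by omega
  have hs := (mem_pairsL.1 hp).1
  have hj := pairs_snd_lt d l lam T hTd hb1 hbd hp
  show u s (gIdx l lam γ s j) = u' s (gIdx l lam γ s j)
  rw [gIdx_eq l lam γ hs hj]
  exact h s _ hs (Fin.isLt _)

lemma ext_self (N : ℕ) (lam : ℕ → ℕ) (u : ℕ → ℕ → Fin N → ℂ) (s₀ : ℕ) :
    ext N lam u s₀ (fun j : Fin (lam s₀) => u s₀ (j : ℕ)) = u := by
  funext s j
  unfold ext
  split
  · next h =>
      obtain ⟨rfl, h2⟩ := h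
      rfl
  · rfl

lemma FF_col (k d N l : ℕ) (lam : ℕ → ℕ) (T : ℕ → ℕ → ℕ)
    (hTd : ∀ s i, i < lam s → 1 ≤ T s i ∧ T s i ≤ d)
    (hT5 : ∀ b, 1 ≤ b → b ≤ d → ∑ s ∈ Finset.range l, hcount lam T s b = k)
    (u : ℕ → ℕ → Fin N → ℂ) {s₀ : ℕ} (hs₀ : s₀ < l)
    (Mat : Matrix (Fin (lam s₀)) (Fin (lam s₀)) ℂ) :
    FF k d N l lam T (ext N lam u s₀ (fun jj => ∑ i, Mat i jj • u s₀ (i : ℕ))) =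
      Mat.det • FF k d N l lam T u := by
  have h := alt_det (M₂ := ⨂[ℂ]^d (⋀[ℂ]^k (Fin N → ℂ))) (colA k d N l lam T hTd hT5 u hs₀) Mat (fun i => u s₀ (i : ℕ))
  have h1 : (colA k d N l lam T hTd hT5 u hs₀) (fun jj => ∑ i, Mat i jj • u s₀ (i : ℕ)) =
      FF k d N l lam T (ext N lam u s₀ (fun jj => ∑ i, Mat i jj • u s₀ (i : ℕ))) := rfl
  have h2 : (colA k d N l lam T hTd hT5 u hs₀) (fun i => u s₀ (i : ℕ)) =
      FF k d N l lam T (ext N lam u s₀ (fun i => u s₀ (i : ℕ))) := rfl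
  rw [h1, h2, ext_self] at h
  exact h

lemma FF_step (k d N l : ℕ) (lam : ℕ → ℕ) (T : ℕ → ℕ → ℕ)
    (hTd : ∀ s i, i < lam s → 1 ≤ T s i ∧ T s i ≤ d)
    (hT5 : ∀ b, 1 ≤ b → b ≤ d → ∑ s ∈ Finset.range l, hcount lam T s b = k)
    (f : (Fin N → ℂ) →ₗ[ℂ] (Fin N → ℂ)) {r : ℕ} (hr : r < l)
    (Mat : Matrix (Fin (lam r)) (Fin (lam r)) ℂ)
    (hMat : ∀ j : Fin (lam r), f (E N (j : ℕ)) = ∑ i, Mat i j • E N (i : ℕ)) :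
    FF k d N l lam T (fun s j => if s < r + 1 then f (E N j) else E N j) =
      Mat.det • FF k d N l lam T (fun s j => if s < r then f (E N j) else E N j) := by
  set u : ℕ → ℕ → Fin N → ℂ := fun s j => if s < r then f (E N j) else E N j with hu
  have hcol := FF_col k d N l lam T hTd hT5 u hr Mat
  have hur : ∀ i : ℕ, u r i = E N i := fun i => by rw [hu]; simp
  have hfun : (fun jj : Fin (lam r) => ∑ i, Mat i jj • u r (i : ℕ)) =
      (fun jj : Fin (lam r) => f (E N (jj : ℕ))) := by
    funext jj
    rw [hMat jj]
    exact Finset.sum_congr rfl fun i _ => by rw [hur]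
  rw [hfun] at hcol
  rw [← hcol]
  apply FF_congr k d N l lam T hTd
  intro s j hs hj
  unfold ext
  by_cases hsr : s = r
  · rw [dif_pos ⟨hsr, hsr ▸ hj⟩]
    show (if s < r + 1 then f (E N j) else E N j) = f (E N j)
    rw [if_pos (by omega)]
  · rw [dif_neg (by tauto)]
    show (if s < r + 1 then f (E N j) else E N j) = if s < r then f (E N j) else E N j
    by_cases hsr' : s < r
    · rw [if_pos (by omega), if_pos hsr']
    · rw [if_neg (by omega), if_neg hsr']

lemma FF_chain (k d N l : ℕ) (lam : ℕ → ℕ) (T : ℕ → ℕ → ℕ)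
    (hTd : ∀ s i, i < lam s → 1 ≤ T s i ∧ T s i ≤ d)
    (hT5 : ∀ b, 1 ≤ b → b ≤ d → ∑ s ∈ Finset.range l, hcount lam T s b = k)
    (f : (Fin N → ℂ) →ₗ[ℂ] (Fin N → ℂ)) (D : ℕ → ℂ)
    (hD : ∀ r, r < l → ∃ Mat : Matrix (Fin (lam r)) (Fin (lam r)) ℂ,
      Mat.det = D r ∧ ∀ j : Fin (lam r), f (E N (j : ℕ)) = ∑ i, Mat i j • E N (i : ℕ)) :
    FF k d N l lam T (fun _ j => f (E N j)) =
      (∏ r ∈ Finset.range l, D r) • FF k d N l lam T (fun _ j => E N j) := by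
  have hmain : ∀ r, r ≤ l →
      FF k d N l lam T (fun s j => if s < r then f (E N j) else E N j) =
      (∏ r' ∈ Finset.range r, D r') • FF k d N l lam T (fun _ j => E N j) := by
    intro r
    induction r with
    | zero =>
      intro _
      rw [show (fun (s j : ℕ) => if s < 0 then f (E N j) else E N j) =
        (fun (_ j : ℕ) => E N j) from funext fun s => funext fun j => if_neg (by omega)]
      rw [Finset.range_zero, Finset.prod_empty, one_smul]
    | succ r ih =>
      intro hrl
      obtain ⟨Mat, hdet, hMat⟩ := hD r (by omega)
      rw [FF_step k d N l lam T hTd hT5 f (by omega) Mat hMat, ih (by omega),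
        smul_smul, hdet, Finset.prod_range_succ, mul_comm]
  have hl := hmain l le_rfl
  rw [← hl]
  apply FF_congr k d N l lam T hTd
  intro s j hs hj
  rw [if_pos hs]

-- ===== matrix block lemmas =====

lemma unipotent_block (N : ℕ) (g : Matrix (Fin N) (Fin N) ℂ)
    (hg1 : ∀ i j : Fin N, j < i → g i j = 0) (hg2 : ∀ i, g i i = 1)
    (m : ℕ) (hm : m ≤ N) :
    ∃ Mat : Matrix (Fin m) (Fin m) ℂ, Mat.det = 1 ∧
      ∀ j : Fin m, Matrix.toLin' g (E N (j : ℕ)) = ∑ i, Mat i j • E N (i : ℕ) := by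
  classical
  set Mat : Matrix (Fin m) (Fin m) ℂ :=
    fun i j => g ⟨(i : ℕ), by omega⟩ ⟨(j : ℕ), by omega⟩ with hMatdef
  refine ⟨Mat, ?_, ?_⟩
  · rw [Matrix.det_of_upperTriangular (by
      intro i j hij
      refine hg1 _ _ ?_
      rw [Fin.lt_def]
      show (j : ℕ) < (i : ℕ)
      exact Fin.lt_def.1 hij)]
    exact Finset.prod_eq_one fun i _ => hg2 _
  · intro j
    have hjlt : (j : ℕ) < N := by omega
    funext i'
    rw [Matrix.toLin'_apply]
    show ∑ i'', g i' i'' * E N (j : ℕ) i'' = (∑ i, Mat i j • E N (i : ℕ)) i'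
    rw [Finset.sum_apply]
    simp only [E, Pi.smul_apply, smul_eq_mul, mul_ite, mul_one, mul_zero]
    have hiff1 : ∀ i'' : Fin N, ((i'' : ℕ) = (j : ℕ)) ↔ (i'' = (⟨(j : ℕ), hjlt⟩ : Fin N)) :=
      fun i'' => ⟨fun h => Fin.ext h, fun h => congrArg Fin.val h⟩
    simp only [hiff1]
    rw [Finset.sum_ite_eq' Finset.univ (⟨(j : ℕ), hjlt⟩ : Fin N) (fun i'' => g i' i''),
      if_pos (Finset.mem_univ _)]
    by_cases hi' : (i' : ℕ) < m
    · have hiff2 : ∀ i : Fin m, ((i' : ℕ) = (i : ℕ)) ↔ ((⟨(i' : ℕ), hi'⟩ : Fin m) = i) :=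
        fun i => ⟨fun h => Fin.ext h, fun h => congrArg Fin.val h⟩
      simp only [hiff2]
      rw [Finset.sum_ite_eq Finset.univ (⟨(i' : ℕ), hi'⟩ : Fin m) (fun i => Mat i j),
        if_pos (Finset.mem_univ _)]
    · rw [Finset.sum_eq_zero (fun i _ => if_neg (fun h => hi' (by rw [h]; exact i.isLt)))]
      refine hg1 i' ⟨(j : ℕ), hjlt⟩ ?_
      rw [Fin.lt_def]
      show (j : ℕ) < (i' : ℕ)
      have := j.isLt
      omega

lemma diagonal_block (N : ℕ) (t : Fin N → ℂ) (m : ℕ) (hm : m ≤ N) :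
    ∃ Mat : Matrix (Fin m) (Fin m) ℂ,
      Mat.det = (∏ i : Fin m, t ⟨(i : ℕ), by omega⟩) ∧
      ∀ j : Fin m, Matrix.toLin' (Matrix.diagonal t) (E N (j : ℕ)) =
        ∑ i, Mat i j • E N (i : ℕ) := by
  refine ⟨Matrix.diagonal (fun i : Fin m => t ⟨(i : ℕ), by omega⟩), ?_, ?_⟩
  · rw [Matrix.det_diagonal]
  · intro j
    rw [Finset.sum_eq_single j
      (fun b _ hb => by rw [Matrix.diagonal_apply_ne _ hb, zero_smul])
      (fun hc => absurd (Finset.mem_univ _) hc),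
      Matrix.diagonal_apply_eq]
    funext i'
    rw [Matrix.toLin'_apply, Matrix.mulVec_diagonal, Pi.smul_apply, smul_eq_mul]
    show t i' * E N (j : ℕ) i' = _ * E N (j : ℕ) i'
    simp only [E]
    by_cases hc : (i' : ℕ) = (j : ℕ)
    · rw [if_pos hc, mul_one, mul_one]
      exact congrArg t (Fin.ext hc)
    · rw [if_neg hc, mul_zero, mul_zero]

-- ===== diagonal scalar bookkeeping =====

def tExt (N : ℕ) (t : Fin N → ℂ) : ℕ → ℂ := fun n => if h : n < N then t ⟨n, h⟩ else 1

lemma Dprod (N l : ℕ) (lam : ℕ → ℕ) (hNl : ∀ r, r < l → lam r ≤ N) (t : Fin N → ℂ) :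
    (∏ r ∈ Finset.range l, ∏ n ∈ Finset.range (lam r), tExt N t n) =
    ∏ i : Fin N, t i ^ (((Finset.range l).filter fun j => (i : ℕ) + 1 ≤ lam j).card) := by
  classical
  have h1 : ∀ r ∈ Finset.range l, ∏ n ∈ Finset.range (lam r), tExt N t n =
      ∏ n ∈ Finset.range N, (if n + 1 ≤ lam r then tExt N t n else 1) := by
    intro r hr
    rw [Finset.prod_congr rfl (fun n hn => (if_pos (Finset.mem_range.1 hn)).symm)]
    refine Finset.prod_subset ?_ (fun n hn hnn => if_neg (fun hc => hnn (Finset.mem_range.2 hc)))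
    exact Finset.range_subset_range.2 (hNl r (Finset.mem_range.1 hr))
  rw [Finset.prod_congr rfl h1, Finset.prod_comm]
  have h2 : ∀ n ∈ Finset.range N, (∏ r ∈ Finset.range l, if n + 1 ≤ lam r then tExt N t n else 1) =
      tExt N t n ^ (((Finset.range l).filter fun j => n + 1 ≤ lam j).card) := by
    intro n _
    rw [← Finset.prod_filter]
    exact Finset.prod_const _
  rw [Finset.prod_congr rfl h2]
  rw [Finset.prod_range]
  refine Finset.prod_congr rfl fun i _ => ?_
  congr 1
  unfold tExt
  rw [dif_pos i.isLt, Fin.eta]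

end HWAux

open HWAux in
/-- Section 3.2: for every tableau `T ∈ 𝒯` (of shape `λ*`, for `λ` the partition of `d*k`
encoded by the antitone function `lam` with exactly `l` nonzero parts), the vector
`w_T ∈ (⋀^k ℂ^N)^{⊗d}` is a highest weight vector of weight `λ*`: it is fixed by the maps
induced by all upper triangular matrices with unit diagonal, and it is rescaled by
`∏ᵢ tᵢ^{λ*ᵢ}` by the map induced by `diag(t₁,…,t_N)`, where `λ*ᵢ = #{j : λ_j ≥ i}`. -/
theorem stmt_3 (k d N l : ℕ) (hk : 0 < k) (hd : 0 < d)
    (lam : ℕ → ℕ) (hanti : Antitone lam)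
    (hzero : ∀ s, l ≤ s → lam s = 0) (hpos : ∀ s, s < l → 0 < lam s)
    (hsum : ∑ s ∈ Finset.range l, lam s = d * k)
    (hN : lam 0 ≤ N)
    (T : ℕ → ℕ → ℕ) (hT : IsTab k d l lam T) :
    (∀ g : Matrix (Fin N) (Fin N) ℂ, (∀ i j : Fin N, j < i → g i j = 0) →
      (∀ i, g i i = 1) →
      PiTensorProduct.map (fun _ : Fin d => exteriorPowerMap k (Matrix.toLin' g))
        (wT k d N l lam T) = wT k d N l lam T) ∧
    (∀ t : Fin N → ℂ, (∀ i, t i ≠ 0) →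
      PiTensorProduct.map
        (fun _ : Fin d => exteriorPowerMap k (Matrix.toLin' (Matrix.diagonal t)))
        (wT k d N l lam T) =
        (∏ i : Fin N,
          t i ^ (((Finset.range l).filter fun j => (i : ℕ) + 1 ≤ lam j).card)) •
          wT k d N l lam T) := by
  obtain ⟨hT1, hT2, hT3, hT4, hT5⟩ := hT
  have hNl : ∀ r, r < l → lam r ≤ N := fun r _ => le_trans (hanti (Nat.zero_le r)) hN
  constructor
  · intro g hg1 hg2
    rw [wT_eq, LinearMap.map_smul, map_FF]
    have hchain := FF_chain k d N l lam T hT1 hT5 (Matrix.toLin' g) (fun _ => 1)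
      (fun r hr => by
        obtain ⟨Mat, h1, h2⟩ := unipotent_block N g hg1 hg2 (lam r) (hNl r hr)
        exact ⟨Mat, h1, h2⟩)
    rw [hchain, Finset.prod_const_one, one_smul, ← wT_eq]
  · intro t ht
    rw [wT_eq, LinearMap.map_smul, map_FF]
    have hchain := FF_chain k d N l lam T hT1 hT5 (Matrix.toLin' (Matrix.diagonal t))
      (fun r => ∏ n ∈ Finset.range (lam r), tExt N t n)
      (fun r hr => by
        obtain ⟨Mat, h1, h2⟩ := diagonal_block N t (lam r) (hNl r hr)
        refine ⟨Mat, ?_, h2⟩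
        show _ = ∏ n ∈ Finset.range (lam r), tExt N t n
        rw [h1, Finset.prod_range]
        refine Finset.prod_congr rfl fun i _ => ?_
        unfold tExt
        rw [dif_pos (lt_of_lt_of_le i.isLt (hNl r hr))]
        )
    rw [hchain, Dprod N l lam hNl t, smul_comm]

end
end

section
/- Let k, d be positive integers, λ a partition of dk with conjugate λ*, and N ≥ λ_1, W = ℂ^N. The family of vectors {w_T : T ∈ 𝒯} in (⋀^k W)^{⊗d} is linearly independent. -/
open scoped TensorProduct

set_option synthInstance.maxHeartbeats 1000000
set_option maxHeartbeats 1000000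

noncomputable section

namespace S4

open Finset

variable {k d l N : ℕ} {lam : ℕ → ℕ} {T : ℕ → ℕ → ℕ}

lemma downward_closed_card {S : Finset ℕ} (hdc : ∀ i j, i ≤ j → j ∈ S → i ∈ S) (i : ℕ) :
    i ∈ S ↔ i < S.card := by
  constructor
  · intro hi
    have hsub : Finset.range (i + 1) ⊆ S := fun x hx =>
      hdc x i (Nat.lt_succ_iff.mp (Finset.mem_range.mp hx)) hi
    have := Finset.card_le_card hsub
    simp only [Finset.card_range] at this
    omega
  · intro hi
    by_contra hmem
    have hsub : S ⊆ Finset.range i := by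
      intro x hx
      rw [Finset.mem_range]
      by_contra hxi
      exact hmem (hdc i x (le_of_not_gt hxi) hx)
    have := Finset.card_le_card hsub
    simp only [Finset.card_range] at this
    omega

lemma fcount_zero (s : ℕ) : fcount lam T s 0 = 0 := by
  simp [fcount]

lemma fcount_succ (s b : ℕ) :
    fcount lam T s (b + 1) = fcount lam T s b + hcount lam T s (b + 1) := by
  unfold fcount
  rw [← Finset.sum_Icc_succ_top (Nat.succ_le_succ (Nat.zero_le b))]

lemma fcount_mono {s : ℕ} {b b' : ℕ} (h : b ≤ b') :
    fcount lam T s b ≤ fcount lam T s b' :=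
  Finset.sum_le_sum_of_subset (Finset.Icc_subset_Icc_right h)

lemma fcount_eq_card (ht : IsTab k d l lam T) (s b : ℕ) :
    fcount lam T s b = ((Finset.range (lam s)).filter fun i => T s i ≤ b).card := by
  induction b with
  | zero =>
    rw [fcount_zero]
    symm
    rw [Finset.card_eq_zero, Finset.filter_eq_empty_iff]
    intro i hi
    have := (ht.1 s i (Finset.mem_range.mp hi)).1
    omega
  | succ b ih =>
    rw [fcount_succ, ih]
    have hsplit : ((Finset.range (lam s)).filter fun i => T s i ≤ b + 1)
        = ((Finset.range (lam s)).filter fun i => T s i ≤ b)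
          ∪ ((Finset.range (lam s)).filter fun i => T s i = b + 1) := by
      rw [← Finset.filter_or]
      apply Finset.filter_congr
      intro i _
      constructor <;> intro h <;> omega
    rw [hsplit, Finset.card_union_of_disjoint, hcount]
    rw [Finset.disjoint_filter]
    intro i _ h1 h2
    omega

lemma lt_fcount (ht : IsTab k d l lam T) (s b i : ℕ) :
    i < fcount lam T s b ↔ i < lam s ∧ T s i ≤ b := by
  have hdc : ∀ i j, i ≤ j → j ∈ ((Finset.range (lam s)).filter fun i => T s i ≤ b) →
      i ∈ ((Finset.range (lam s)).filter fun i => T s i ≤ b) := by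
    intro i j hij hj
    rw [Finset.mem_filter, Finset.mem_range] at hj ⊢
    refine ⟨by omega, le_trans (ht.2.2.1 s i j hij hj.1) hj.2⟩
  have := (downward_closed_card hdc i).symm
  rw [← fcount_eq_card ht] at this
  rw [this, Finset.mem_filter, Finset.mem_range]

lemma fcount_le_lam (ht : IsTab k d l lam T) (s b : ℕ) : fcount lam T s b ≤ lam s := by
  rw [fcount_eq_card ht]
  exact le_trans (Finset.card_filter_le _ _) (le_of_eq (Finset.card_range _))

lemma fcount_top (ht : IsTab k d l lam T) (s : ℕ) : fcount lam T s d = lam s := by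
  rw [fcount_eq_card ht]
  rw [Finset.filter_true_of_mem, Finset.card_range]
  intro i hi
  exact (ht.1 s i (Finset.mem_range.mp hi)).2

/-- antitone in `s` for fixed `b`. -/
lemma fcount_anti (ht : IsTab k d l lam T) (hanti : Antitone lam) {s s' : ℕ}
    (hss' : s ≤ s') (b : ℕ) : fcount lam T s' b ≤ fcount lam T s b := by
  rcases eq_or_lt_of_le hss' with rfl | hlt
  · exact le_rfl
  have key : ∀ i, i < fcount lam T s' b → i < fcount lam T s b := by
    intro i hi
    rw [lt_fcount ht] at hi ⊢
    have h1 : i < lam s := lt_of_lt_of_le hi.1 (hanti (le_of_lt hlt))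
    exact ⟨h1, le_trans (le_of_lt (ht.2.2.2.1 s s' i hlt hi.1)) hi.2⟩
  rcases Nat.eq_zero_or_pos (fcount lam T s' b) with h0 | h0
  · omega
  · have := key (fcount lam T s' b - 1) (by omega)
    omega

/-- row-strictness: `f_{s'}^{b+1} ≤ f_s^b` for `s < s'`. -/
lemma fcount_cross (ht : IsTab k d l lam T) (hanti : Antitone lam) {s s' : ℕ}
    (hss' : s < s') (b : ℕ) : fcount lam T s' (b + 1) ≤ fcount lam T s b := by
  have key : ∀ i, i < fcount lam T s' (b + 1) → i < fcount lam T s b := by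
    intro i hi
    rw [lt_fcount ht] at hi ⊢
    have h1 : i < lam s := lt_of_lt_of_le hi.1 (hanti (le_of_lt hss'))
    have h2 := ht.2.2.2.1 s s' i hss' hi.1
    exact ⟨h1, by omega⟩
  rcases Nat.eq_zero_or_pos (fcount lam T s' (b + 1)) with h0 | h0
  · omega
  · have := key (fcount lam T s' (b + 1) - 1) (by omega)
    omega

/-- The block of column `s` for value `b` : `[f_s^{b-1}, f_s^b)`. -/
def blockI (lam : ℕ → ℕ) (T : ℕ → ℕ → ℕ) (s b : ℕ) : Finset ℕ :=
  Finset.Ico (fcount lam T s (b - 1)) (fcount lam T s b)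

lemma mem_blockI (ht : IsTab k d l lam T) {s b j : ℕ} (hb : 1 ≤ b) :
    j ∈ blockI lam T s b ↔ j < lam s ∧ T s j = b := by
  rw [blockI, Finset.mem_Ico]
  constructor
  · rintro ⟨h1, h2⟩
    rw [lt_fcount ht] at h2
    have h3 : ¬ j < fcount lam T s (b - 1) := by omega
    rw [lt_fcount ht] at h3
    push_neg at h3
    have := h3 h2.1
    exact ⟨h2.1, by omega⟩
  · rintro ⟨h1, h2⟩
    constructor
    · by_contra h
      push_neg at h
      have := (lt_fcount ht s (b - 1) j).mp (by omega)
      omega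
    · rw [lt_fcount ht]
      exact ⟨h1, by omega⟩

lemma blockI_card (ht : IsTab k d l lam T) (s : ℕ) {b : ℕ} (hb : 1 ≤ b) :
    (blockI lam T s b).card = hcount lam T s b := by
  rw [blockI, Nat.card_Ico]
  obtain ⟨b', rfl⟩ : ∃ b', b = b' + 1 := ⟨b - 1, by omega⟩
  rw [Nat.add_sub_cancel, fcount_succ]
  omega


/-- blocks of distinct columns, same `b ≥ 1`, are "crossed": the later column's block
is entirely below the earlier one's. -/
lemma blockI_cross (ht : IsTab k d l lam T) (hanti : Antitone lam) {s s' b : ℕ}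
    (hss' : s < s') (hb : 1 ≤ b) {x : ℕ} (hx : x ∈ blockI lam T s' b) :
    x < fcount lam T s (b - 1) := by
  rw [blockI, Finset.mem_Ico] at hx
  have : fcount lam T s' b ≤ fcount lam T s (b - 1) := by
    obtain ⟨b', rfl⟩ : ∃ b', b = b' + 1 := ⟨b - 1, by omega⟩
    rw [Nat.add_sub_cancel]
    exact fcount_cross ht hanti hss' b'
  omega

lemma blockI_disjoint (ht : IsTab k d l lam T) (hanti : Antitone lam) {s s' b : ℕ}
    (hne : s ≠ s') (hb : 1 ≤ b) : Disjoint (blockI lam T s b) (blockI lam T s' b) := by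
  rw [Finset.disjoint_left]
  intro x hx hx'
  rcases lt_or_gt_of_ne hne with h | h
  · have h1 := blockI_cross ht hanti h hb hx'
    rw [blockI, Finset.mem_Ico] at hx
    omega
  · have h1 := blockI_cross ht hanti h hb hx
    rw [blockI, Finset.mem_Ico] at hx'
    omega

/-- `S_b`. -/
def Sb (l : ℕ) (lam : ℕ → ℕ) (T : ℕ → ℕ → ℕ) (b : ℕ) : Finset ℕ :=
  (Finset.range l).biUnion fun s => blockI lam T s b

lemma Sb_card (ht : IsTab k d l lam T) (hanti : Antitone lam) {b : ℕ}
    (hb1 : 1 ≤ b) (hbd : b ≤ d) : (Sb l lam T b).card = k := by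
  rw [Sb, Finset.card_biUnion]
  · rw [← ht.2.2.2.2 b hb1 hbd]
    exact Finset.sum_congr rfl fun s _ => blockI_card ht s hb1
  · intro s _ s' _ hne
    exact blockI_disjoint ht hanti hne hb1

lemma Sb_lt (ht : IsTab k d l lam T) (hanti : Antitone lam) {b x : ℕ}
    (hx : x ∈ Sb l lam T b) : x < lam 0 := by
  rw [Sb, Finset.mem_biUnion] at hx
  obtain ⟨s, _, hx⟩ := hx
  rw [blockI, Finset.mem_Ico] at hx
  have h1 := fcount_le_lam ht s b
  have h2 : lam s ≤ lam 0 := hanti (Nat.zero_le s)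
  omega


/-! ### counting -/

def cnt (X : Finset ℕ) (m : ℕ) : ℕ := (X.filter fun x => x < m).card

lemma cnt_le_card (X : Finset ℕ) (m : ℕ) : cnt X m ≤ X.card :=
  Finset.card_filter_le _ _

lemma cnt_eq_card (X : Finset ℕ) {m : ℕ} (h : ∀ x ∈ X, x < m) : cnt X m = X.card := by
  rw [cnt, Finset.filter_true_of_mem h]

lemma cnt_succ (X : Finset ℕ) (m : ℕ) :
    cnt X (m + 1) = cnt X m + (if m ∈ X then 1 else 0) := by
  unfold cnt
  have hsplit : (X.filter fun x => x < m + 1)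
      = (X.filter fun x => x < m) ∪ (X.filter fun x => x = m) := by
    rw [← Finset.filter_or]
    apply Finset.filter_congr
    intro x _
    constructor <;> intro h <;> omega
  rw [hsplit, Finset.card_union_of_disjoint]
  · congr 1
    rw [Finset.filter_eq']
    split <;> simp
  · rw [Finset.disjoint_filter]
    intro x _ h1 h2
    omega

lemma eq_of_cnt_eq {X Y : Finset ℕ} (h : ∀ m, cnt X m = cnt Y m) : X = Y := by
  ext x
  have h1 := cnt_succ X x
  have h2 := cnt_succ Y x
  have h3 := h x
  have h4 := h (x + 1)
  by_cases hx : x ∈ X <;> by_cases hy : x ∈ Y <;> simp [hx, hy] at h1 h2 <;> try tauto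
  all_goals omega

lemma sum_cnt {X : Finset ℕ} {M : ℕ} (h : ∀ x ∈ X, x < M) :
    (∑ m ∈ Finset.range (M + 1), cnt X m) + X.sum id = M * X.card := by
  have e1 : ∀ m, cnt X m = ∑ x ∈ X, if x < m then 1 else 0 := fun m => Finset.card_filter _ _
  have e2 : (∑ m ∈ Finset.range (M + 1), cnt X m) = ∑ x ∈ X, (M - x) := by
    simp only [e1]
    rw [Finset.sum_comm]
    refine Finset.sum_congr rfl fun x hx => ?_
    have hI : ((Finset.range (M + 1)).filter fun m => x < m) = Finset.Ico (x + 1) (M + 1) := by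
      ext i
      simp only [Finset.mem_filter, Finset.mem_range, Finset.mem_Ico]
      omega
    rw [← Finset.card_filter, hI, Nat.card_Ico]
    omega
  have e3 : (∑ x ∈ X, (M - x)) + X.sum id = ∑ x ∈ X, ((M - x) + x) := by
    rw [← Finset.sum_add_distrib]
    rfl
  have e4 : (∑ x ∈ X, ((M - x) + x)) = ∑ _x ∈ X, M := by
    refine Finset.sum_congr rfl fun x hx => ?_
    have := h x hx
    omega
  rw [e2, e3, e4, Finset.sum_const, smul_eq_mul, mul_comm]

lemma sum_lt_of_cnt_le {X Y : Finset ℕ} {M : ℕ} (hX : ∀ x ∈ X, x < M) (hY : ∀ y ∈ Y, y < M)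
    (hcard : X.card = Y.card) (hle : ∀ m, cnt X m ≤ cnt Y m) (hne : X ≠ Y) :
    Y.sum id < X.sum id := by
  have hstrict : ∃ m ∈ Finset.range (M + 1), cnt X m < cnt Y m := by
    by_contra hc
    push_neg at hc
    apply hne
    apply eq_of_cnt_eq
    intro m
    rcases le_or_gt m M with hm | hm
    · exact le_antisymm (hle m) (hc m (Finset.mem_range.mpr (by omega)))
    · rw [cnt_eq_card X fun x hx => lt_of_lt_of_le (hX x hx) (by omega),
        cnt_eq_card Y fun y hy => lt_of_lt_of_le (hY y hy) (by omega), hcard]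
  obtain ⟨m0, hm0, hm0lt⟩ := hstrict
  have hsum : (∑ m ∈ Finset.range (M + 1), cnt X m) < ∑ m ∈ Finset.range (M + 1), cnt Y m :=
    Finset.sum_lt_sum (fun m _ => hle m) ⟨m0, hm0, hm0lt⟩
  have e1 := sum_cnt hX
  have e2 := sum_cnt hY
  rw [hcard] at e1
  omega



/-! ### the image sets -/

variable {γ : ∀ s : Fin l, Equiv.Perm (Fin (lam s))}

lemma gIdx_eq {s j : ℕ} (γ : ∀ s : Fin l, Equiv.Perm (Fin (lam s))) (hs : s < l)
    (hj : j < lam s) : gIdx l lam γ s j = ((γ ⟨s, hs⟩) ⟨j, hj⟩ : ℕ) := by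
  rw [gIdx, dif_pos hs, dif_pos hj]

lemma gIdx_lt (γ : ∀ s : Fin l, Equiv.Perm (Fin (lam s))) {s j : ℕ} (hs : s < l)
    (hj : j < lam s) : gIdx l lam γ s j < lam s := by
  rw [gIdx_eq γ hs hj]
  exact (γ ⟨s, hs⟩ ⟨j, hj⟩).isLt

lemma gIdx_inj (γ : ∀ s : Fin l, Equiv.Perm (Fin (lam s))) {s j j' : ℕ} (hs : s < l)
    (hj : j < lam s) (hj' : j' < lam s)
    (h : gIdx l lam γ s j = gIdx l lam γ s j') : j = j' := by
  rw [gIdx_eq γ hs hj, gIdx_eq γ hs hj'] at h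
  have := (γ ⟨s, hs⟩).injective (Fin.val_injective h)
  exact congrArg Fin.val this

/-- image of the `b`-block of column `s` under `γ_s`. -/
def Img (l : ℕ) (lam : ℕ → ℕ) (γ : ∀ s : Fin l, Equiv.Perm (Fin (lam s)))
    (T : ℕ → ℕ → ℕ) (s b : ℕ) : Finset ℕ :=
  (blockI lam T s b).image (gIdx l lam γ s)

lemma mem_blockI_lt (ht : IsTab k d l lam T) {s b j : ℕ} (hb : 1 ≤ b)
    (hj : j ∈ blockI lam T s b) : j < lam s := ((mem_blockI ht hb).mp hj).1

lemma Img_card (ht : IsTab k d l lam T) {s b : ℕ} (hs : s < l) (hb : 1 ≤ b) :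
    (Img l lam γ T s b).card = hcount lam T s b := by
  rw [Img, Finset.card_image_of_injOn, blockI_card ht s hb]
  intro j hj j' hj' h
  exact gIdx_inj γ hs (mem_blockI_lt ht hb hj) (mem_blockI_lt ht hb hj') h

lemma Img_subset (ht : IsTab k d l lam T) {s b : ℕ} (hs : s < l) (hb : 1 ≤ b)
    (hprev : ∀ b', 1 ≤ b' → b' < b → Img l lam γ T s b' = blockI lam T s b') :
    Img l lam γ T s b ⊆ Finset.Ico (fcount lam T s (b - 1)) (lam s) := by
  intro x hx
  rw [Img, Finset.mem_image] at hx
  obtain ⟨j, hj, rfl⟩ := hx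
  have hjlam := mem_blockI_lt ht hb hj
  rw [Finset.mem_Ico]
  refine ⟨?_, gIdx_lt γ hs hjlam⟩
  by_contra hcon
  push_neg at hcon
  set x := gIdx l lam γ s j with hxdef
  have hxlt : x < lam s := gIdx_lt γ hs hjlam
  have hxb : T s x ≤ b - 1 := ((lt_fcount ht s (b - 1) x).mp hcon).2
  have hxb1 : 1 ≤ T s x := (ht.1 s x hxlt).1
  have hxblock : x ∈ blockI lam T s (T s x) := (mem_blockI ht hxb1).mpr ⟨hxlt, rfl⟩
  rw [← hprev (T s x) hxb1 (by omega)] at hxblock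
  rw [Img, Finset.mem_image] at hxblock
  obtain ⟨j', hj', hjj'⟩ := hxblock
  have hj'lam := mem_blockI_lt ht hxb1 hj'
  have := gIdx_inj γ hs hj'lam hjlam hjj'
  subst this
  have e1 := ((mem_blockI ht hb).mp hj).2
  have e2 := ((mem_blockI ht hxb1).mp hj').2
  omega

lemma fcount_pred (s : ℕ) {b : ℕ} (hb : 1 ≤ b) :
    fcount lam T s b = fcount lam T s (b - 1) + hcount lam T s b := by
  obtain ⟨b', rfl⟩ : ∃ b', b = b' + 1 := ⟨b - 1, by omega⟩
  rw [Nat.add_sub_cancel]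
  exact fcount_succ s b'

lemma cnt_blockI (s : ℕ) {b : ℕ} (hb : 1 ≤ b) (m : ℕ) :
    cnt (blockI lam T s b) m
      = min (hcount lam T s b) (m - fcount lam T s (b - 1)) := by
  have hI : (blockI lam T s b).filter (fun x => x < m)
      = Finset.Ico (fcount lam T s (b - 1)) (min (fcount lam T s b) m) := by
    ext x
    simp only [blockI, Finset.mem_filter, Finset.mem_Ico, lt_min_iff]
    omega
  rw [cnt, hI, Nat.card_Ico]
  have := fcount_pred (lam := lam) (T := T) s hb
  omega

lemma cnt_Img_le (ht : IsTab k d l lam T) {s b : ℕ} (hs : s < l) (hb : 1 ≤ b)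
    (hprev : ∀ b', 1 ≤ b' → b' < b → Img l lam γ T s b' = blockI lam T s b') (m : ℕ) :
    cnt (Img l lam γ T s b) m ≤ cnt (blockI lam T s b) m := by
  have h1 : cnt (Img l lam γ T s b) m ≤ hcount lam T s b := by
    rw [← Img_card ht hs hb]
    exact cnt_le_card _ _
  have h2 : cnt (Img l lam γ T s b) m ≤ m - fcount lam T s (b - 1) := by
    have hsub : (Img l lam γ T s b).filter (fun x => x < m)
        ⊆ Finset.Ico (fcount lam T s (b - 1)) m := by
      intro x hx
      rw [Finset.mem_filter] at hx
      have := Img_subset ht hs hb hprev hx.1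
      rw [Finset.mem_Ico] at this ⊢
      omega
    have := Finset.card_le_card hsub
    rw [Nat.card_Ico] at this
    exact this
  rw [cnt_blockI s hb]
  omega

lemma Img_eq_of_cnt_eq (ht : IsTab k d l lam T) {s b : ℕ} (hs : s < l) (hb : 1 ≤ b)
    (hprev : ∀ b', 1 ≤ b' → b' < b → Img l lam γ T s b' = blockI lam T s b')
    (hcnt : ∀ m, cnt (Img l lam γ T s b) m = cnt (blockI lam T s b) m) :
    Img l lam γ T s b = blockI lam T s b := by
  have hbnd : ∀ x ∈ Img l lam γ T s b, x < fcount lam T s b := by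
    intro x hx
    by_contra hcon
    push_neg at hcon
    have h1 : cnt (Img l lam γ T s b) (fcount lam T s b) < (Img l lam γ T s b).card := by
      apply Finset.card_lt_card
      rw [Finset.ssubset_iff_of_subset (Finset.filter_subset _ _)]
      exact ⟨x, hx, by simp only [Finset.mem_filter]; omega⟩
    rw [hcnt, cnt_blockI s hb, Img_card ht hs hb] at h1
    have := fcount_pred (lam := lam) (T := T) s hb
    omega
  have hsub : Img l lam γ T s b ⊆ blockI lam T s b := by
    intro x hx
    have h1 := Img_subset ht hs hb hprev hx
    rw [Finset.mem_Ico] at h1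
    rw [blockI, Finset.mem_Ico]
    exact ⟨h1.1, hbnd x hx⟩
  apply Finset.eq_of_subset_of_card_le hsub
  rw [Img_card ht hs hb, blockI_card ht s hb]

lemma cnt_biUnion {ι : Type*} [DecidableEq ι] (s : Finset ι) (F : ι → Finset ℕ)
    (hdisj : ∀ i ∈ s, ∀ j ∈ s, i ≠ j → Disjoint (F i) (F j)) (m : ℕ) :
    cnt (s.biUnion F) m = ∑ i ∈ s, cnt (F i) m := by
  unfold cnt
  rw [Finset.filter_biUnion]
  exact Finset.card_biUnion fun i hi j hj hne =>
    Finset.disjoint_filter_filter (hdisj i hi j hj hne)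

lemma cnt_Sb (ht : IsTab k d l lam T) (hanti : Antitone lam) {b : ℕ} (hb : 1 ≤ b) (m : ℕ) :
    cnt (Sb l lam T b) m = ∑ s ∈ Finset.range l, cnt (blockI lam T s b) m :=
  cnt_biUnion _ _ (fun s _ s' _ hne => blockI_disjoint ht hanti hne hb) m

/-- one step of the leading-term comparison. -/
lemma Cstep {T0 : ℕ → ℕ → ℕ} (ht0 : IsTab k d l lam T0) (ht : IsTab k d l lam T)
    (hanti : Antitone lam) {b : ℕ} (hb1 : 1 ≤ b)
    (hdisj : ∀ s ∈ Finset.range l, ∀ s' ∈ Finset.range l, s ≠ s' →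
      Disjoint (Img l lam γ T s b) (Img l lam γ T s' b))
    (hun : (Finset.range l).biUnion (fun s => Img l lam γ T s b) = Sb l lam T0 b)
    (hprev : ∀ s, s < l → ∀ b', 1 ≤ b' → b' < b → Img l lam γ T s b' = blockI lam T s b') :
    (Sb l lam T b = Sb l lam T0 b ∧ ∀ s, s < l → Img l lam γ T s b = blockI lam T s b)
    ∨ ((∀ m, cnt (Sb l lam T0 b) m ≤ cnt (Sb l lam T b) m)
        ∧ Sb l lam T b ≠ Sb l lam T0 b) := by
  have h0 : ∀ m, cnt (Sb l lam T0 b) m = ∑ s ∈ Finset.range l, cnt (Img l lam γ T s b) m := by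
    intro m
    rw [← hun]
    exact cnt_biUnion _ _ hdisj m
  have hterm : ∀ s ∈ Finset.range l, ∀ m,
      cnt (Img l lam γ T s b) m ≤ cnt (blockI lam T s b) m := by
    intro s hs m
    exact cnt_Img_le ht (Finset.mem_range.mp hs) hb1 (hprev s (Finset.mem_range.mp hs)) m
  have hdom : ∀ m, cnt (Sb l lam T0 b) m ≤ cnt (Sb l lam T b) m := by
    intro m
    rw [h0, cnt_Sb ht hanti hb1]
    exact Finset.sum_le_sum fun s hs => hterm s hs m
  by_cases hEq : Sb l lam T b = Sb l lam T0 b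
  · left
    refine ⟨hEq, fun s hs => ?_⟩
    apply Img_eq_of_cnt_eq ht hs hb1 (hprev s hs)
    intro m
    have hsum : (∑ s ∈ Finset.range l, cnt (Img l lam γ T s b) m)
        = ∑ s ∈ Finset.range l, cnt (blockI lam T s b) m := by
      rw [← h0, ← cnt_Sb ht hanti hb1, hEq]
    exact ((Finset.sum_eq_sum_iff_of_le (fun s hs => hterm s hs m)).mp hsum
      s (Finset.mem_range.mpr hs))
  · right
    exact ⟨hdom, hEq⟩

/-- full leading-term comparison, by induction on `b`. -/
lemma Cfull {T0 : ℕ → ℕ → ℕ} (ht0 : IsTab k d l lam T0) (ht : IsTab k d l lam T)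
    (hanti : Antitone lam)
    (hdisj : ∀ b, 1 ≤ b → b ≤ d → ∀ s ∈ Finset.range l, ∀ s' ∈ Finset.range l, s ≠ s' →
      Disjoint (Img l lam γ T s b) (Img l lam γ T s' b))
    (hun : ∀ b, 1 ≤ b → b ≤ d →
      (Finset.range l).biUnion (fun s => Img l lam γ T s b) = Sb l lam T0 b) :
    (∀ b, 1 ≤ b → b ≤ d → (Sb l lam T b = Sb l lam T0 b
        ∧ ∀ s, s < l → Img l lam γ T s b = blockI lam T s b))
    ∨ (∃ b0, 1 ≤ b0 ∧ b0 ≤ d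
        ∧ (∀ b', 1 ≤ b' → b' < b0 → Sb l lam T b' = Sb l lam T0 b')
        ∧ (∀ m, cnt (Sb l lam T0 b0) m ≤ cnt (Sb l lam T b0) m)
        ∧ Sb l lam T b0 ≠ Sb l lam T0 b0) := by
  suffices h : ∀ B, B ≤ d → (∀ b, 1 ≤ b → b ≤ B → (Sb l lam T b = Sb l lam T0 b
        ∧ ∀ s, s < l → Img l lam γ T s b = blockI lam T s b))
      ∨ (∃ b0, 1 ≤ b0 ∧ b0 ≤ d
        ∧ (∀ b', 1 ≤ b' → b' < b0 → Sb l lam T b' = Sb l lam T0 b')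
        ∧ (∀ m, cnt (Sb l lam T0 b0) m ≤ cnt (Sb l lam T b0) m)
        ∧ Sb l lam T b0 ≠ Sb l lam T0 b0) by
    exact h d le_rfl
  intro B
  induction B with
  | zero => intro _; left; intro b hb1 hb0; omega
  | succ B ih =>
    intro hBd
    rcases ih (by omega) with hL | hR
    · rcases Cstep ht0 ht hanti (b := B + 1) (by omega)
        (hdisj (B + 1) (by omega) hBd) (hun (B + 1) (by omega) hBd)
        (fun s hs b' hb'1 hb' => (hL b' hb'1 (by omega)).2 s hs) with hstep | hstep
      · left
        intro b hb1 hbB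
        rcases Nat.lt_or_ge b (B + 1) with h | h
        · exact hL b hb1 (by omega)
        · have : b = B + 1 := by omega
          subst this
          exact hstep
      · right
        exact ⟨B + 1, by omega, hBd,
          fun b' hb'1 hb' => (hL b' hb'1 (by omega)).1, hstep.1, hstep.2⟩
    · right
      exact hR


/-! ### reconstruction of `T` from the sets `S_b` -/

lemma Sb_inter_window (ht : IsTab k d l lam T) (hanti : Antitone lam) {b s : ℕ}
    (hs : s < l) :
    Sb l lam T (b + 1) ∩ Finset.Ico (fcount lam T s b)
      (if s = 0 then lam 0 else fcount lam T (s - 1) b) = blockI lam T s (b + 1) := by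
  ext x
  simp only [Finset.mem_inter, Sb, Finset.mem_biUnion, Finset.mem_Ico]
  constructor
  · rintro ⟨⟨s', hs', hx⟩, hlo, hhi⟩
    rcases Nat.lt_trichotomy s s' with h | h | h
    · have := blockI_cross ht hanti h (by omega) hx
      simp only [Nat.add_sub_cancel] at this
      omega
    · subst h; exact hx
    · exfalso
      have hs0 : s ≠ 0 := by omega
      rw [if_neg hs0] at hhi
      have h1 : fcount lam T (s - 1) b ≤ fcount lam T s' b :=
        fcount_anti ht hanti (by omega) b
      rw [blockI, Finset.mem_Ico, Nat.add_sub_cancel] at hx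
      omega
  · intro hx
    have hx' := hx
    rw [blockI, Finset.mem_Ico, Nat.add_sub_cancel] at hx'
    refine ⟨⟨s, Finset.mem_range.mpr hs, hx⟩, hx'.1, ?_⟩
    by_cases hs0 : s = 0
    · subst hs0
      rw [if_pos rfl]
      have := fcount_le_lam ht 0 (b + 1)
      omega
    · rw [if_neg hs0]
      have : fcount lam T s (b + 1) ≤ fcount lam T (s - 1) b :=
        fcount_cross ht hanti (by omega) b
      omega

lemma fcount_agree {T0 : ℕ → ℕ → ℕ} (ht : IsTab k d l lam T) (ht0 : IsTab k d l lam T0)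
    (hanti : Antitone lam)
    (hS : ∀ b, 1 ≤ b → b ≤ d → Sb l lam T b = Sb l lam T0 b) :
    ∀ b, b ≤ d → ∀ s, s < l → fcount lam T s b = fcount lam T0 s b := by
  intro b
  induction b with
  | zero => intro _ s _; rw [fcount_zero, fcount_zero]
  | succ b ih =>
    intro hbd s hs
    have IH := ih (by omega)
    have hwin := Sb_inter_window ht hanti (b := b) hs
    have hwin0 := Sb_inter_window ht0 hanti (b := b) hs
    have hcard : hcount lam T s (b + 1) = hcount lam T0 s (b + 1) := by
      rw [← blockI_card ht s (Nat.succ_le_succ (Nat.zero_le b)),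
        ← blockI_card ht0 s (Nat.succ_le_succ (Nat.zero_le b)), ← hwin, ← hwin0]
      congr 1
      rw [hS (b + 1) (by omega) hbd, IH s hs]
      by_cases hs0 : s = 0
      · rw [if_pos hs0, if_pos hs0]
      · rw [if_neg hs0, if_neg hs0, IH (s - 1) (by omega)]
    rw [fcount_succ, fcount_succ, IH s hs, hcard]

lemma T_eq_of_Sb_eq {T0 : ℕ → ℕ → ℕ} (ht : IsTab k d l lam T) (ht0 : IsTab k d l lam T0)
    (hanti : Antitone lam) (hzero : ∀ s, l ≤ s → lam s = 0)
    (hS : ∀ b, 1 ≤ b → b ≤ d → Sb l lam T b = Sb l lam T0 b) : T = T0 := by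
  have hf := fcount_agree ht ht0 hanti hS
  funext s i
  by_cases hsl : s < l
  · by_cases hi : i < lam s
    · set b := T s i with hb
      have hb1 := ht.1 s i hi
      have h1 : i < fcount lam T s b := (lt_fcount ht s b i).mpr ⟨hi, le_rfl⟩
      have h2 : ¬ i < fcount lam T s (b - 1) := by
        rw [lt_fcount ht]
        rintro ⟨_, hle⟩
        omega
      rw [hf b (by omega) s hsl] at h1
      rw [hf (b - 1) (by omega) s hsl] at h2
      rw [lt_fcount ht0] at h1 h2
      push_neg at h2
      have := h2 hi
      omega
    · rw [ht.2.1 s i (by omega), ht0.2.1 s i (by omega)]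
  · have h0 : lam s = 0 := hzero s (by omega)
    rw [ht.2.1 s i (by omega), ht0.2.1 s i (by omega)]

/-! ### the weight function -/

def wkey (k d N l : ℕ) (lam : ℕ → ℕ) (T : ℕ → ℕ → ℕ) : ℕ :=
  ∑ b ∈ Finset.Icc 1 d, (k * N + 1) ^ (d - b) * (Sb l lam T b).sum id

lemma geo2 {B : ℕ} (hB : 1 ≤ B) (a : ℕ) :
    ∀ n, ∑ b ∈ Finset.Icc (a + 1) (a + n), B ^ (a + n - b) * (B - 1) = B ^ n - 1 := by
  intro n
  induction n with
  | zero => simp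
  | succ n ih =>
    rw [show a + (n + 1) = (a + n) + 1 by omega, Finset.sum_Icc_succ_top (by omega)]
    have hmul : ∀ b ∈ Finset.Icc (a + 1) (a + n),
        B ^ (a + n + 1 - b) * (B - 1) = B * (B ^ (a + n - b) * (B - 1)) := by
      intro b hb
      rw [Finset.mem_Icc] at hb
      rw [show a + n + 1 - b = (a + n - b) + 1 by omega, pow_succ']
      ring
    rw [Finset.sum_congr rfl hmul, ← Finset.mul_sum, ih, Nat.sub_self, pow_zero, one_mul]
    have hx : 1 ≤ B ^ n := Nat.one_le_pow _ _ (by omega)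
    have h1 : B * (B ^ n - 1) + B = B * B ^ n := by
      rw [← Nat.mul_succ]
      congr 1
      omega
    have h2 : B * B ^ n = B ^ (n + 1) := (pow_succ' B n).symm
    omega

lemma lex_sum_lt {B D b0 : ℕ} {u v : ℕ → ℕ} (hB : 1 ≤ B)
    (hu : ∀ b, b0 < b → b ≤ D → u b < B)
    (hb01 : 1 ≤ b0) (hb0d : b0 ≤ D)
    (heq : ∀ b, 1 ≤ b → b < b0 → u b = v b) (hlt : u b0 < v b0) :
    ∑ b ∈ Finset.Icc 1 D, B ^ (D - b) * u b < ∑ b ∈ Finset.Icc 1 D, B ^ (D - b) * v b := by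
  have hsplit : ∀ w : ℕ → ℕ, ∑ b ∈ Finset.Icc 1 D, B ^ (D - b) * w b
      = (∑ b ∈ Finset.Icc 1 b0, B ^ (D - b) * w b)
        + ∑ b ∈ Finset.Icc (b0 + 1) D, B ^ (D - b) * w b := by
    intro w
    rw [(show Finset.Icc 1 D = Finset.Ioc 0 D from Finset.Icc_add_one_left_eq_Ioc 0 D),
      (show Finset.Icc 1 b0 = Finset.Ioc 0 b0 from Finset.Icc_add_one_left_eq_Ioc 0 b0), Finset.Icc_add_one_left_eq_Ioc,
      ← Finset.sum_Ioc_consecutive _ (Nat.zero_le b0) hb0d]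
  have hA2 : (∑ b ∈ Finset.Icc (b0 + 1) D, B ^ (D - b) * u b) ≤ B ^ (D - b0) - 1 := by
    have hgeo := geo2 hB b0 (D - b0)
    rw [show b0 + (D - b0) = D by omega] at hgeo
    rw [← hgeo]
    apply Finset.sum_le_sum
    intro b hb
    rw [Finset.mem_Icc] at hb
    exact Nat.mul_le_mul_left _ (by have := hu b (by omega) hb.2; omega)
  have hA1 : (∑ b ∈ Finset.Icc 1 b0, B ^ (D - b) * u b) + B ^ (D - b0)
      ≤ ∑ b ∈ Finset.Icc 1 b0, B ^ (D - b) * v b := by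
    obtain ⟨c, rfl⟩ : ∃ c, b0 = c + 1 := ⟨b0 - 1, by omega⟩
    rw [Finset.sum_Icc_succ_top (by omega), Finset.sum_Icc_succ_top (by omega)]
    have hmid : ∀ b ∈ Finset.Icc 1 c, B ^ (D - b) * u b = B ^ (D - b) * v b := by
      intro b hb
      rw [Finset.mem_Icc] at hb
      rw [heq b hb.1 (by omega)]
    rw [Finset.sum_congr rfl hmid]
    have : B ^ (D - (c + 1)) * u (c + 1) + B ^ (D - (c + 1))
        ≤ B ^ (D - (c + 1)) * v (c + 1) := by
      rw [← Nat.mul_succ]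
      exact Nat.mul_le_mul_left _ (by omega)
    omega
  have hpow : 1 ≤ B ^ (D - b0) := Nat.one_le_pow _ _ (by omega)
  have hC2 : (0 : ℕ) ≤ ∑ b ∈ Finset.Icc (b0 + 1) D, B ^ (D - b) * v b := Nat.zero_le _
  rw [hsplit u, hsplit v]
  omega

lemma Sb_sum_lt_B (ht : IsTab k d l lam T) (hanti : Antitone lam) (hN : lam 0 ≤ N)
    {b : ℕ} (hb1 : 1 ≤ b) (hbd : b ≤ d) :
    (Sb l lam T b).sum id < k * N + 1 := by
  have hbound : ∀ x ∈ Sb l lam T b, id x ≤ N - 1 := by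
    intro x hx
    have := Sb_lt ht hanti hx
    show x ≤ N - 1
    omega
  have := Finset.sum_le_card_nsmul _ _ _ hbound
  rw [Sb_card ht hanti hb1 hbd, smul_eq_mul] at this
  have h2 : k * (N - 1) ≤ k * N := Nat.mul_le_mul_left _ (by omega)
  omega

lemma wkey_lt {T0 : ℕ → ℕ → ℕ} (ht : IsTab k d l lam T) (ht0 : IsTab k d l lam T0)
    (hanti : Antitone lam) (hN : lam 0 ≤ N) {b0 : ℕ}
    (hb01 : 1 ≤ b0) (hb0d : b0 ≤ d)
    (hSeq : ∀ b', 1 ≤ b' → b' < b0 → Sb l lam T b' = Sb l lam T0 b')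
    (hdom : ∀ m, cnt (Sb l lam T0 b0) m ≤ cnt (Sb l lam T b0) m)
    (hne : Sb l lam T b0 ≠ Sb l lam T0 b0) :
    wkey k d N l lam T < wkey k d N l lam T0 := by
  unfold wkey
  apply lex_sum_lt (by omega) (fun b hb1 hbd => Sb_sum_lt_B ht hanti hN (by omega) hbd)
    hb01 hb0d
  · intro b hb1 hbb0
    rw [hSeq b hb1 hbb0]
  · exact sum_lt_of_cnt_le (fun x hx => lt_of_lt_of_le (Sb_lt ht0 hanti hx) hN)
      (fun x hx => lt_of_lt_of_le (Sb_lt ht hanti hx) hN)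
      (by rw [Sb_card ht0 hanti hb01 hb0d, Sb_card ht hanti hb01 hb0d])
      hdom (fun h => hne (h ▸ rfl)) 

/-! ### block-preserving permutations -/

lemma blockPres_of_Img (ht : IsTab k d l lam T)
    (himg : ∀ b, 1 ≤ b → b ≤ d → ∀ s, s < l → Img l lam γ T s b = blockI lam T s b)
    (s : Fin l) (j : Fin (lam s)) : T s (γ s j) = T s j := by
  have hb := ht.1 s j j.isLt
  have hjb : (j : ℕ) ∈ blockI lam T s (T s j) :=
    (mem_blockI ht hb.1).mpr ⟨j.isLt, rfl⟩
  have hmem : gIdx l lam γ s j ∈ Img l lam γ T s (T s j) :=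
    Finset.mem_image_of_mem _ hjb
  rw [himg (T s j) hb.1 hb.2 s s.isLt] at hmem
  have := ((mem_blockI ht hb.1).mp hmem).2
  rw [gIdx_eq γ s.isLt j.isLt] at this
  simpa using this


/-! ### lists, positions -/

def offs (lam : ℕ → ℕ) (T : ℕ → ℕ → ℕ) (b s : ℕ) : ℕ :=
  ∑ s' ∈ Finset.range s, hcount lam T s' b

def idxList (l : ℕ) (lam : ℕ → ℕ) (T : ℕ → ℕ → ℕ)
    (γ : ∀ s : Fin l, Equiv.Perm (Fin (lam s))) (b : ℕ) : List ℕ :=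
  (List.range l).flatMap fun s =>
    (List.range' (fcount lam T s (b - 1)) (hcount lam T s b)).map (gIdx l lam γ s)

lemma factorList_eq (γ : ∀ s : Fin l, Equiv.Perm (Fin (lam s))) (b : ℕ) :
    factorList N l lam T γ b = (idxList l lam T γ b).map (E N) := by
  rw [factorList, idxList, List.map_flatMap]
  congr 1
  funext s
  rw [List.map_map]
  rfl

lemma length_flatMap_range {α : Type*} (F : ℕ → List α) (n : ℕ) :
    ((List.range n).flatMap F).length = ∑ s ∈ Finset.range n, (F s).length := by
  induction n with
  | zero => simp
  | succ n ih =>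
    rw [List.range_succ, List.flatMap_append, List.length_append, ih,
      Finset.sum_range_succ]
    simp

lemma getD_flatMap_range {α : Type*} (F : ℕ → List α) (a : α) :
    ∀ n s, s < n → ∀ j, j < (F s).length →
      ((List.range n).flatMap F).getD ((∑ s' ∈ Finset.range s, (F s').length) + j) a
        = (F s).getD j a := by
  intro n
  induction n with
  | zero => omega
  | succ n ih =>
    intro s hs j hj
    rw [List.range_succ, List.flatMap_append]
    rcases Nat.lt_or_ge s n with h | h
    · rw [List.getD_append]
      · exact ih s h j hj
      · rw [length_flatMap_range]
        have hmono : (∑ s' ∈ Finset.range (s + 1), (F s').length)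
            ≤ ∑ s' ∈ Finset.range n, (F s').length :=
          Finset.sum_le_sum_of_subset (Finset.range_subset_range.mpr (by omega))
        rw [Finset.sum_range_succ] at hmono
        omega
    · have hsn : s = n := by omega
      subst hsn
      rw [List.getD_append_right]
      · rw [length_flatMap_range, Nat.add_sub_cancel_left]
        have h2 : [s].flatMap F = F s := by simp
        rw [h2]
      · rw [length_flatMap_range]
        omega

def rIdx (k l : ℕ) (lam : ℕ → ℕ) (T : ℕ → ℕ → ℕ)
    (γ : ∀ s : Fin l, Equiv.Perm (Fin (lam s))) (b : ℕ) : Fin k → ℕ :=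
  fun i => (idxList l lam T γ b).getD i 0

lemma idxList_length (ht : IsTab k d l lam T) (γ : ∀ s : Fin l, Equiv.Perm (Fin (lam s)))
    {b : ℕ} (hb1 : 1 ≤ b) (hbd : b ≤ d) : (idxList l lam T γ b).length = k := by
  rw [idxList, length_flatMap_range, ← ht.2.2.2.2 b hb1 hbd]
  refine Finset.sum_congr rfl fun s _ => ?_
  rw [List.length_map, List.length_range']

lemma offs_le {s s' : ℕ} (b : ℕ) (h : s ≤ s') : offs lam T b s ≤ offs lam T b s' :=
  Finset.sum_le_sum_of_subset (Finset.range_subset_range.mpr h)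

lemma offs_succ (b s : ℕ) : offs lam T b (s + 1) = offs lam T b s + hcount lam T s b :=
  Finset.sum_range_succ _ _

lemma offs_top (ht : IsTab k d l lam T) {b : ℕ} (hb1 : 1 ≤ b) (hbd : b ≤ d) :
    offs lam T b l = k := ht.2.2.2.2 b hb1 hbd

def ebf (lam : ℕ → ℕ) (T : ℕ → ℕ → ℕ) (b : ℕ)
    (p : Σ s : Fin l, Fin (hcount lam T (s : ℕ) b)) : ℕ :=
  offs lam T b p.1 + p.2

lemma ebf_lt (ht : IsTab k d l lam T) {b : ℕ} (hb1 : 1 ≤ b) (hbd : b ≤ d)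
    (p : Σ s : Fin l, Fin (hcount lam T (s : ℕ) b)) : ebf lam T b p < k := by
  have h1 : offs lam T b ((p.1 : ℕ) + 1) ≤ k := by
    rw [← offs_top ht hb1 hbd]
    exact offs_le b p.1.isLt
  have h2 := offs_succ (lam := lam) (T := T) b (p.1 : ℕ)
  have h3 := p.2.isLt
  unfold ebf
  omega

lemma ebf_inj {b : ℕ} : Function.Injective (ebf (l := l) lam T b) := by
  rintro ⟨s, j⟩ ⟨s', j'⟩ h
  unfold ebf at h
  simp only at h
  have hj := j.isLt
  have hj' := j'.isLt
  rcases Nat.lt_trichotomy (s : ℕ) (s' : ℕ) with hlt | heq | hgt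
  · exfalso
    have h1 := offs_succ (lam := lam) (T := T) b (s : ℕ)
    have h2 : offs lam T b ((s : ℕ) + 1) ≤ offs lam T b s' := offs_le b (by omega)
    omega
  · have hs : s = s' := Fin.ext heq
    subst hs
    have : (j : ℕ) = (j' : ℕ) := by omega
    have : j = j' := Fin.ext this
    subst this
    rfl
  · exfalso
    have h1 := offs_succ (lam := lam) (T := T) b (s' : ℕ)
    have h2 : offs lam T b ((s' : ℕ) + 1) ≤ offs lam T b s := offs_le b (by omega)
    omega

def ABf (l : ℕ) (lam : ℕ → ℕ) (T : ℕ → ℕ → ℕ)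
    (γ : ∀ s : Fin l, Equiv.Perm (Fin (lam s))) (b : ℕ)
    (p : Σ s : Fin l, Fin (hcount lam T (s : ℕ) b)) : ℕ :=
  gIdx l lam γ p.1 (fcount lam T p.1 (b - 1) + p.2)

lemma rIdx_ebf (ht : IsTab k d l lam T) (γ : ∀ s : Fin l, Equiv.Perm (Fin (lam s)))
    {b : ℕ} (hb1 : 1 ≤ b) (hbd : b ≤ d)
    (p : Σ s : Fin l, Fin (hcount lam T (s : ℕ) b)) :
    rIdx k l lam T γ b ⟨ebf lam T b p, ebf_lt ht hb1 hbd p⟩ = ABf l lam T γ b p := by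
  unfold rIdx ABf
  set F : ℕ → List ℕ := fun s =>
    (List.range' (fcount lam T s (b - 1)) (hcount lam T s b)).map (gIdx l lam γ s) with hF
  have hFlen : ∀ s, (F s).length = hcount lam T s b := by
    intro s
    rw [hF]
    simp
  have hoffs : ebf lam T b p = (∑ s' ∈ Finset.range (p.1 : ℕ), (F s').length) + (p.2 : ℕ) := by
    unfold ebf offs
    congr 1
    exact Finset.sum_congr rfl fun s' _ => (hFlen s').symm
  show (idxList l lam T γ b).getD (ebf lam T b p) 0 = _
  rw [hoffs, idxList, ← hF, getD_flatMap_range F 0 l (p.1 : ℕ) p.1.isLt (p.2 : ℕ)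
    (by rw [hFlen]; exact p.2.isLt)]
  rw [List.getD_eq_getElem _ _ (by rw [hFlen]; exact p.2.isLt)]
  simp only [hF, List.getElem_map, List.getElem_range']
  congr 1
  omega


/-! ### `ABf` basics and swaps -/

lemma ABf_arg_lt (ht : IsTab k d l lam T) {b : ℕ} (hb1 : 1 ≤ b)
    (p : Σ s : Fin l, Fin (hcount lam T (s : ℕ) b)) :
    fcount lam T (p.1 : ℕ) (b - 1) + (p.2 : ℕ) < lam (p.1 : ℕ) := by
  have h1 := fcount_pred (lam := lam) (T := T) (p.1 : ℕ) hb1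
  have h2 := fcount_le_lam ht (p.1 : ℕ) b
  have := p.2.isLt
  omega

lemma ABf_arg_mem (ht : IsTab k d l lam T) {b : ℕ} (hb1 : 1 ≤ b)
    (p : Σ s : Fin l, Fin (hcount lam T (s : ℕ) b)) :
    fcount lam T (p.1 : ℕ) (b - 1) + (p.2 : ℕ) ∈ blockI lam T (p.1 : ℕ) b := by
  rw [blockI, Finset.mem_Ico]
  have h1 := fcount_pred (lam := lam) (T := T) (p.1 : ℕ) hb1
  have := p.2.isLt
  omega

lemma ABf_def (ht : IsTab k d l lam T) {b : ℕ} (hb1 : 1 ≤ b)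
    (γ : ∀ s : Fin l, Equiv.Perm (Fin (lam (s : ℕ))))
    (p : Σ s : Fin l, Fin (hcount lam T (s : ℕ) b)) :
    ABf l lam T γ b p
      = ((γ p.1) ⟨fcount lam T (p.1 : ℕ) (b - 1) + (p.2 : ℕ), ABf_arg_lt ht hb1 p⟩ : ℕ) := by
  unfold ABf
  rw [gIdx_eq γ p.1.isLt (ABf_arg_lt ht hb1 p)]

lemma ABf_mem_Img (ht : IsTab k d l lam T) {b : ℕ} (hb1 : 1 ≤ b)
    (γ : ∀ s : Fin l, Equiv.Perm (Fin (lam (s : ℕ))))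
    (p : Σ s : Fin l, Fin (hcount lam T (s : ℕ) b)) :
    ABf l lam T γ b p ∈ Img l lam γ T (p.1 : ℕ) b :=
  Finset.mem_image_of_mem _ (ABf_arg_mem ht hb1 p)

lemma mem_Img_iff (ht : IsTab k d l lam T) {b : ℕ} (hb1 : 1 ≤ b)
    {γ : ∀ s : Fin l, Equiv.Perm (Fin (lam (s : ℕ)))} {s : Fin l} {v : ℕ} :
    v ∈ Img l lam γ T (s : ℕ) b
      ↔ ∃ jj : Fin (hcount lam T (s : ℕ) b), ABf l lam T γ b ⟨s, jj⟩ = v := by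
  have hfp := fcount_pred (lam := lam) (T := T) (s : ℕ) hb1
  constructor
  · intro hv
    rw [Img, Finset.mem_image] at hv
    obtain ⟨j, hj, rfl⟩ := hv
    rw [blockI, Finset.mem_Ico] at hj
    refine ⟨⟨j - fcount lam T (s : ℕ) (b - 1), by omega⟩, ?_⟩
    unfold ABf
    congr 1
    simp only
    omega
  · rintro ⟨jj, rfl⟩
    exact ABf_mem_Img ht hb1 γ ⟨s, jj⟩

lemma image_ABf (ht : IsTab k d l lam T) {b : ℕ} (hb1 : 1 ≤ b)
    (γ : ∀ s : Fin l, Equiv.Perm (Fin (lam (s : ℕ)))) :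
    Finset.image (ABf l lam T γ b) Finset.univ
      = (Finset.range l).biUnion (fun s => Img l lam γ T s b) := by
  ext v
  simp only [Finset.mem_image, Finset.mem_biUnion, Finset.mem_range, Finset.mem_univ,
    true_and]
  constructor
  · rintro ⟨p, rfl⟩
    exact ⟨(p.1 : ℕ), p.1.isLt, ABf_mem_Img ht hb1 γ p⟩
  · rintro ⟨s, hs, hv⟩
    have : v ∈ Img l lam γ T ((⟨s, hs⟩ : Fin l) : ℕ) b := hv
    rw [mem_Img_iff ht hb1] at this
    obtain ⟨jj, hjj⟩ := this
    exact ⟨⟨⟨s, hs⟩, jj⟩, hjj⟩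

lemma Img_disjoint_of_inj (ht : IsTab k d l lam T) {b : ℕ} (hb1 : 1 ≤ b)
    {γ : ∀ s : Fin l, Equiv.Perm (Fin (lam (s : ℕ)))}
    (hinj : Function.Injective (ABf l lam T γ b)) :
    ∀ s ∈ Finset.range l, ∀ s' ∈ Finset.range l, s ≠ s' →
      Disjoint (Img l lam γ T s b) (Img l lam γ T s' b) := by
  intro s hs s' hs' hne
  rw [Finset.mem_range] at hs hs'
  rw [Finset.disjoint_left]
  intro v hv hv'
  have h1 : v ∈ Img l lam γ T ((⟨s, hs⟩ : Fin l) : ℕ) b := hv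
  have h2 : v ∈ Img l lam γ T ((⟨s', hs'⟩ : Fin l) : ℕ) b := hv'
  rw [mem_Img_iff ht hb1] at h1 h2
  obtain ⟨jj, hjj⟩ := h1
  obtain ⟨jj', hjj'⟩ := h2
  have := hinj (hjj.trans hjj'.symm)
  exact hne (congrArg (fun q => ((Sigma.fst q : Fin l) : ℕ)) this)

lemma swap_conj {α β : Type*} [DecidableEq α] [DecidableEq β] (e : α ≃ β) (p q : α)
    (i : β) : e.symm (Equiv.swap (e p) (e q) i) = Equiv.swap p q (e.symm i) := by
  rcases eq_or_ne i (e p) with rfl | hp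
  · simp [Equiv.swap_apply_left]
  · rcases eq_or_ne i (e q) with rfl | hq
    · simp [Equiv.swap_apply_right]
    · rw [Equiv.swap_apply_of_ne_of_ne hp hq, Equiv.swap_apply_of_ne_of_ne]
      · intro hcon
        exact hp (by rw [← (e.apply_symm_apply i), hcon])
      · intro hcon
        exact hq (by rw [← (e.apply_symm_apply i), hcon])

lemma ABf_update_other (ht : IsTab k d l lam T) {s0 : Fin l} {x y : Fin (lam (s0 : ℕ))}
    {b : ℕ} (hb1 : 1 ≤ b) (hbx : T (s0 : ℕ) (x : ℕ) ≠ b) (hby : T (s0 : ℕ) (y : ℕ) ≠ b)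
    (γ : ∀ s : Fin l, Equiv.Perm (Fin (lam (s : ℕ)))) :
    ABf l lam T (Function.update γ s0 (γ s0 * Equiv.swap x y)) b = ABf l lam T γ b := by
  funext p
  rcases p with ⟨s, jj⟩
  by_cases hs : s = s0
  · subst hs
    rw [ABf_def ht hb1 _ ⟨s, jj⟩, ABf_def ht hb1 γ ⟨s, jj⟩]
    rw [Function.update_self]
    rw [Equiv.Perm.mul_apply]
    congr 2
    have hmem := ABf_arg_mem ht hb1 (⟨s, jj⟩ : Σ s : Fin l, Fin (hcount lam T (s : ℕ) b))
    have hTval := ((mem_blockI ht hb1).mp hmem).2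
    apply Equiv.swap_apply_of_ne_of_ne
    · intro hcon
      apply hbx
      rw [← hTval]
      congr 1
      exact (congrArg Fin.val hcon).symm
    · intro hcon
      apply hby
      rw [← hTval]
      congr 1
      exact (congrArg Fin.val hcon).symm
  · rw [ABf_def ht hb1 _ ⟨s, jj⟩, ABf_def ht hb1 γ ⟨s, jj⟩]
    rw [Function.update_of_ne hs]

lemma ABf_update_swap (ht : IsTab k d l lam T) {s0 : Fin l} {x y : Fin (lam (s0 : ℕ))}
    (hxy : x ≠ y) (hTxy : T (s0 : ℕ) (y : ℕ) = T (s0 : ℕ) (x : ℕ))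
    (γ : ∀ s : Fin l, Equiv.Perm (Fin (lam (s : ℕ)))) :
    ∃ P1 P2 : Σ s : Fin l, Fin (hcount lam T (s : ℕ) (T (s0 : ℕ) (x : ℕ))),
      P1 ≠ P2 ∧ ∀ p, ABf l lam T (Function.update γ s0 (γ s0 * Equiv.swap x y))
          (T (s0 : ℕ) (x : ℕ)) p
        = ABf l lam T γ (T (s0 : ℕ) (x : ℕ)) (Equiv.swap P1 P2 p) := by
  set b := T (s0 : ℕ) (x : ℕ) with hbdef
  have hb1 : 1 ≤ b := (ht.1 _ _ x.isLt).1
  have hxmem : (x : ℕ) ∈ blockI lam T (s0 : ℕ) b := (mem_blockI ht hb1).mpr ⟨x.isLt, rfl⟩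
  have hymem : (y : ℕ) ∈ blockI lam T (s0 : ℕ) b := (mem_blockI ht hb1).mpr ⟨y.isLt, hTxy⟩
  rw [blockI, Finset.mem_Ico] at hxmem hymem
  have hfp := fcount_pred (lam := lam) (T := T) (s0 : ℕ) hb1
  set f0 := fcount lam T (s0 : ℕ) (b - 1) with hf0
  refine ⟨⟨s0, ⟨(x : ℕ) - f0, by omega⟩⟩, ⟨s0, ⟨(y : ℕ) - f0, by omega⟩⟩, ?_, ?_⟩
  · intro hcon
    apply hxy
    have h2 := congrArg (fun q : Σ s : Fin l, Fin (hcount lam T (s : ℕ) b) =>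
      ((q.2 : ℕ) : ℕ)) hcon
    simp only at h2
    apply Fin.ext
    omega
  · intro p
    rcases p with ⟨s, jj⟩
    by_cases hs : s = s0
    · subst hs
      by_cases hjx : (jj : ℕ) = (x : ℕ) - f0
      · have hPP : (⟨s, jj⟩ : Σ s : Fin l, Fin (hcount lam T (s : ℕ) b))
            = ⟨s, ⟨(x : ℕ) - f0, by omega⟩⟩ := by
          congr 1
          exact Fin.ext hjx
        rw [hPP, Equiv.swap_apply_left]
        rw [ABf_def ht hb1 _ _, ABf_def ht hb1 γ _]
        rw [Function.update_self, Equiv.Perm.mul_apply]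
        congr 1
        have h1 : (⟨f0 + ((x : ℕ) - f0), by
            exact ABf_arg_lt ht hb1 ⟨s, ⟨(x : ℕ) - f0, by omega⟩⟩⟩ : Fin (lam (s : ℕ))) = x :=
          Fin.ext (by simp only; omega)
        have h2 : (⟨f0 + ((y : ℕ) - f0), by
            exact ABf_arg_lt ht hb1 ⟨s, ⟨(y : ℕ) - f0, by omega⟩⟩⟩ : Fin (lam (s : ℕ))) = y :=
          Fin.ext (by simp only; omega)
        rw [h1, h2, Equiv.swap_apply_left]
      · by_cases hjy : (jj : ℕ) = (y : ℕ) - f0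
        · have hPP : (⟨s, jj⟩ : Σ s : Fin l, Fin (hcount lam T (s : ℕ) b))
              = ⟨s, ⟨(y : ℕ) - f0, by omega⟩⟩ := by
            congr 1
            exact Fin.ext hjy
          rw [hPP, Equiv.swap_apply_right]
          rw [ABf_def ht hb1 _ _, ABf_def ht hb1 γ _]
          rw [Function.update_self, Equiv.Perm.mul_apply]
          congr 1
          have h1 : (⟨f0 + ((y : ℕ) - f0), by
              exact ABf_arg_lt ht hb1 ⟨s, ⟨(y : ℕ) - f0, by omega⟩⟩⟩ : Fin (lam (s : ℕ))) = y :=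
            Fin.ext (by simp only; omega)
          have h2 : (⟨f0 + ((x : ℕ) - f0), by
              exact ABf_arg_lt ht hb1 ⟨s, ⟨(x : ℕ) - f0, by omega⟩⟩⟩ : Fin (lam (s : ℕ))) = x :=
            Fin.ext (by simp only; omega)
          rw [h1, h2, Equiv.swap_apply_right]
        · have hne1 : (⟨s, jj⟩ : Σ s : Fin l, Fin (hcount lam T (s : ℕ) b))
              ≠ ⟨s, ⟨(x : ℕ) - f0, by omega⟩⟩ := by
            intro hcon
            apply hjx
            have h2 := congrArg (fun q : Σ s : Fin l, Fin (hcount lam T (s : ℕ) b) =>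
              ((q.2 : ℕ) : ℕ)) hcon
            simpa using h2
          have hne2 : (⟨s, jj⟩ : Σ s : Fin l, Fin (hcount lam T (s : ℕ) b))
              ≠ ⟨s, ⟨(y : ℕ) - f0, by omega⟩⟩ := by
            intro hcon
            apply hjy
            have h2 := congrArg (fun q : Σ s : Fin l, Fin (hcount lam T (s : ℕ) b) =>
              ((q.2 : ℕ) : ℕ)) hcon
            simpa using h2
          rw [Equiv.swap_apply_of_ne_of_ne hne1 hne2]
          rw [ABf_def ht hb1 _ _, ABf_def ht hb1 γ _]
          rw [Function.update_self, Equiv.Perm.mul_apply]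
          have harg : (Equiv.swap x y)
              ⟨fcount lam T (s : ℕ) (b - 1) + (jj : ℕ),
                ABf_arg_lt ht hb1 ⟨s, jj⟩⟩
              = ⟨fcount lam T (s : ℕ) (b - 1) + (jj : ℕ),
                ABf_arg_lt ht hb1 ⟨s, jj⟩⟩ := by
            apply Equiv.swap_apply_of_ne_of_ne
            · intro hcon
              apply hjx
              have := congrArg Fin.val hcon
              simp only at this
              omega
            · intro hcon
              apply hjy
              have := congrArg Fin.val hcon
              simp only at this
              omega
          exact congrArg (fun z => ((γ s) z : ℕ)) harg
    · have hne1 : (⟨s, jj⟩ : Σ s : Fin l, Fin (hcount lam T (s : ℕ) b))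
          ≠ ⟨s0, ⟨(x : ℕ) - f0, by omega⟩⟩ := by
        intro hcon
        exact hs (congrArg Sigma.fst hcon)
      have hne2 : (⟨s, jj⟩ : Σ s : Fin l, Fin (hcount lam T (s : ℕ) b))
          ≠ ⟨s0, ⟨(y : ℕ) - f0, by omega⟩⟩ := by
        intro hcon
        exact hs (congrArg Sigma.fst hcon)
      rw [Equiv.swap_apply_of_ne_of_ne hne1 hne2]
      rw [ABf_def ht hb1 _ _, ABf_def ht hb1 γ _]
      rw [Function.update_of_ne hs]


/-! ### the measure and the constancy argument -/

def msr (γ : ∀ s : Fin l, Equiv.Perm (Fin (lam (s : ℕ)))) : ℕ :=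
  ∑ s : Fin l, (Finset.univ.filter fun j : Fin (lam (s : ℕ)) => γ s j ≠ j).card

lemma signprod_update (γ : ∀ s : Fin l, Equiv.Perm (Fin (lam (s : ℕ)))) (s0 : Fin l)
    (e : Equiv.Perm (Fin (lam (s0 : ℕ)))) :
    (∏ s : Fin l, (Equiv.Perm.sign ((Function.update γ s0 e) s) : ℤ))
      = (Equiv.Perm.sign e : ℤ) * ∏ s ∈ Finset.univ.erase s0, (Equiv.Perm.sign (γ s) : ℤ) := by
  have hpt : ∀ s : Fin l, (Equiv.Perm.sign ((Function.update γ s0 e) s) : ℤ)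
      = Function.update (fun s : Fin l => (Equiv.Perm.sign (γ s) : ℤ)) s0
          (Equiv.Perm.sign e : ℤ) s := by
    intro s
    by_cases hs : s = s0
    · subst hs
      rw [Function.update_self, Function.update_self]
    · rw [Function.update_of_ne hs, Function.update_of_ne hs]
  rw [Finset.prod_congr rfl fun s _ => hpt s]
  rw [Finset.prod_update_of_mem (Finset.mem_univ s0), Finset.sdiff_singleton_eq_erase]

lemma signprod_self (γ : ∀ s : Fin l, Equiv.Perm (Fin (lam (s : ℕ)))) (s0 : Fin l) :
    (∏ s : Fin l, (Equiv.Perm.sign (γ s) : ℤ))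
      = (Equiv.Perm.sign (γ s0) : ℤ) * ∏ s ∈ Finset.univ.erase s0, (Equiv.Perm.sign (γ s) : ℤ) :=
  (Finset.mul_prod_erase Finset.univ _ (Finset.mem_univ s0)).symm

lemma F_const {T : ℕ → ℕ → ℕ} (G : (∀ s : Fin l, Equiv.Perm (Fin (lam (s : ℕ)))) → ℂ)
    (hswap : ∀ (γ : ∀ s : Fin l, Equiv.Perm (Fin (lam (s : ℕ)))) (s0 : Fin l)
      (x y : Fin (lam (s0 : ℕ))), x ≠ y → T (s0 : ℕ) (y : ℕ) = T (s0 : ℕ) (x : ℕ) →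
      G (Function.update γ s0 (γ s0 * Equiv.swap x y)) = - G γ) :
    ∀ n (γ : ∀ s : Fin l, Equiv.Perm (Fin (lam (s : ℕ)))), msr γ ≤ n →
      (∀ (s : Fin l) (j : Fin (lam (s : ℕ))), T (s : ℕ) ((γ s j : ℕ)) = T (s : ℕ) (j : ℕ)) →
      ((∏ s : Fin l, (Equiv.Perm.sign (γ s) : ℤ)) : ℂ) * G γ = G 1 := by
  intro n
  induction n with
  | zero =>
    intro γ hm _
    have htriv : ∀ s : Fin l, γ s = 1 := by
      intro s
      ext j
      by_contra hj
      have h1 : 0 < (Finset.univ.filter fun j : Fin (lam (s : ℕ)) => γ s j ≠ j).card := by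
        rw [Finset.card_pos]
        exact ⟨j, Finset.mem_filter.mpr ⟨Finset.mem_univ j, fun hc => hj (by rw [hc]; rfl)⟩⟩
      have h2 : (Finset.univ.filter fun j : Fin (lam (s : ℕ)) => γ s j ≠ j).card ≤ msr γ :=
        Finset.single_le_sum
          (f := fun s : Fin l => (Finset.univ.filter fun j : Fin (lam (s : ℕ)) => γ s j ≠ j).card)
          (fun _ _ => Nat.zero_le _) (Finset.mem_univ s)
      omega
    have : γ = 1 := funext htriv
    subst this
    simp
  | succ n ih =>
    intro γ hm hbp
    by_cases htriv : ∀ s : Fin l, γ s = 1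
    · have : γ = 1 := funext htriv
      subst this
      simp
    · push_neg at htriv
      obtain ⟨s0, hs0⟩ := htriv
      obtain ⟨j1, hj1⟩ : ∃ j1, γ s0 j1 ≠ j1 := by
        by_contra hc
        push_neg at hc
        exact hs0 (Equiv.ext hc)
      have hyx : γ s0 ((γ s0)⁻¹ j1) = j1 := (γ s0).apply_symm_apply j1
      set x := j1 with hxdef
      set y := (γ s0)⁻¹ j1 with hydef
      have hxy : x ≠ y := by
        intro hcon
        apply hj1
        have h1 : γ s0 x = γ s0 y := by rw [← hcon]
        rw [h1, hyx]
      have hTxy : T (s0 : ℕ) (y : ℕ) = T (s0 : ℕ) (x : ℕ) := by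
        have h1 := hbp s0 y
        rw [hyx] at h1
        exact h1.symm
      set γ' := Function.update γ s0 (γ s0 * Equiv.swap x y) with hγ'
      have hG : G γ' = - G γ := hswap γ s0 x y hxy hTxy
      have hγ's : ∀ s : Fin l, s ≠ s0 → γ' s = γ s := fun s hs =>
        Function.update_of_ne hs _ _
      have hγ's0 : γ' s0 = γ s0 * Equiv.swap x y := Function.update_self _ _ _
      have hfix : ∀ j : Fin (lam (s0 : ℕ)), γ s0 j = j → γ' s0 j = j := by
        intro j hj
        rw [hγ's0, Equiv.Perm.mul_apply]
        have hjx : j ≠ x := by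
          intro hcon
          rw [hcon] at hj
          exact hj1 hj
        have hjy : j ≠ y := by
          intro hcon
          rw [hcon] at hj
          rw [hyx] at hj
          exact hxy hj
        rw [Equiv.swap_apply_of_ne_of_ne hjx hjy, hj]
      have hfixx : γ' s0 x = x := by
        rw [hγ's0, Equiv.Perm.mul_apply, Equiv.swap_apply_left, hyx]
      have hmsr : msr γ' ≤ n := by
        have hsub : (Finset.univ.filter fun j : Fin (lam (s0 : ℕ)) => γ' s0 j ≠ j)
            ⊆ (Finset.univ.filter fun j : Fin (lam (s0 : ℕ)) => γ s0 j ≠ j).erase x := by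
          intro j hj
          rw [Finset.mem_filter] at hj
          rw [Finset.mem_erase, Finset.mem_filter]
          refine ⟨?_, Finset.mem_univ j, ?_⟩
          · intro hcon
            rw [hcon] at hj
            exact hj.2 hfixx
          · intro hcon
            exact hj.2 (hfix j hcon)
        have hxmem : x ∈ (Finset.univ.filter fun j : Fin (lam (s0 : ℕ)) => γ s0 j ≠ j) :=
          Finset.mem_filter.mpr ⟨Finset.mem_univ x, hj1⟩
        have hcard : (Finset.univ.filter fun j : Fin (lam (s0 : ℕ)) => γ' s0 j ≠ j).card
            < (Finset.univ.filter fun j : Fin (lam (s0 : ℕ)) => γ s0 j ≠ j).card := by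
          have h1 := Finset.card_le_card hsub
          have h2 := Finset.card_erase_of_mem hxmem
          have h3 : 0 < (Finset.univ.filter fun j : Fin (lam (s0 : ℕ)) => γ s0 j ≠ j).card :=
            Finset.card_pos.mpr ⟨x, hxmem⟩
          omega
        have hrest : ∀ s : Fin l, s ≠ s0 →
            (Finset.univ.filter fun j : Fin (lam (s : ℕ)) => γ' s j ≠ j).card
              = (Finset.univ.filter fun j : Fin (lam (s : ℕ)) => γ s j ≠ j).card := by
          intro s hs
          rw [hγ's s hs]
        unfold msr at hm ⊢
        rw [← Finset.sum_erase_add _ _ (Finset.mem_univ s0)] at hm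
        rw [← Finset.sum_erase_add _ _ (Finset.mem_univ s0)]
        have heq : (∑ s ∈ Finset.univ.erase s0,
            (Finset.univ.filter fun j : Fin (lam (s : ℕ)) => γ' s j ≠ j).card)
            = ∑ s ∈ Finset.univ.erase s0,
            (Finset.univ.filter fun j : Fin (lam (s : ℕ)) => γ s j ≠ j).card := by
          refine Finset.sum_congr rfl fun s hs => ?_
          exact hrest s (Finset.ne_of_mem_erase hs)
        omega
      have hbp' : ∀ (s : Fin l) (j : Fin (lam (s : ℕ))),
          T (s : ℕ) ((γ' s j : ℕ)) = T (s : ℕ) (j : ℕ) := by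
        intro s j
        by_cases hs : s = s0
        · subst hs
          rw [hγ's0, Equiv.Perm.mul_apply]
          rcases eq_or_ne j x with rfl | hjx
          · rw [Equiv.swap_apply_left, hbp s y, hTxy]
          · rcases eq_or_ne j y with rfl | hjy
            · rw [Equiv.swap_apply_right, hbp s x, hTxy]
            · rw [Equiv.swap_apply_of_ne_of_ne hjx hjy, hbp s j]
        · rw [hγ's s hs]
          exact hbp s j
      have hIH := ih γ' hmsr hbp'
      have hsign : ((∏ s : Fin l, (Equiv.Perm.sign (γ' s) : ℤ)) : ℤ)
          = - ∏ s : Fin l, (Equiv.Perm.sign (γ s) : ℤ) := by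
        rw [hγ', signprod_update, signprod_self γ s0]
        rw [Equiv.Perm.sign_mul, Equiv.Perm.sign_swap hxy]
        push_cast
        ring
      have hsignC : (∏ s : Fin l, ((Equiv.Perm.sign (γ' s) : ℤ) : ℂ))
          = -(∏ s : Fin l, ((Equiv.Perm.sign (γ s) : ℤ) : ℂ)) := by
        have hc := congrArg (fun z : ℤ => (z : ℂ)) hsign
        push_cast at hc
        exact hc
      rw [← hIH, hsignC, hG]
      ring

/-! ### determinants of 0/1 row-selection matrices -/

def rowMat (k : ℕ) (c a : Fin k → ℕ) : Matrix (Fin k) (Fin k) ℂ :=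
  Matrix.of fun i j => if c j = a i then 1 else 0

lemma rowMat_det_zero_of_not_inj {c a : Fin k → ℕ} (h : ¬ Function.Injective a) :
    (rowMat k c a).det = 0 := by
  rw [Function.not_injective_iff] at h
  obtain ⟨i, i', hval, hne⟩ := h
  apply Matrix.det_zero_of_row_eq hne
  funext j
  simp only [rowMat, Matrix.of_apply, hval]

lemma rowMat_det_zero_of_not_mem {c a : Fin k → ℕ} (i : Fin k) (h : ∀ j, c j ≠ a i) :
    (rowMat k c a).det = 0 :=
  Matrix.det_eq_zero_of_row_eq_zero i fun j => by simp only [rowMat, Matrix.of_apply,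
    if_neg (h j)]

lemma rowMat_det_ne_zero {c a : Fin k → ℕ} (hc : Function.Injective c)
    (ha : Function.Injective a)
    (him : Finset.image a Finset.univ = Finset.image c Finset.univ) :
    (rowMat k c a).det ≠ 0 := by
  have hex : ∀ i, ∃ j, c j = a i := by
    intro i
    have h1 : a i ∈ Finset.image c Finset.univ :=
      him ▸ Finset.mem_image_of_mem a (Finset.mem_univ i)
    rw [Finset.mem_image] at h1
    obtain ⟨j, _, hj⟩ := h1
    exact ⟨j, hj⟩
  choose g hg using hex
  have hginj : Function.Injective g := by
    intro i i' h
    apply ha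
    rw [← hg i, ← hg i', h]
  have hgbij := Finite.injective_iff_bijective.mp hginj
  set σ : Equiv.Perm (Fin k) := Equiv.ofBijective g hgbij with hσ
  have hσi : ∀ i, σ i = g i := fun i => rfl
  have hmat : rowMat k c a = Equiv.Perm.permMatrix ℂ σ := by
    ext i j
    show (if c j = a i then (1 : ℂ) else 0) = (σ.toPEquiv).toMatrix i j
    rw [PEquiv.toMatrix_apply, Equiv.toPEquiv_apply]
    by_cases hji : j = σ i
    · subst hji
      have h1 : c (σ i) = a i := by rw [hσi]; exact hg i
      rw [if_pos h1, if_pos (by rw [Option.mem_def])]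
    · have h1 : c j ≠ a i := by
        rw [← hg i]
        intro h
        exact hji (by rw [hc h, hσi])
      rw [if_neg h1, if_neg (by rw [Option.mem_def, Option.some.injEq]; exact fun h => hji h.symm)]
  rw [hmat, Matrix.det_permutation]
  rcases Int.units_eq_one_or (Equiv.Perm.sign σ) with h | h <;> rw [h] <;> norm_num

lemma rowMat_det_comp_perm (c a : Fin k → ℕ) (π : Equiv.Perm (Fin k)) :
    (rowMat k c (a ∘ π)).det = (Equiv.Perm.sign π : ℤ) * (rowMat k c a).det := by
  have hm : rowMat k c (a ∘ π) = (rowMat k c a).submatrix π id := rfl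
  rw [hm, Matrix.det_permute]

/-! ### the linear functionals -/

def coordL (N m : ℕ) : (Fin N → ℂ) →ₗ[ℂ] ℂ :=
  if h : m < N then LinearMap.proj ⟨m, h⟩ else 0

lemma coordL_E {N m c : ℕ} (hc : c < N) : coordL N c (E N m) = if c = m then 1 else 0 := by
  rw [coordL, dif_pos hc]
  rfl

def detA (k N : ℕ) (c : Fin k → ℕ) : ((Fin N → ℂ) [⋀^Fin k]→ₗ[ℂ] ℂ) :=
  (Matrix.detRowAlternating).compLinearMap (LinearMap.pi fun j => coordL N (c j))

lemma detA_apply (c : Fin k → ℕ) (v : Fin k → (Fin N → ℂ)) :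
    detA k N c v = Matrix.det (Matrix.of fun i j => coordL N (c j) (v i)) := rfl

def famA (k N : ℕ) (c : Fin k → ℕ) : ∀ i : ℕ, ((Fin N → ℂ) [⋀^Fin i]→ₗ[ℂ] ℂ) :=
  Function.update (fun i => (0 : (Fin N → ℂ) [⋀^Fin i]→ₗ[ℂ] ℂ)) k (detA k N c)

def psiL (k N : ℕ) (c : Fin k → ℕ) : (⋀[ℂ]^k (Fin N → ℂ)) →ₗ[ℂ] ℂ :=
  (ExteriorAlgebra.liftAlternating (famA k N c)).comp (Submodule.subtype _)

lemma psiL_tFactor (c : Fin k → ℕ) (γ : ∀ s : Fin l, Equiv.Perm (Fin (lam (s : ℕ))))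
    (b : ℕ) : psiL k N c (tFactor k N l lam T γ b)
      = detA k N c fun i : Fin k => (factorList N l lam T γ b).getD i 0 := by
  unfold psiL tFactor
  rw [LinearMap.comp_apply, Submodule.subtype_apply,
    ExteriorAlgebra.liftAlternating_apply_ιMulti]
  unfold famA
  rw [Function.update_self]

def phiL (k d N : ℕ) (c : Fin d → Fin k → ℕ) :
    (⨂[ℂ]^d (⋀[ℂ]^k (Fin N → ℂ))) →ₗ[ℂ] ℂ :=
  PiTensorProduct.lift ((MultilinearMap.mkPiAlgebra ℂ (Fin d) ℂ).compLinearMap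
    (fun g => psiL k N (c g)))

lemma phiL_tTensor (c : Fin d → Fin k → ℕ) (γ : ∀ s : Fin l, Equiv.Perm (Fin (lam (s : ℕ)))) :
    phiL k d N c (tTensor k d N l lam T γ)
      = ∏ g : Fin d, psiL k N (c g) (tFactor k N l lam T γ ((g : ℕ) + 1)) := by
  unfold phiL tTensor
  rw [PiTensorProduct.lift.tprod]
  rw [MultilinearMap.compLinearMap_apply, MultilinearMap.mkPiAlgebra_apply]

lemma detA_factorList (ht : IsTab k d l lam T) (γ : ∀ s : Fin l, Equiv.Perm (Fin (lam (s : ℕ))))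
    {b : ℕ} (hb1 : 1 ≤ b) (hbd : b ≤ d) (c : Fin k → ℕ) (hc : ∀ j, c j < N) :
    (detA k N c fun i : Fin k => (factorList N l lam T γ b).getD i 0)
      = (rowMat k c (rIdx k l lam T γ b)).det := by
  rw [detA_apply]
  congr 1
  ext i j
  simp only [Matrix.of_apply]
  have hgd : (factorList N l lam T γ b).getD (i : ℕ) 0 = E N (rIdx k l lam T γ b i) := by
    rw [factorList_eq, List.getD_eq_getElem _ _
      (by rw [List.length_map, idxList_length ht γ hb1 hbd]; exact i.isLt),
      List.getElem_map]
    rw [rIdx, List.getD_eq_getElem _ _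
      (by rw [idxList_length ht γ hb1 hbd]; exact i.isLt)]
  rw [hgd, coordL_E (hc j)]
  rfl


/-! ### the position equivalence and identity facts -/

def mkEb (ht : IsTab k d l lam T) {b : ℕ} (hb1 : 1 ≤ b) (hbd : b ≤ d) :
    (Σ s : Fin l, Fin (hcount lam T (s : ℕ) b)) ≃ Fin k :=
  Equiv.ofBijective (fun p => ⟨ebf lam T b p, ebf_lt ht hb1 hbd p⟩)
    ((Fintype.bijective_iff_injective_and_card _).mpr
      ⟨fun p q h => ebf_inj (congrArg Fin.val h), by
        rw [Fintype.card_sigma, Fintype.card_fin]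
        simp only [Fintype.card_fin]
        rw [Fin.sum_univ_eq_sum_range (fun s => hcount lam T s b)]
        exact ht.2.2.2.2 b hb1 hbd⟩)

lemma rIdx_mkEb (ht : IsTab k d l lam T) (γ : ∀ s : Fin l, Equiv.Perm (Fin (lam (s : ℕ))))
    {b : ℕ} (hb1 : 1 ≤ b) (hbd : b ≤ d) (p : Σ s : Fin l, Fin (hcount lam T (s : ℕ) b)) :
    rIdx k l lam T γ b (mkEb ht hb1 hbd p) = ABf l lam T γ b p :=
  rIdx_ebf ht γ hb1 hbd p

lemma rIdx_eq_ABf (ht : IsTab k d l lam T) (γ : ∀ s : Fin l, Equiv.Perm (Fin (lam (s : ℕ))))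
    {b : ℕ} (hb1 : 1 ≤ b) (hbd : b ≤ d) (i : Fin k) :
    rIdx k l lam T γ b i = ABf l lam T γ b ((mkEb ht hb1 hbd).symm i) := by
  conv_lhs => rw [← Equiv.apply_symm_apply (mkEb ht hb1 hbd) i]
  exact rIdx_mkEb ht γ hb1 hbd _

lemma gIdx_one {s j : ℕ} (hs : s < l) (hj : j < lam s) :
    gIdx l lam (1 : ∀ s : Fin l, Equiv.Perm (Fin (lam (s : ℕ)))) s j = j := by
  rw [gIdx_eq _ hs hj]
  rfl

lemma Img_one (ht : IsTab k d l lam T) {s b : ℕ} (hs : s < l) (hb1 : 1 ≤ b) :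
    Img l lam (1 : ∀ s : Fin l, Equiv.Perm (Fin (lam (s : ℕ)))) T s b = blockI lam T s b := by
  ext v
  simp only [Img, Finset.mem_image]
  constructor
  · rintro ⟨j, hj, rfl⟩
    rwa [gIdx_one hs (mem_blockI_lt ht hb1 hj)]
  · intro hv
    exact ⟨v, hv, gIdx_one hs (mem_blockI_lt ht hb1 hv)⟩

lemma ABf_one_inj (ht : IsTab k d l lam T) (hanti : Antitone lam) {b : ℕ} (hb1 : 1 ≤ b) :
    Function.Injective (ABf l lam T (1 : ∀ s : Fin l, Equiv.Perm (Fin (lam (s : ℕ)))) b) := by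
  intro p q h
  have hp : ABf l lam T 1 b p = fcount lam T (p.1 : ℕ) (b - 1) + (p.2 : ℕ) := by
    unfold ABf
    exact gIdx_one p.1.isLt (ABf_arg_lt ht hb1 p)
  have hq : ABf l lam T 1 b q = fcount lam T (q.1 : ℕ) (b - 1) + (q.2 : ℕ) := by
    unfold ABf
    exact gIdx_one q.1.isLt (ABf_arg_lt ht hb1 q)
  have hpm := ABf_arg_mem ht hb1 p
  have hqm := ABf_arg_mem ht hb1 q
  have hfst : p.1 = q.1 := by
    by_contra hne
    have hdisj := blockI_disjoint ht hanti
      (fun hc : (p.1 : ℕ) = (q.1 : ℕ) => hne (Fin.ext hc)) hb1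
    rw [Finset.disjoint_left] at hdisj
    apply hdisj hpm
    rw [hp, hq] at h
    rw [show fcount lam T (p.1 : ℕ) (b - 1) + (p.2 : ℕ)
      = fcount lam T (q.1 : ℕ) (b - 1) + (q.2 : ℕ) from h] at hpm ⊢
    exact hqm
  rcases p with ⟨ps, pj⟩
  rcases q with ⟨qs, qj⟩
  simp only at hfst
  subst hfst
  rw [hp, hq] at h
  simp only at h
  have : pj = qj := Fin.ext (by omega)
  rw [this]

lemma image_rIdx_eq (ht : IsTab k d l lam T) (γ : ∀ s : Fin l, Equiv.Perm (Fin (lam (s : ℕ))))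
    {b : ℕ} (hb1 : 1 ≤ b) (hbd : b ≤ d) :
    Finset.image (rIdx k l lam T γ b) Finset.univ
      = Finset.image (ABf l lam T γ b) Finset.univ := by
  have h1 : rIdx k l lam T γ b ∘ (mkEb ht hb1 hbd) = ABf l lam T γ b :=
    funext fun p => rIdx_mkEb ht γ hb1 hbd p
  rw [← h1, ← Finset.image_image, Finset.image_univ_equiv]

lemma rIdx_inj_iff (ht : IsTab k d l lam T) (γ : ∀ s : Fin l, Equiv.Perm (Fin (lam (s : ℕ))))
    {b : ℕ} (hb1 : 1 ≤ b) (hbd : b ≤ d) :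
    Function.Injective (rIdx k l lam T γ b) ↔ Function.Injective (ABf l lam T γ b) := by
  constructor
  · intro h
    have h1 : ABf l lam T γ b = rIdx k l lam T γ b ∘ (mkEb ht hb1 hbd) :=
      (funext fun p => rIdx_mkEb ht γ hb1 hbd p).symm
    rw [h1]
    exact h.comp (mkEb ht hb1 hbd).injective
  · intro h
    have h1 : rIdx k l lam T γ b = ABf l lam T γ b ∘ (mkEb ht hb1 hbd).symm :=
      funext fun i => rIdx_eq_ABf ht γ hb1 hbd i
    rw [h1]
    exact h.comp (mkEb ht hb1 hbd).symm.injective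

/-- from nonvanishing of all the determinants, the hypotheses of `Cfull`. -/
lemma dets_consequence {T0 : ℕ → ℕ → ℕ} (ht0 : IsTab k d l lam T0) (ht : IsTab k d l lam T)
    (hd : 0 < d) (c : Fin d → Fin k → ℕ)
    (hcim : ∀ g : Fin d, Finset.image (c g) Finset.univ = Sb l lam T0 ((g : ℕ) + 1))
    (γ : ∀ s : Fin l, Equiv.Perm (Fin (lam (s : ℕ))))
    (hdet : ∀ g : Fin d, (rowMat k (c g) (rIdx k l lam T γ ((g : ℕ) + 1))).det ≠ 0) :
    (∀ b, 1 ≤ b → b ≤ d → ∀ s ∈ Finset.range l, ∀ s' ∈ Finset.range l, s ≠ s' →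
      Disjoint (Img l lam γ T s b) (Img l lam γ T s' b))
    ∧ (∀ b, 1 ≤ b → b ≤ d →
      (Finset.range l).biUnion (fun s => Img l lam γ T s b) = Sb l lam T0 b) := by
  have key : ∀ b, 1 ≤ b → b ≤ d → Function.Injective (ABf l lam T γ b)
      ∧ Finset.image (ABf l lam T γ b) Finset.univ = Sb l lam T0 b := by
    intro b hb1 hbd
    set g : Fin d := ⟨b - 1, by omega⟩ with hg
    have hgb : (g : ℕ) + 1 = b := by rw [hg]; simp; omega
    have hdetg := hdet g
    rw [hgb] at hdetg
    have hinj : Function.Injective (rIdx k l lam T γ b) := by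
      by_contra hcon
      exact hdetg (rowMat_det_zero_of_not_inj hcon)
    have hmem : ∀ i, ∃ j, c g j = rIdx k l lam T γ b i := by
      intro i
      by_contra hcon
      push_neg at hcon
      exact hdetg (rowMat_det_zero_of_not_mem i hcon)
    have hsub : Finset.image (rIdx k l lam T γ b) Finset.univ
        ⊆ Finset.image (c g) Finset.univ := by
      intro v hv
      rw [Finset.mem_image] at hv ⊢
      obtain ⟨i, _, rfl⟩ := hv
      obtain ⟨j, hj⟩ := hmem i
      exact ⟨j, Finset.mem_univ j, hj⟩
    have hcount1 : (Finset.image (rIdx k l lam T γ b) Finset.univ).card = k := by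
      rw [Finset.card_image_of_injective _ hinj, Finset.card_univ, Fintype.card_fin]
    have hcount2 : (Finset.image (c g) Finset.univ).card ≤ k := by
      apply le_trans (Finset.card_image_le)
      rw [Finset.card_univ, Fintype.card_fin]
    have him : Finset.image (rIdx k l lam T γ b) Finset.univ
        = Finset.image (c g) Finset.univ :=
      Finset.eq_of_subset_of_card_le hsub (by omega)
    refine ⟨(rIdx_inj_iff ht γ hb1 hbd).mp hinj, ?_⟩
    rw [← image_rIdx_eq ht γ hb1 hbd, him, hcim g, hgb]
  constructor
  · intro b hb1 hbd
    exact Img_disjoint_of_inj ht hb1 (key b hb1 hbd).1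
  · intro b hb1 hbd
    rw [← image_ABf ht hb1 γ, (key b hb1 hbd).2]


/-- flipping by a block transposition negates the product of determinants. -/
lemma GG_swap (ht0 : IsTab k d l lam T) (hd : 0 < d) (c : Fin d → Fin k → ℕ)
    (γ : ∀ s : Fin l, Equiv.Perm (Fin (lam (s : ℕ)))) (s0 : Fin l)
    (x y : Fin (lam (s0 : ℕ))) (hxy : x ≠ y)
    (hTxy : T (s0 : ℕ) (y : ℕ) = T (s0 : ℕ) (x : ℕ)) :
    (∏ gg : Fin d, (rowMat k (c gg)
        (rIdx k l lam T (Function.update γ s0 (γ s0 * Equiv.swap x y)) ((gg : ℕ) + 1))).det)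
      = - ∏ gg : Fin d, (rowMat k (c gg) (rIdx k l lam T γ ((gg : ℕ) + 1))).det := by
  set γ' := Function.update γ s0 (γ s0 * Equiv.swap x y) with hγ'
  set bstar := T (s0 : ℕ) (x : ℕ) with hbs
  have hb1 : 1 ≤ bstar := (ht0.1 _ _ x.isLt).1
  have hbd : bstar ≤ d := (ht0.1 _ _ x.isLt).2
  set gstar : Fin d := ⟨bstar - 1, by omega⟩ with hgs
  have hgb : (gstar : ℕ) + 1 = bstar := by
    rw [hgs]
    simp only
    omega
  have hother : ∀ gg : Fin d, gg ≠ gstar →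
      rIdx k l lam T γ' ((gg : ℕ) + 1) = rIdx k l lam T γ ((gg : ℕ) + 1) := by
    intro gg hgne
    have hb1' : 1 ≤ (gg : ℕ) + 1 := by omega
    have hbd' : (gg : ℕ) + 1 ≤ d := gg.isLt
    have hbne : (gg : ℕ) + 1 ≠ bstar := by
      intro hcon
      apply hgne
      apply Fin.ext
      omega
    have hABf := ABf_update_other ht0 (x := x) (y := y) hb1'
      (fun hcon => hbne hcon.symm) (fun hcon => hbne (by rw [← hTxy]; exact hcon.symm)) γ
    funext i
    rw [rIdx_eq_ABf ht0 γ' hb1' hbd' i, rIdx_eq_ABf ht0 γ hb1' hbd' i, hγ', hABf]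
  obtain ⟨P1, P2, hPne, hPP⟩ := ABf_update_swap ht0 hxy hTxy γ
  set eb := mkEb ht0 hb1 hbd with heb
  set π : Equiv.Perm (Fin k) := eb.permCongr (Equiv.swap P1 P2) with hπ
  have hcomp : rIdx k l lam T γ' bstar = rIdx k l lam T γ bstar ∘ π := by
    funext i
    rw [Function.comp_apply, rIdx_eq_ABf ht0 γ' hb1 hbd i, hγ']
    rw [hPP ((mkEb ht0 hb1 hbd).symm i)]
    rw [rIdx_eq_ABf ht0 γ hb1 hbd (π i)]
    congr 1
    rw [hπ, Equiv.permCongr_apply, Equiv.symm_apply_apply]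
  have hflip : (rowMat k (c gstar) (rIdx k l lam T γ' bstar)).det
      = - (rowMat k (c gstar) (rIdx k l lam T γ bstar)).det := by
    rw [hcomp, rowMat_det_comp_perm]
    rw [hπ, Equiv.Perm.sign_permCongr, Equiv.Perm.sign_swap hPne]
    push_cast
    ring
  rw [← Finset.mul_prod_erase Finset.univ _ (Finset.mem_univ gstar),
    ← Finset.mul_prod_erase Finset.univ
      (fun gg : Fin d => (rowMat k (c gg) (rIdx k l lam T γ ((gg : ℕ) + 1))).det)
      (Finset.mem_univ gstar)]
  rw [Finset.prod_congr rfl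
    (fun gg hgg => by rw [hother gg (Finset.ne_of_mem_erase hgg)])]
  rw [hgb, hflip]
  ring

end S4

/-- Section 2.1: the family of vectors `w_T ∈ (⋀^k ℂ^N)^{⊗d}`, indexed by the set `𝒯` of
fillings of the diagram of `λ*` of weight `(k^d)` (rows strictly increasing, columns weakly
increasing), is linearly independent; here `λ` is the partition of `d*k` encoded by the
antitone function `lam`, with exactly `l` nonzero parts. -/
theorem stmt_4 (k d N l : ℕ) (hk : 0 < k) (hd : 0 < d)
    (lam : ℕ → ℕ) (hanti : Antitone lam)
    (hzero : ∀ s, l ≤ s → lam s = 0) (hpos : ∀ s, s < l → 0 < lam s)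
    (hsum : ∑ s ∈ Finset.range l, lam s = d * k)
    (hN : lam 0 ≤ N) :
    LinearIndependent ℂ
      (fun T : {T : ℕ → ℕ → ℕ // IsTab k d l lam T} => wT k d N l lam T.1) := by
  classical
  have hl : 0 < l := by
    by_contra hc
    push_neg at hc
    have hl0 : l = 0 := by omega
    rw [hl0] at hsum
    simp at hsum
    have := Nat.mul_pos hd hk
    omega
  refine (linearIndependent_iff' (R := ℂ)
    (v := fun T : {T : ℕ → ℕ → ℕ // IsTab k d l lam T} => wT k d N l lam T.1)).mpr ?_
  intro sfin g hrel Tq hTq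
  by_contra hg0
  set s' := sfin.filter (fun Tt => g Tt ≠ 0) with hs'
  have hne : s'.Nonempty := ⟨Tq, Finset.mem_filter.mpr ⟨hTq, hg0⟩⟩
  obtain ⟨T0q, hT0mem, hT0min⟩ :=
    Finset.exists_min_image s' (fun Tt => S4.wkey k d N l lam Tt.1) hne
  rw [hs', Finset.mem_filter] at hT0mem
  obtain ⟨hT0s, hgT0⟩ := hT0mem
  set T0 := T0q.1 with hT0
  have ht0 := T0q.2
  -- the dual data
  have hScard : ∀ gg : Fin d, (S4.Sb l lam T0 ((gg : ℕ) + 1)).card = k := fun gg =>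
    S4.Sb_card ht0 hanti (by omega) (by have := gg.isLt; omega)
  set c : Fin d → Fin k → ℕ :=
    fun gg j => (((S4.Sb l lam T0 ((gg : ℕ) + 1)).orderIsoOfFin (hScard gg)) j : ℕ) with hc
  have hcinj : ∀ gg : Fin d, Function.Injective (c gg) := by
    intro gg i i' h
    rw [hc] at h
    exact ((S4.Sb l lam T0 ((gg : ℕ) + 1)).orderIsoOfFin (hScard gg)).injective
      (Subtype.coe_injective h)
  have hcmem : ∀ (gg : Fin d) (j : Fin k), c gg j ∈ S4.Sb l lam T0 ((gg : ℕ) + 1) :=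
    fun gg j =>
    (((S4.Sb l lam T0 ((gg : ℕ) + 1)).orderIsoOfFin (hScard gg)) j).2
  have hcim : ∀ gg : Fin d, Finset.image (c gg) Finset.univ
      = S4.Sb l lam T0 ((gg : ℕ) + 1) := by
    intro gg
    apply Finset.eq_of_subset_of_card_le
    · intro v hv
      rw [Finset.mem_image] at hv
      obtain ⟨j, _, rfl⟩ := hv
      exact hcmem gg j
    · rw [Finset.card_image_of_injective _ (hcinj gg), hScard gg, Finset.card_univ,
        Fintype.card_fin]
  have hcN : ∀ (gg : Fin d) (j : Fin k), c gg j < N := fun gg j =>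
    lt_of_lt_of_le (S4.Sb_lt ht0 hanti (hcmem gg j)) hN
  -- expansion of `Φ(w_T)`
  have hexp : ∀ Tq' : {T : ℕ → ℕ → ℕ // IsTab k d l lam T},
      S4.phiL k d N c (wT k d N l lam Tq'.1)
        = ((∏ s ∈ Finset.range l, ∏ b ∈ Finset.Icc 1 d,
            Nat.factorial (hcount lam Tq'.1 s b) : ℕ) : ℂ)⁻¹
          * ∑ γ : ∀ s : Fin l, Equiv.Perm (Fin (lam (s : ℕ))),
              (∏ s : Fin l, ((Equiv.Perm.sign (γ s) : ℤ) : ℂ))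
                * ∏ gg : Fin d,
                    (S4.rowMat k (c gg) (S4.rIdx k l lam Tq'.1 γ ((gg : ℕ) + 1))).det := by
    intro Tq'
    unfold wT
    rw [map_smul, map_sum, smul_eq_mul]
    congr 1
    refine Finset.sum_congr rfl fun γ _ => ?_
    rw [map_smul, smul_eq_mul]
    congr 1
    · push_cast
      rfl
    · rw [S4.phiL_tTensor]
      refine Finset.prod_congr rfl fun gg _ => ?_
      rw [S4.psiL_tFactor,
        S4.detA_factorList Tq'.2 γ (by omega) (by have := gg.isLt; omega) _ (hcN gg)]
  -- off-diagonal vanishing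
  have hvan : ∀ Tq' : {T : ℕ → ℕ → ℕ // IsTab k d l lam T}, Tq' ∈ s' → Tq' ≠ T0q →
      S4.phiL k d N c (wT k d N l lam Tq'.1) = 0 := by
    intro Tq' hmem hne'
    rw [hexp Tq']
    have hz : ∀ γ : ∀ s : Fin l, Equiv.Perm (Fin (lam (s : ℕ))),
        (∏ gg : Fin d,
          (S4.rowMat k (c gg) (S4.rIdx k l lam Tq'.1 γ ((gg : ℕ) + 1))).det) = 0 := by
      intro γ
      by_contra hnz
      obtain ⟨hdisj, hun⟩ := S4.dets_consequence ht0 Tq'.2 hd c hcim γ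
        (fun gg => Finset.prod_ne_zero_iff.mp hnz gg (Finset.mem_univ gg))
      rcases S4.Cfull ht0 Tq'.2 hanti hdisj hun with hL | hR
      · apply hne'
        apply Subtype.ext
        exact S4.T_eq_of_Sb_eq Tq'.2 ht0 hanti hzero (fun b hb1 hbd => (hL b hb1 hbd).1)
      · obtain ⟨b0, hb01, hb0d, hSeq, hdom, hSne⟩ := hR
        have hlt := S4.wkey_lt Tq'.2 ht0 hanti hN hb01 hb0d hSeq hdom hSne
        have hge := hT0min Tq' hmem
        rw [← hT0] at hlt
        omega
    rw [Finset.sum_congr rfl (fun γ _ => by rw [hz γ, mul_zero]), Finset.sum_const_zero,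
      mul_zero]
  -- diagonal nonvanishing
  have hdiag : S4.phiL k d N c (wT k d N l lam T0) ≠ 0 := by
    rw [show wT k d N l lam T0 = wT k d N l lam T0q.1 from rfl, hexp T0q]
    set GG : (∀ s : Fin l, Equiv.Perm (Fin (lam (s : ℕ)))) → ℂ := fun γ =>
      ∏ gg : Fin d, (S4.rowMat k (c gg) (S4.rIdx k l lam T0 γ ((gg : ℕ) + 1))).det with hGG
    have hBPzero : ∀ γ : ∀ s : Fin l, Equiv.Perm (Fin (lam (s : ℕ))),
        ¬ (∀ (s : Fin l) (j : Fin (lam (s : ℕ))),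
            T0 (s : ℕ) ((γ s j : ℕ)) = T0 (s : ℕ) (j : ℕ)) → GG γ = 0 := by
      intro γ hnbp
      by_contra hnz
      apply hnbp
      rw [hGG] at hnz
      obtain ⟨hdisj, hun⟩ := S4.dets_consequence ht0 ht0 hd c hcim γ
        (fun gg => Finset.prod_ne_zero_iff.mp hnz gg (Finset.mem_univ gg))
      rcases S4.Cfull ht0 ht0 hanti hdisj hun with hL | hR
      · exact S4.blockPres_of_Img ht0 (fun b hb1 hbd s hs => (hL b hb1 hbd).2 s hs)
      · obtain ⟨b0, hb01, hb0d, hSeq, hdom, hSne⟩ := hR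
        exact absurd rfl hSne
    have hswapG : ∀ (γ : ∀ s : Fin l, Equiv.Perm (Fin (lam (s : ℕ)))) (s0 : Fin l)
        (x y : Fin (lam (s0 : ℕ))), x ≠ y →
        T0 (s0 : ℕ) (y : ℕ) = T0 (s0 : ℕ) (x : ℕ) →
        GG (Function.update γ s0 (γ s0 * Equiv.swap x y)) = - GG γ :=
      fun γ s0 x y hxy hTxy => S4.GG_swap ht0 hd c γ s0 x y hxy hTxy
    have hconst := S4.F_const (T := T0) GG hswapG
    have hterm : ∀ γ : ∀ s : Fin l, Equiv.Perm (Fin (lam (s : ℕ))),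
        (∏ s : Fin l, ((Equiv.Perm.sign (γ s) : ℤ) : ℂ)) * GG γ
          = if (∀ (s : Fin l) (j : Fin (lam (s : ℕ))),
              T0 (s : ℕ) ((γ s j : ℕ)) = T0 (s : ℕ) (j : ℕ)) then GG 1 else 0 := by
      intro γ
      by_cases hbp : ∀ (s : Fin l) (j : Fin (lam (s : ℕ))),
          T0 (s : ℕ) ((γ s j : ℕ)) = T0 (s : ℕ) (j : ℕ)
      · rw [if_pos hbp]
        exact hconst (S4.msr γ) γ le_rfl hbp
      · rw [if_neg hbp, hBPzero γ hbp, mul_zero]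
    rw [Finset.sum_congr rfl (fun γ _ => hterm γ)]
    rw [Finset.sum_ite, Finset.sum_const, Finset.sum_const_zero, add_zero]
    have hG1 : GG 1 ≠ 0 := by
      rw [hGG]
      apply Finset.prod_ne_zero_iff.mpr
      intro gg _
      have hb1' : 1 ≤ (gg : ℕ) + 1 := by omega
      have hbd' : (gg : ℕ) + 1 ≤ d := gg.isLt
      apply S4.rowMat_det_ne_zero (hcinj gg)
      · rw [S4.rIdx_inj_iff ht0 1 hb1' hbd']
        exact S4.ABf_one_inj ht0 hanti hb1'
      · rw [S4.image_rIdx_eq ht0 1 hb1' hbd', S4.image_ABf ht0 hb1' 1, hcim gg]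
        refine Finset.biUnion_congr rfl fun s hs => ?_
        exact S4.Img_one ht0 (Finset.mem_range.mp hs) hb1'
    have hHne : ((∏ s ∈ Finset.range l, ∏ b ∈ Finset.Icc 1 d,
        Nat.factorial (hcount lam T0q.1 s b) : ℕ) : ℂ) ≠ 0 := by
      rw [Nat.cast_ne_zero]
      apply Finset.prod_ne_zero_iff.mpr
      intro s _
      apply Finset.prod_ne_zero_iff.mpr
      intro b _
      exact (Nat.factorial_pos _).ne'
    have hcard : (Finset.univ.filter (fun γ : ∀ s : Fin l, Equiv.Perm (Fin (lam (s : ℕ))) =>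
        ∀ (s : Fin l) (j : Fin (lam (s : ℕ))),
          T0 (s : ℕ) ((γ s j : ℕ)) = T0 (s : ℕ) (j : ℕ))).Nonempty := by
      refine ⟨1, Finset.mem_filter.mpr ⟨Finset.mem_univ 1, fun s j => rfl⟩⟩
    intro hcon
    rcases mul_eq_zero.mp hcon with h | h
    · exact (inv_ne_zero hHne) h
    · rw [nsmul_eq_mul, mul_eq_zero] at h
      rcases h with h | h
      · rw [Nat.cast_eq_zero, Finset.card_eq_zero] at h
        rw [h] at hcard
        exact Finset.not_nonempty_empty hcard
      · exact hG1 h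
  -- conclude
  have h0 : S4.phiL k d N c (∑ Tt ∈ sfin, g Tt • wT k d N l lam Tt.1) = 0 := by
    rw [hrel, map_zero]
  rw [map_sum] at h0
  have hsingle : (∑ Tt ∈ sfin, S4.phiL k d N c (g Tt • wT k d N l lam Tt.1))
      = g T0q * S4.phiL k d N c (wT k d N l lam T0) := by
    rw [Finset.sum_eq_single_of_mem T0q hT0s]
    · rw [map_smul, smul_eq_mul]
    · intro Tt hTt hne'
      rw [map_smul, smul_eq_mul]
      by_cases hgz : g Tt = 0
      · rw [hgz, zero_mul]
      · rw [hvan Tt (Finset.mem_filter.mpr ⟨hTt, hgz⟩) hne', mul_zero]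
  rw [hsingle] at h0
  rcases mul_eq_zero.mp h0 with h | h
  · exact hgT0 h
  · exact hdiag h

end
end
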